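/- arXiv:2007.06365 — 10 statements merged into one kernel-verified Lean document; each statement's English description precedes it below -/
import Mathlib

section
/- Let m ≥ 2 and n ≥ 1 be integers, let A be the (n+1)×(n+1) real matrix with rows and columns indexed by 0,…,n given by A 0 j = m−1 for 0 ≤ j ≤ n−1, A 0 n = 0, and for 1 ≤ i ≤ n: A i j = 1 if j = i−1 and A i j = 0 otherwise, and let W = (1/m)·A. Then the series ∑_{k=0}^∞ (W^k)_{n,0} converges and its sum equals 1. -/
open Finset Filter Topology

private lemma myMulVec_mono {N : ℕ} (M : Matrix (Fin N) (Fin N) ℝ)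
    (hM : ∀ i j, 0 ≤ M i j) {u v : Fin N → ℝ} (huv : u ≤ v) :
    M.mulVec u ≤ M.mulVec v := by
  intro i
  simp only [Matrix.mulVec, dotProduct]
  exact Finset.sum_le_sum fun j _ => mul_le_mul_of_nonneg_left (huv j) (hM i j)

private lemma myMulVec_nonneg {N : ℕ} (M : Matrix (Fin N) (Fin N) ℝ)
    (hM : ∀ i j, 0 ≤ M i j) {v : Fin N → ℝ} (hv : 0 ≤ v) :
    0 ≤ M.mulVec v := by
  intro i
  simp only [Matrix.mulVec, dotProduct, Pi.zero_apply]
  exact Finset.sum_nonneg fun j _ => mul_nonneg (hM i j) (hv j)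

/-- For integers `m ≥ 2`, `n ≥ 1`, with `A` the `(n+1)×(n+1)` real matrix whose first row is
`(m-1, …, m-1, 0)` and whose row `i ≥ 1` has a single `1` in column `i-1`, and `W = (1/m)·A`,
the series `∑ₖ (Wᵏ)_{n,0}` converges with sum `1`. -/
theorem stmt_0 (m n : ℕ) (hm : 2 ≤ m) (hn : 1 ≤ n)
    (A W : Matrix (Fin (n + 1)) (Fin (n + 1)) ℝ)
    (hA : ∀ i j : Fin (n + 1), A i j =
      if (i : ℕ) = 0 then (if (j : ℕ) < n then (m : ℝ) - 1 else 0)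
      else (if (j : ℕ) + 1 = (i : ℕ) then 1 else 0))
    (hW : W = (1 / (m : ℝ)) • A) :
    HasSum (fun k : ℕ => (W ^ k) (Fin.last n) 0) 1 := by
  have hmR : (2:ℝ) ≤ (m:ℝ) := by exact_mod_cast hm
  have hm0 : (0:ℝ) < m := by linarith
  have hmne : (m:ℝ) ≠ 0 := ne_of_gt hm0
  -- entries of W
  have hWe : ∀ i j : Fin (n+1), W i j =
      if (i:ℕ) = 0 then (if (j:ℕ) < n then ((m:ℝ)-1)/m else 0)
      else (if (j:ℕ)+1 = (i:ℕ) then 1/(m:ℝ) else 0) := by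
    intro i j
    rw [hW]
    simp only [Matrix.smul_apply, hA, smul_eq_mul]
    split_ifs <;> field_simp <;> ring
  have hWnn : ∀ i j, 0 ≤ W i j := by
    intro i j
    rw [hWe]
    split_ifs
    · exact div_nonneg (by linarith) hm0.le
    · exact le_refl 0
    · positivity
    · exact le_refl 0
  -- row formulas
  have hrow0 : ∀ u : Fin (n+1) → ℝ, W.mulVec u 0 =
      ∑ j : Fin (n+1), (if (j:ℕ) < n then ((m:ℝ)-1)/m * u j else 0) := by
    intro u
    simp only [Matrix.mulVec, dotProduct]
    refine Finset.sum_congr rfl fun j _ => ?_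
    rw [hWe]
    simp only [Fin.val_zero, if_true, eq_self_iff_true]
    split_ifs <;> ring
  have hrowsucc : ∀ (i : Fin n) (u : Fin (n+1) → ℝ),
      W.mulVec u i.succ = 1/(m:ℝ) * u i.castSucc := by
    intro i u
    simp only [Matrix.mulVec, dotProduct]
    have hterm : ∀ j : Fin (n+1), W i.succ j * u j =
        if j = i.castSucc then 1/(m:ℝ) * u j else 0 := by
      intro j
      rw [hWe]
      have h1 : ((i.succ : Fin (n+1)) : ℕ) = (i:ℕ)+1 := rfl
      rw [h1]
      simp only [Nat.succ_ne_zero, if_false]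
      by_cases hj : j = i.castSucc
      · subst hj
        simp [Fin.coe_castSucc]
      · have hne : ¬ ((j:ℕ)+1 = (i:ℕ)+1) := by
          intro hc
          apply hj
          apply Fin.ext
          simp only [Fin.coe_castSucc]
          omega
        simp [hne, hj]
        intro h
        omega
    rw [Finset.sum_congr rfl fun j _ => hterm j, Finset.sum_ite_eq']
    simp
  -- the weight vector
  set x : Fin (n+1) → ℝ := fun i => (m:ℝ)^(n - (i:ℕ)) with hxdef
  set e0 : Fin (n+1) → ℝ := Pi.single 0 1 with he0def
  have hxnn : (0:Fin (n+1) → ℝ) ≤ x := fun i => by positivity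
  have he0nn : (0:Fin (n+1) → ℝ) ≤ e0 := by
    intro i
    by_cases h : i = 0
    · subst h; simp [he0def]
    · simp [he0def, Pi.single_eq_of_ne h]
  have hxlast : x (Fin.last n) = 1 := by
    simp [hxdef, Fin.val_last]
  -- key linear relation
  have hWx : W.mulVec x = x - e0 := by
    funext i
    rcases Fin.eq_zero_or_eq_succ i with h | ⟨j, rfl⟩
    · subst h
      rw [hrow0]
      have hs1 : ∑ j : Fin (n+1), (if (j:ℕ) < n then ((m:ℝ)-1)/m * x j else 0)
          = ∑ j ∈ Finset.range (n+1), (if j < n then ((m:ℝ)-1)/m * (m:ℝ)^(n-j) else 0) := by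
        rw [← Fin.sum_univ_eq_sum_range (fun j => if j < n then ((m:ℝ)-1)/m * (m:ℝ)^(n-j) else 0) (n+1)]
      rw [hs1, Finset.sum_range_succ, if_neg (lt_irrefl n), add_zero]
      have hs2 : ∑ j ∈ Finset.range n, (if j < n then ((m:ℝ)-1)/m * (m:ℝ)^(n-j) else 0)
          = ((m:ℝ)-1)/m * ∑ j ∈ Finset.range n, (m:ℝ)^(n-j) := by
        rw [Finset.mul_sum]
        refine Finset.sum_congr rfl fun j hj => ?_
        rw [if_pos (Finset.mem_range.mp hj)]
      rw [hs2]
      have hs3 : ∑ j ∈ Finset.range n, (m:ℝ)^(n-j) = ∑ j ∈ Finset.range n, (m:ℝ)^(j+1) := by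
        rw [← Finset.sum_range_reflect (fun j => (m:ℝ)^(j+1)) n]
        refine Finset.sum_congr rfl fun j hj => ?_
        have := Finset.mem_range.mp hj
        congr 1
        omega
      have hs4 : ∑ j ∈ Finset.range n, (m:ℝ)^(j+1) = (m:ℝ) * (((m:ℝ)^n - 1)/((m:ℝ)-1)) := by
        have : ∀ j, (m:ℝ)^(j+1) = (m:ℝ) * (m:ℝ)^j := fun j => by ring
        simp_rw [this]
        rw [← Finset.mul_sum, geom_sum_eq (by linarith : (m:ℝ) ≠ 1)]
      rw [hs3, hs4]
      have he00 : e0 0 = 1 := by simp [he0def]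
      have hx0 : x 0 = (m:ℝ)^n := by simp [hxdef]
      rw [Pi.sub_apply, he00, hx0]
      have hm1 : (m:ℝ) - 1 ≠ 0 := by linarith
      field_simp
    · rw [hrowsucc]
      have he : e0 j.succ = 0 := Pi.single_eq_of_ne (Fin.succ_ne_zero j) 1
      have hjn : (j:ℕ) < n := j.isLt
      have hxc : x j.castSucc = (m:ℝ)^(n - (j:ℕ)) := by simp [hxdef]
      have hxs : x j.succ = (m:ℝ)^(n - ((j:ℕ)+1)) := by
        simp [hxdef, Fin.val_succ]
      rw [Pi.sub_apply, he, hxc, hxs, sub_zero]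
      have hpw : (m:ℝ)^(n - (j:ℕ)) = (m:ℝ)^(n - ((j:ℕ)+1)) * m := by
        rw [← pow_succ]
        congr 1
        omega
      rw [hpw]
      field_simp
  -- nonnegativity of powers
  have hpow_nn : ∀ k : ℕ, ∀ i j, 0 ≤ (W^k) i j := by
    intro k
    induction k with
    | zero => intro i j; by_cases h : i = j <;> simp [Matrix.one_apply, h]
    | succ k ih =>
      intro i j
      rw [pow_succ, Matrix.mul_apply]
      exact Finset.sum_nonneg fun l _ => mul_nonneg (ih i l) (hWnn l j)
  have hvnn : ∀ k : ℕ, (0:Fin (n+1) → ℝ) ≤ (W^k).mulVec e0 :=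
    fun k => myMulVec_nonneg _ (hpow_nn k) he0nn
  have hWkxnn : ∀ k : ℕ, (0:Fin (n+1) → ℝ) ≤ (W^k).mulVec x :=
    fun k => myMulVec_nonneg _ (hpow_nn k) hxnn
  -- partial sum identity
  have hkey : ∀ K : ℕ, x - (W^K).mulVec x = ∑ k ∈ Finset.range K, (W^k).mulVec e0 := by
    intro K
    induction K with
    | zero => simp [Matrix.one_mulVec]
    | succ K ih =>
      rw [Finset.sum_range_succ, ← ih, pow_succ, ← Matrix.mulVec_mulVec, hWx,
        Matrix.mulVec_sub]
      abel
  -- diagonal entries along the chain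
  have hdiag : ∀ k : ℕ, (hk : k ≤ n) → ((W^k).mulVec e0) ⟨k, by omega⟩ = (1/(m:ℝ))^k := by
    intro k
    induction k with
    | zero =>
      intro _
      have : (⟨0, by omega⟩ : Fin (n+1)) = 0 := rfl
      rw [this]
      simp [Matrix.one_mulVec, he0def]
    | succ k ih =>
      intro hk
      have hk' : k ≤ n := by omega
      have hkn : k < n := by omega
      rw [pow_succ', ← Matrix.mulVec_mulVec]
      have hidx : (⟨k+1, by omega⟩ : Fin (n+1)) = (⟨k, hkn⟩ : Fin n).succ := rfl
      rw [hidx, hrowsucc]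
      have hcast : ((⟨k, hkn⟩ : Fin n)).castSucc = (⟨k, by omega⟩ : Fin (n+1)) := rfl
      rw [hcast, ih hk', pow_succ]
      ring
  -- one-round contraction
  set r : ℝ := 1 - (1/(m:ℝ))^n with hrdef
  have hq1 : (1/(m:ℝ))^n ≤ 1/(m:ℝ) := by
    apply pow_le_of_le_one
    · positivity
    · rw [div_le_one hm0]; linarith
    · omega
  have hq0 : (0:ℝ) < (1/(m:ℝ))^n := by positivity
  have hr0 : (0:ℝ) ≤ r := by
    have : (1/(m:ℝ)) ≤ 1/2 := by
      rw [div_le_div_iff₀ hm0 (by norm_num)]; linarith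
    simp only [hrdef]
    linarith [hq1]
  have hr1 : r < 1 := by simp only [hrdef]; linarith
  have hcontr : (W^(n+1)).mulVec x ≤ r • x := by
    intro i
    have hki := congrFun (hkey (n+1)) i
    rw [Pi.sub_apply] at hki
    have hterm : ((W^((i:ℕ))).mulVec e0) i = (1/(m:ℝ))^(i:ℕ) := by
      have h := hdiag (i:ℕ) (by omega : (i:ℕ) ≤ n)
      have : (⟨(i:ℕ), by omega⟩ : Fin (n+1)) = i := by
        apply Fin.ext; rfl
      rwa [this] at h
    have hge : (1/(m:ℝ))^(i:ℕ) ≤ ∑ k ∈ Finset.range (n+1), ((W^k).mulVec e0) i := by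
      rw [← hterm]
      have hmem : (i:ℕ) ∈ Finset.range (n+1) := Finset.mem_range.mpr i.isLt
      exact Finset.single_le_sum (fun k _ => hvnn k i) hmem
    have hsum : (∑ k ∈ Finset.range (n+1), (W^k).mulVec e0) i
        = ∑ k ∈ Finset.range (n+1), ((W^k).mulVec e0) i := by
      simp
    rw [hsum] at hki
    have hxi : x i = (m:ℝ)^(n - (i:ℕ)) := rfl
    have hpw : (1/(m:ℝ))^n * (m:ℝ)^(n-(i:ℕ)) = (1/(m:ℝ))^(i:ℕ) := by
      have hsplit : (m:ℝ)^(n-(i:ℕ)) * (m:ℝ)^(i:ℕ) = (m:ℝ)^n := by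
        rw [← pow_add]
        congr 1
        omega
      rw [div_pow, div_pow, one_pow, one_pow, div_mul_eq_mul_div,
        div_eq_div_iff (by positivity) (by positivity)]
      linear_combination hsplit
    have : ((W^(n+1)).mulVec x) i = x i - ∑ k ∈ Finset.range (n+1), ((W^k).mulVec e0) i := by
      linarith [hki]
    rw [this]
    have hrx : (r • x) i = x i - (1/(m:ℝ))^(i:ℕ) := by
      simp only [Pi.smul_apply, smul_eq_mul, hrdef, hxi]
      rw [sub_mul, one_mul, hpw]
    rw [hrx]
    linarith [hge]
  -- iterate the contraction
  have hiter : ∀ K : ℕ, (W^((n+1)*K)).mulVec x ≤ r^K • x := by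
    intro K
    induction K with
    | zero => simp [Matrix.one_mulVec]
    | succ K ih =>
      have hexp : (n+1)*(K+1) = (n+1)*K + (n+1) := by ring
      rw [hexp, pow_add, ← Matrix.mulVec_mulVec]
      calc (W^((n+1)*K)).mulVec ((W^(n+1)).mulVec x)
          ≤ (W^((n+1)*K)).mulVec (r • x) := myMulVec_mono _ (hpow_nn _) hcontr
        _ = r • (W^((n+1)*K)).mulVec x := Matrix.mulVec_smul _ _ _
        _ ≤ r • (r^K • x) := by
            intro i
            exact mul_le_mul_of_nonneg_left (ih i) hr0
        _ = r^(K+1) • x := by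
            rw [smul_smul, ← pow_succ']
  -- the tail sequence
  set c : ℕ → ℝ := fun K => ((W^K).mulVec x) (Fin.last n) with hcdef
  have hc_eq : ∀ K, c K = 1 - ∑ k ∈ Finset.range K, ((W^k).mulVec e0) (Fin.last n) := by
    intro K
    have := congrFun (hkey K) (Fin.last n)
    rw [Pi.sub_apply, hxlast] at this
    simp only [hcdef]
    have hsum : (∑ k ∈ Finset.range K, (W^k).mulVec e0) (Fin.last n)
        = ∑ k ∈ Finset.range K, ((W^k).mulVec e0) (Fin.last n) := by simp
    rw [hsum] at this
    linarith
  have hc_nn : ∀ K, 0 ≤ c K := fun K => hWkxnn K (Fin.last n)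
  have hc_anti : Antitone c := by
    intro K L hKL
    rw [hc_eq, hc_eq]
    have : ∑ k ∈ Finset.range K, ((W^k).mulVec e0) (Fin.last n)
        ≤ ∑ k ∈ Finset.range L, ((W^k).mulVec e0) (Fin.last n) :=
      Finset.sum_le_sum_of_subset_of_nonneg (Finset.range_subset_range.mpr hKL)
        (fun k _ _ => hvnn k (Fin.last n))
    linarith
  have hc_sub : ∀ K, c ((n+1)*K) ≤ r^K := by
    intro K
    have := hiter K (Fin.last n)
    rw [Pi.smul_apply, hxlast, smul_eq_mul, mul_one] at this
    exact this
  -- c tends to 0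
  have hbdd : BddBelow (Set.range c) := ⟨0, fun y ⟨K, hK⟩ => hK ▸ hc_nn K⟩
  have hLtend : Tendsto c atTop (𝓝 (⨅ K, c K)) := tendsto_atTop_ciInf hc_anti hbdd
  set L := ⨅ K, c K with hLdef
  have hL0 : 0 ≤ L := le_ciInf hc_nn
  have hsubtend : Tendsto (fun K => c ((n+1)*K)) atTop (𝓝 L) := by
    apply hLtend.comp
    apply tendsto_atTop_atTop.mpr
    intro b
    exact ⟨b, fun a ha => le_trans ha (Nat.le_mul_of_pos_left a (Nat.succ_pos n))⟩
  have hL_le : L ≤ 0 := by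
    have hrt : Tendsto (fun K : ℕ => r^K) atTop (𝓝 0) :=
      tendsto_pow_atTop_nhds_zero_of_lt_one hr0 hr1
    exact le_of_tendsto_of_tendsto' hsubtend hrt hc_sub
  have hLeq : L = 0 := le_antisymm hL_le hL0
  have hc0 : Tendsto c atTop (𝓝 0) := hLeq ▸ hLtend
  -- conclude
  have hp_eq : ∀ k : ℕ, (W^k) (Fin.last n) 0 = ((W^k).mulVec e0) (Fin.last n) := by
    intro k
    simp [he0def, Matrix.mulVec_single]
  have hp_nn : ∀ k : ℕ, 0 ≤ (W^k) (Fin.last n) 0 := by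
    intro k
    rw [hp_eq k]
    exact hvnn k (Fin.last n)
  have hS_tend : Tendsto (fun K => ∑ k ∈ Finset.range K, (W^k) (Fin.last n) 0) atTop (𝓝 1) := by
    have heq : (fun K => ∑ k ∈ Finset.range K, (W^k) (Fin.last n) 0) = fun K => 1 - c K := by
      funext K
      rw [hc_eq K]
      rw [Finset.sum_congr rfl fun k _ => hp_eq k]
      ring
    rw [heq]
    have : Tendsto (fun K => 1 - c K) atTop (𝓝 (1 - 0)) := tendsto_const_nhds.sub hc0
    simpa using this
  have hsummable : Summable (fun k : ℕ => (W^k) (Fin.last n) 0) := by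
    apply summable_of_sum_range_le (c := 1) hp_nn
    intro K
    have := hc_nn K
    rw [hc_eq K] at this
    rw [Finset.sum_congr rfl fun k (_ : k ∈ Finset.range K) => hp_eq k]
    linarith
  have hhs := hsummable.hasSum
  have := hhs.tendsto_sum_nat
  have hteq : (∑' k : ℕ, (W^k) (Fin.last n) 0) = 1 := tendsto_nhds_unique this hS_tend
  rwa [hteq] at hhs
end

section
/- Let m ≥ 2 and n ≥ 1 be integers and let W = (1/m)·A, where A is the (n+1)×(n+1) real matrix with A 0 j = m−1 for 0 ≤ j ≤ n−1, A 0 n = 0, and for 1 ≤ i ≤ n: A i j = 1 if j = i−1 and 0 otherwise. Then the series ∑_{k=0}^∞ k·(W^k)_{n,0} converges and its sum equals m·(m^n − 1)/(m − 1). -/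
open Finset

section Aux
variable {m n : ℕ} (W : Matrix (Fin (n + 1)) (Fin (n + 1)) ℝ)

private noncomputable def vA (k : ℕ) (i : Fin (n + 1)) : ℝ := (W ^ k) i 0
private noncomputable def tA (k : ℕ) : ℝ := ∑ i, vA W k i

private noncomputable def wA (m n : ℕ) (i : ℕ) : ℝ := ((m : ℝ) ^ (n + 1) - (m : ℝ) ^ (i + 1)) / ((m : ℝ) - 1)

private noncomputable def sA (m : ℕ) (k : ℕ) : ℝ := ∑ i : Fin (n + 1), wA m n (i : ℕ) * vA W k i

variable (hm : 2 ≤ m)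
variable (hWe : ∀ i j : Fin (n + 1), W i j =
      if (i : ℕ) = 0 then (if (j : ℕ) < n then ((m : ℝ) - 1) / m else 0)
      else (if (j : ℕ) + 1 = (i : ℕ) then 1 / (m : ℝ) else 0))

private lemma sum_ite_lt (x : Fin (n + 1) → ℝ) :
    ∑ j : Fin (n+1), (if (j : ℕ) < n then x j else 0) = (∑ j, x j) - x (Fin.last n) := by
  rw [Fin.sum_univ_castSucc (f := fun j => if (j : ℕ) < n then x j else 0),
    Fin.sum_univ_castSucc (f := x)]
  simp [Fin.is_lt]

include hm hWe in
private lemma v_nonneg : ∀ k i, 0 ≤ vA W k i := by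
  intro k
  induction k with
  | zero => intro i; simp [vA, Matrix.one_apply]; positivity
  | succ k ih =>
    intro i
    have : vA W (k + 1) i = ∑ j, W i j * vA W k j := by
      simp [vA, pow_succ', Matrix.mul_apply]
    rw [this]
    apply Finset.sum_nonneg
    intro j _
    have hWnn : 0 ≤ W i j := by
      rw [hWe]
      have h1 : (2:ℝ) ≤ m := by exact_mod_cast hm
      split_ifs <;>
        first
        | rfl
        | exact div_nonneg (by linarith) (by linarith)
        | exact le_refl 0
    exact mul_nonneg hWnn (ih j)


private lemma v_succ (k : ℕ) (i : Fin (n + 1)) :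
    vA W (k + 1) i = ∑ j, W i j * vA W k j := by
  simp [vA, pow_succ', Matrix.mul_apply]

include hWe in
private lemma rec0 (k : ℕ) :
    vA W (k + 1) ⟨0, by omega⟩ =
      (((m : ℝ) - 1) / m) * (tA W k - vA W k (Fin.last n)) := by
  rw [v_succ]
  have : ∀ j : Fin (n + 1), W ⟨0, by omega⟩ j * vA W k j =
      (((m : ℝ) - 1) / m) * (if (j : ℕ) < n then vA W k j else 0) := by
    intro j
    rw [hWe]
    simp only [Fin.val_mk, if_pos rfl]
    split_ifs <;> ring
  rw [Finset.sum_congr rfl (fun j _ => this j), ← Finset.mul_sum, sum_ite_lt, tA]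

include hWe in
private lemma recSucc (k : ℕ) (j : ℕ) (h : j < n) :
    vA W (k + 1) ⟨j + 1, by omega⟩ = (1 / (m : ℝ)) * vA W k ⟨j, by omega⟩ := by
  rw [v_succ]
  have this : ∀ j' : Fin (n + 1), W ⟨j + 1, by omega⟩ j' * vA W k j' =
      if j' = (⟨j, by omega⟩ : Fin (n + 1)) then (1 / (m : ℝ)) * vA W k j' else 0 := by
    intro j'
    rw [hWe]
    simp only [Fin.val_mk]
    rw [if_neg (by omega : ¬ (j + 1 = 0))]
    by_cases hj : (j' : ℕ) + 1 = j + 1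
    · rw [if_pos hj, if_pos (Fin.ext (show (j' : ℕ) = j by omega))]
    · rw [if_neg hj, if_neg (fun hc => hj (by simp [hc])), zero_mul]
  rw [Finset.sum_congr rfl (fun j' _ => this j'), Finset.sum_ite_eq' Finset.univ]
  simp

include hm hWe in
private lemma colsum (j : Fin (n + 1)) :
    ∑ i, W i j = if (j : ℕ) < n then 1 else 0 := by
  have hm0 : (0:ℝ) < m := by positivity
  rw [Fin.sum_univ_succ]
  have h0 : W 0 j = if (j : ℕ) < n then ((m : ℝ) - 1) / m else 0 := by
    rw [hWe]; simp
  have hs : ∀ i : Fin n, W i.succ j = if (j : ℕ) = (i : ℕ) then 1 / (m : ℝ) else 0 := by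
    intro i
    rw [hWe]
    rw [if_neg (by simp : ¬ ((i.succ : Fin (n + 1)) : ℕ) = 0)]
    exact if_congr (by simp only [Fin.val_succ]; omega) rfl rfl
  rw [h0, Finset.sum_congr rfl (fun i _ => hs i)]
  by_cases h : (j : ℕ) < n
  · rw [if_pos h, if_pos h]
    have h2 : ∑ i : Fin n, (if (j : ℕ) = (i : ℕ) then 1 / (m : ℝ) else 0)
        = ∑ i : Fin n, (if i = (⟨(j : ℕ), h⟩ : Fin n) then 1 / (m : ℝ) else 0) := by
      apply Finset.sum_congr rfl
      intro i _
      exact if_congr (by simp only [Fin.ext_iff, Fin.val_mk]; omega) rfl rfl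
    rw [h2, Finset.sum_ite_eq' Finset.univ]
    simp only [Finset.mem_univ, if_pos]
    field_simp
    ring
  · rw [if_neg h, if_neg h]
    rw [Finset.sum_eq_zero]
    · ring
    intro i _
    rw [if_neg (by omega : ¬ ((j : ℕ) = (i : ℕ)))]

include hm hWe in
private lemma t_rec (k : ℕ) :
    tA W (k + 1) = tA W k - vA W k (Fin.last n) := by
  have : tA W (k + 1) = ∑ j, (∑ i, W i j) * vA W k j := by
    simp only [tA, v_succ, Finset.sum_mul]
    rw [Finset.sum_comm]
  rw [this]
  have : ∀ j : Fin (n + 1), (∑ i, W i j) * vA W k j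
      = if (j : ℕ) < n then vA W k j else 0 := by
    intro j
    rw [colsum W hm hWe]
    split_ifs <;> ring
  rw [Finset.sum_congr rfl (fun j _ => this j), sum_ite_lt, tA]


include hm hWe in
private lemma wcol (j : Fin (n + 1)) :
    ∑ i : Fin (n + 1), wA m n (i : ℕ) * W i j
      = wA m n (j : ℕ) - (if (j : ℕ) < n then 1 else 0) := by
  have hm0 : (0:ℝ) < m := by positivity
  have hm2 : (2:ℝ) ≤ m := by exact_mod_cast hm
  have hm1 : (m : ℝ) - 1 ≠ 0 := by linarith
  have hmne : (m : ℝ) ≠ 0 := ne_of_gt hm0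
  rw [Fin.sum_univ_succ]
  have h0 : W 0 j = if (j : ℕ) < n then ((m : ℝ) - 1) / m else 0 := by
    rw [hWe]; simp
  have hs : ∀ i : Fin n, W i.succ j = if (j : ℕ) = (i : ℕ) then 1 / (m : ℝ) else 0 := by
    intro i
    rw [hWe]
    rw [if_neg (by simp : ¬ ((i.succ : Fin (n + 1)) : ℕ) = 0)]
    exact if_congr (by simp only [Fin.val_succ]; omega) rfl rfl
  have hrw : ∀ i : Fin n, wA m n ((i.succ : Fin (n+1)) : ℕ) * W i.succ j
      = if (j:ℕ) = (i:ℕ) then wA m n ((i:ℕ)+1) * (1/(m:ℝ)) else 0 := by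
    intro i
    rw [hs i, Fin.val_succ]
    split_ifs <;> ring
  rw [h0, Finset.sum_congr rfl (fun i _ => hrw i)]
  by_cases h : (j:ℕ) < n
  · have h2 : (∑ i : Fin n, if (j:ℕ) = (i:ℕ) then wA m n ((i:ℕ)+1) * (1/(m:ℝ)) else 0)
        = ∑ i : Fin n, (if i = (⟨(j:ℕ), h⟩ : Fin n)
            then wA m n ((i:ℕ)+1) * (1/(m:ℝ)) else 0) :=
      Finset.sum_congr rfl (fun i _ =>
        if_congr (by simp only [Fin.ext_iff, Fin.val_mk]; omega) rfl rfl)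
    rw [h2, Finset.sum_ite_eq' Finset.univ]
    simp only [if_pos h, if_pos (Finset.mem_univ _), Fin.val_mk, Fin.val_zero, wA]
    field_simp
    ring
  · rw [if_neg h, if_neg h, Finset.sum_eq_zero (fun i _ => if_neg (by omega))]
    have hjn : (j:ℕ) = n := by omega
    rw [hjn]
    simp [wA]

include hm hWe in
private lemma s_rec (k : ℕ) :
    sA W m (k + 1) = sA W m k - tA W (k + 1) := by
  have h1 : sA W m (k + 1) = ∑ j, (∑ i : Fin (n+1), wA m n (i:ℕ) * W i j) * vA W k j := by
    simp only [sA, v_succ, Finset.mul_sum, Finset.sum_mul]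
    rw [Finset.sum_comm]
    apply Finset.sum_congr rfl
    intro j _
    apply Finset.sum_congr rfl
    intro i _
    ring
  rw [h1, Finset.sum_congr rfl (fun j _ => by rw [wcol W hm hWe j]),
    t_rec W hm hWe]
  have h2 : ∀ j : Fin (n+1),
      (wA m n (j:ℕ) - (if (j:ℕ) < n then 1 else 0)) * vA W k j
        = wA m n (j:ℕ) * vA W k j - (if (j:ℕ) < n then vA W k j else 0) := by
    intro j; split_ifs <;> ring
  rw [Finset.sum_congr rfl (fun j _ => h2 j), Finset.sum_sub_distrib, sum_ite_lt]
  rfl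

include hWe in
private lemma shift (j : ℕ) (hj : j ≤ n) (k : ℕ) :
    vA W (k + j) ⟨j, by omega⟩ = (1/(m:ℝ))^j * vA W k ⟨0, by omega⟩ := by
  induction j with
  | zero => simp
  | succ j ih =>
    have hjn : j < n := by omega
    have : k + (j+1) = (k + j) + 1 := by omega
    rw [this, recSucc W hWe (k+j) j hjn, ih (by omega)]
    ring

private lemma v_zero (i : Fin (n + 1)) :
    vA W 0 i = if i = 0 then 1 else 0 := by
  simp [vA, Matrix.one_apply]

private lemma t_zero : tA W 0 = 1 := by
  rw [tA, Finset.sum_congr rfl (fun i _ => v_zero W i),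
    Finset.sum_ite_eq' Finset.univ]
  simp

private lemma s_zero : sA W m 0 = wA m n 0 := by
  have : ∀ i : Fin (n+1), wA m n (i:ℕ) * vA W 0 i
      = if i = (0 : Fin (n+1)) then wA m n (i:ℕ) else 0 := by
    intro i
    rw [v_zero]
    split_ifs <;> ring
  rw [sA, Finset.sum_congr rfl (fun i _ => this i), Finset.sum_ite_eq' Finset.univ]
  simp

private lemma wA_le (hm : 2 ≤ m) (i : ℕ) (hi : i ≤ n) :
    0 ≤ wA m n i ∧ wA m n i ≤ wA m n 0 := by
  have hm2 : (2:ℝ) ≤ m := by exact_mod_cast hm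
  have h1 : (1:ℝ) ≤ m := by linarith
  have hp : ∀ a b : ℕ, a ≤ b → (m:ℝ)^a ≤ (m:ℝ)^b := fun a b hab =>
    pow_le_pow_right₀ h1 hab
  constructor
  · apply div_nonneg _ (by linarith)
    have := hp (i+1) (n+1) (by omega)
    linarith
  · have h2 : (0:ℝ) < (m:ℝ) - 1 := by linarith
    have h3 : (m:ℝ)^(0+1) ≤ (m:ℝ)^(i+1) := hp _ _ (by omega)
    exact (div_le_div_iff_of_pos_right h2).mpr (by linarith)


include hm hWe in
private lemma t_step (k : ℕ) : tA W (k + 1) ≤ tA W k := by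
  rw [t_rec W hm hWe k]
  have := v_nonneg W hm hWe k (Fin.last n)
  linarith

include hm hWe in
private lemma t_antitone (a b : ℕ) (hab : a ≤ b) : tA W b ≤ tA W a :=
  antitone_nat_of_succ_le (t_step W hm hWe) hab

include hm hWe in
private lemma t_nonneg (k : ℕ) : 0 ≤ tA W k :=
  Finset.sum_nonneg fun i _ => v_nonneg W hm hWe k i

include hm hWe in
private lemma p_formula (k : ℕ) :
    vA W (k + 1 + n) (Fin.last n)
      = (((m:ℝ) - 1) / (m:ℝ)^(n+1)) * tA W (k + 1) := by
  have hl : (Fin.last n) = (⟨n, by omega⟩ : Fin (n+1)) := rfl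
  rw [hl, shift W hWe n le_rfl (k+1), rec0 W hWe k, ← t_rec W hm hWe k]
  have hm0 : (m:ℝ) ≠ 0 := by positivity
  rw [div_pow, one_pow, pow_succ]
  ring

include hm hWe in
private lemma t_decay (k : ℕ) :
    tA W (k + 1 + (n + 1)) ≤ (1 - ((m:ℝ)-1)/(m:ℝ)^(n+1)) * tA W (k + 1) := by
  have h1 : k + 1 + (n+1) = (k + 1 + n) + 1 := by omega
  rw [h1, t_rec W hm hWe (k+1+n), p_formula W hm hWe k]
  have h2 : tA W (k+1+n) ≤ tA W (k+1) := t_antitone W hm hWe _ _ (by omega)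
  linarith

include hm hWe in
private lemma t_blocks (j : ℕ) :
    tA W (1 + j * (n + 1)) ≤ (1 - ((m:ℝ)-1)/(m:ℝ)^(n+1))^j := by
  have hm2 : (2:ℝ) ≤ m := by exact_mod_cast hm
  have hmn : (m:ℝ) ≤ (m:ℝ)^(n+1) := le_self_pow₀ (by linarith) (by omega)
  have hc1 : (0:ℝ) ≤ 1 - ((m:ℝ)-1)/(m:ℝ)^(n+1) := by
    have : ((m:ℝ)-1)/(m:ℝ)^(n+1) ≤ 1 := by
      rw [div_le_one (by positivity)]; linarith
    linarith
  induction j with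
  | zero =>
    have h := t_antitone W hm hWe 0 1 (by omega)
    rw [t_zero W] at h
    simpa using h
  | succ j ih =>
    have h1 : 1 + (j+1)*(n+1) = (j*(n+1)) + 1 + (n+1) := by ring
    rw [h1]
    calc tA W (j*(n+1) + 1 + (n+1))
        ≤ (1 - ((m:ℝ)-1)/(m:ℝ)^(n+1)) * tA W (j*(n+1)+1) := t_decay W hm hWe _
      _ ≤ (1 - ((m:ℝ)-1)/(m:ℝ)^(n+1)) * (1 - ((m:ℝ)-1)/(m:ℝ)^(n+1))^j :=
          mul_le_mul_of_nonneg_left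
            (by rw [show j*(n+1)+1 = 1 + j*(n+1) from by omega]; exact ih) hc1
      _ = (1 - ((m:ℝ)-1)/(m:ℝ)^(n+1))^(j+1) := by ring

include hm hWe in
private lemma s_nonneg (k : ℕ) : 0 ≤ sA W m k := by
  apply Finset.sum_nonneg
  intro i _
  exact mul_nonneg (wA_le (n := n) hm (i:ℕ) (by omega)).1 (v_nonneg W hm hWe k i)

include hm hWe in
private lemma s_le (k : ℕ) : sA W m k ≤ wA m n 0 * tA W k := by
  rw [tA, Finset.mul_sum]
  apply Finset.sum_le_sum
  intro i _
  exact mul_le_mul_of_nonneg_right (wA_le (n := n) hm (i:ℕ) (by omega)).2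
    (v_nonneg W hm hWe k i)

include hm hWe in
private lemma partial_sum (K : ℕ) :
    ∑ k ∈ Finset.range (K + 1), (k:ℝ) * vA W k (Fin.last n)
      = sA W m 0 - sA W m K - K * tA W (K + 1) := by
  induction K with
  | zero => simp
  | succ K ih =>
    rw [Finset.sum_range_succ, ih, s_rec W hm hWe K, t_rec W hm hWe (K+1)]
    push_cast
    ring

end Aux

open Filter Topology


/-- For integers `m ≥ 2`, `n ≥ 1`, with `A` the `(n+1)×(n+1)` real matrix whose first row is
`(m-1, …, m-1, 0)` and whose row `i ≥ 1` has a single `1` in column `i-1`, and `W = (1/m)·A`,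
the series `∑ₖ k·(Wᵏ)_{n,0}` converges with sum `m·(mⁿ − 1)/(m − 1)`. -/
theorem stmt_1 (m n : ℕ) (hm : 2 ≤ m) (hn : 1 ≤ n)
    (A W : Matrix (Fin (n + 1)) (Fin (n + 1)) ℝ)
    (hA : ∀ i j : Fin (n + 1), A i j =
      if (i : ℕ) = 0 then (if (j : ℕ) < n then (m : ℝ) - 1 else 0)
      else (if (j : ℕ) + 1 = (i : ℕ) then 1 else 0))
    (hW : W = (1 / (m : ℝ)) • A) :
    HasSum (fun k : ℕ => (k : ℝ) * (W ^ k) (Fin.last n) 0)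
      ((m : ℝ) * ((m : ℝ) ^ n - 1) / ((m : ℝ) - 1)) := by

  have hm2 : (2:ℝ) ≤ m := by exact_mod_cast hm
  have hmpos : (0:ℝ) < m := by linarith
  have hWe : ∀ i j : Fin (n + 1), W i j =
      if (i : ℕ) = 0 then (if (j : ℕ) < n then ((m : ℝ) - 1) / m else 0)
      else (if (j : ℕ) + 1 = (i : ℕ) then 1 / (m : ℝ) else 0) := by
    intro i j
    rw [hW, Matrix.smul_apply, hA, smul_eq_mul]
    split_ifs <;> ring
  set c : ℝ := ((m:ℝ)-1)/(m:ℝ)^(n+1) with hc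
  have hmn : (m:ℝ) ≤ (m:ℝ)^(n+1) := le_self_pow₀ (by linarith) (by omega)
  have hc0 : 0 < c := div_pos (by linarith) (by positivity)
  have hc1 : c < 1 := by rw [hc, div_lt_one (by positivity)]; linarith
  have hr0 : (0:ℝ) ≤ 1 - c := by linarith
  have hr1 : 1 - c < 1 := by linarith
  -- the geometric-type bound tends to zero
  have hg : Tendsto (fun j : ℕ => ((j:ℝ)+1) * ((n:ℝ)+1) * (1-c)^j) atTop (𝓝 0) := by
    have h1 : Tendsto (fun j : ℕ => (j:ℝ) * (1-c)^j) atTop (𝓝 0) := by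
      have hs := (summable_pow_mul_geometric_of_norm_lt_one (R := ℝ) 1
        (r := 1-c) (by rw [Real.norm_eq_abs, abs_of_nonneg hr0]; exact hr1)).tendsto_atTop_zero
      simpa using hs
    have h2 : Tendsto (fun j : ℕ => (1-c)^j) atTop (𝓝 0) :=
      tendsto_pow_atTop_nhds_zero_of_lt_one hr0 hr1
    have h3 := (h1.add h2).const_mul ((n:ℝ)+1)
    rw [add_zero, mul_zero] at h3
    exact h3.congr fun j => by ring
  have hd : Tendsto (fun K : ℕ => (K-1)/(n+1)) atTop atTop := by
    apply Filter.tendsto_atTop_atTop.mpr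
    intro b
    refine ⟨b*(n+1)+1, fun K hK => ?_⟩
    exact (Nat.le_div_iff_mul_le (by omega)).mpr (by omega)
  have hcomp := hg.comp hd
  have hKt : Tendsto (fun K : ℕ => (K:ℝ) * tA W K) atTop (𝓝 0) := by
    apply tendsto_of_tendsto_of_tendsto_of_le_of_le' tendsto_const_nhds hcomp
    · exact Eventually.of_forall fun K =>
        mul_nonneg (Nat.cast_nonneg K) (t_nonneg W hm hWe K)
    · filter_upwards [eventually_ge_atTop 1] with K hK
      set j := (K-1)/(n+1) with hj
      have h8 : j * (n+1) ≤ K - 1 := Nat.div_mul_le_self _ _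
      have hj1 : 1 + j*(n+1) ≤ K := by
        calc 1 + j*(n+1) ≤ 1 + (K-1) := Nat.add_le_add_left h8 1
        _ = K := by omega
      have ht1 : tA W K ≤ (1-c)^j :=
        le_trans (t_antitone W hm hWe _ _ hj1) (t_blocks W hm hWe j)
      have h10 : K - 1 < (j+1) * (n+1) :=
        (Nat.div_lt_iff_lt_mul (by omega)).mp (Nat.lt_succ_self j)
      have hK2 : K ≤ (j+1)*(n+1) := by
        calc K = (K-1)+1 := by omega
        _ ≤ (j+1)*(n+1) := Nat.succ_le_of_lt h10
      have hKr : (K:ℝ) ≤ ((j:ℝ)+1)*((n:ℝ)+1) := by exact_mod_cast hK2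
      calc (K:ℝ) * tA W K ≤ (((j:ℝ)+1)*((n:ℝ)+1)) * (1-c)^j :=
            mul_le_mul hKr ht1 (t_nonneg W hm hWe K) (by positivity)
        _ = ((fun j : ℕ => ((j:ℝ)+1) * ((n:ℝ)+1) * (1-c)^j) ∘
              (fun K : ℕ => (K-1)/(n+1))) K := by simp [hj]
  have ht0 : Tendsto (fun K : ℕ => tA W K) atTop (𝓝 0) := by
    apply tendsto_of_tendsto_of_tendsto_of_le_of_le' tendsto_const_nhds hKt
    · exact Eventually.of_forall fun K => t_nonneg W hm hWe K
    · filter_upwards [eventually_ge_atTop 1] with K hK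
      exact le_mul_of_one_le_left (t_nonneg W hm hWe K) (by exact_mod_cast hK)
  have hs0 : Tendsto (fun K : ℕ => sA W m K) atTop (𝓝 0) := by
    apply tendsto_of_tendsto_of_tendsto_of_le_of_le' tendsto_const_nhds
      (by simpa using ht0.const_mul (wA m n 0))
    · exact Eventually.of_forall fun K => s_nonneg W hm hWe K
    · exact Eventually.of_forall fun K => s_le W hm hWe K
  have hKt1 : Tendsto (fun K : ℕ => (K:ℝ) * tA W (K+1)) atTop (𝓝 0) := by
    apply tendsto_of_tendsto_of_tendsto_of_le_of_le' tendsto_const_nhds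
      (hKt.comp (tendsto_add_atTop_nat 1))
    · exact Eventually.of_forall fun K =>
        mul_nonneg (Nat.cast_nonneg K) (t_nonneg W hm hWe (K+1))
    · refine Eventually.of_forall fun K => ?_
      have : ((K:ℝ)) ≤ ((K+1 : ℕ):ℝ) := by push_cast; linarith
      exact mul_le_mul_of_nonneg_right this (t_nonneg W hm hWe (K+1))
  have hps := partial_sum W hm hWe
  have hlim : Tendsto (fun K => ∑ k ∈ Finset.range (K+1),
      (k:ℝ) * vA W k (Fin.last n)) atTop (𝓝 (sA W m 0)) := by
    have h := ((tendsto_const_nhds (x := sA W m 0) (f := atTop)).sub hs0).sub hKt1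
    rw [sub_zero, sub_zero] at h
    exact h.congr fun K => (hps K).symm
  have hfnn : ∀ k : ℕ, 0 ≤ (k:ℝ) * vA W k (Fin.last n) := fun k =>
    mul_nonneg (Nat.cast_nonneg k) (v_nonneg W hm hWe k _)
  have hbound : ∀ K, ∑ k ∈ Finset.range K, (k:ℝ) * vA W k (Fin.last n) ≤ sA W m 0 := by
    intro K
    cases K with
    | zero => simpa using s_nonneg W hm hWe 0
    | succ K =>
      rw [hps K]
      have h1 := s_nonneg W hm hWe K
      have h2 : (0:ℝ) ≤ (K:ℝ) * tA W (K+1) :=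
        mul_nonneg (Nat.cast_nonneg K) (t_nonneg W hm hWe (K+1))
      linarith
  have hsum : Summable (fun k : ℕ => (k:ℝ) * vA W k (Fin.last n)) :=
    summable_of_sum_range_le hfnn hbound
  have h2 := hsum.hasSum.tendsto_sum_nat.comp (tendsto_add_atTop_nat 1)
  have heq : (∑' k : ℕ, (k:ℝ) * vA W k (Fin.last n)) = sA W m 0 :=
    tendsto_nhds_unique h2 hlim
  have hfinal := hsum.hasSum
  rw [heq] at hfinal
  have hsz : sA W m 0 = (m:ℝ) * ((m:ℝ)^n - 1)/((m:ℝ)-1) := by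
    rw [s_zero W]
    show ((m:ℝ)^(n+1) - (m:ℝ)^(0+1)) / ((m:ℝ)-1) = _
    congr 1
    ring
  rw [hsz] at hfinal
  exact hfinal
end

section
/- Let m ≥ 2 and n ≥ 1 be integers and let W = (1/m)·A, where A is the (n+1)×(n+1) real matrix with A 0 j = m−1 for 0 ≤ j ≤ n−1, A 0 n = 0, and for 1 ≤ i ≤ n: A i j = 1 if j = i−1 and 0 otherwise. Then ∑_{k=0}^∞ k·(W^k)_{n,0} equals the number of lists over Fin m of length at least 1 and at most n, i.e. it equals the number of edges T_{m,n} of the complete m-ary rooted tree of height n. -/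
open Finset Matrix

/-- The scaled transfer matrix. -/
noncomputable def Wm (m n : ℕ) : Matrix (Fin (n+1)) (Fin (n+1)) ℝ :=
  Matrix.of fun i j =>
    if (i : ℕ) = 0 then (if (j : ℕ) < n then ((m:ℝ)-1)/m else 0)
    else (if (j : ℕ) + 1 = (i : ℕ) then 1/(m:ℝ) else 0)

lemma Wm_nonneg (m n : ℕ) (hm : 2 ≤ m) (i j : Fin (n+1)) : 0 ≤ Wm m n i j := by
  have h1 : (1:ℝ) ≤ (m:ℝ) := by exact_mod_cast Nat.one_le_of_lt hm
  unfold Wm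
  simp only [Matrix.of_apply]
  have h0 : (0:ℝ) < (m:ℝ) := by positivity
  split_ifs <;> first | positivity | (apply div_nonneg <;> linarith)

lemma Wm_mulVec_zero (m n : ℕ) (v : Fin (n+1) → ℝ) :
    (Wm m n).mulVec v 0 = ((m:ℝ)-1)/m * ∑ j : Fin (n+1), (if (j:ℕ) < n then v j else 0) := by
  unfold Wm
  simp only [Matrix.mulVec, dotProduct, Matrix.of_apply, Fin.val_zero, if_pos rfl,
    ite_mul, zero_mul, mul_sum, mul_ite, mul_zero, if_true]

lemma Wm_mulVec_succ (m n : ℕ) (v : Fin (n+1) → ℝ) (i : Fin (n+1)) (hi : (i:ℕ) ≠ 0) :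
    (Wm m n).mulVec v i = (1/(m:ℝ)) * v ⟨(i:ℕ)-1, by omega⟩ := by
  have key : ∀ j : Fin (n+1), ((j:ℕ) + 1 = (i:ℕ)) = (j = ⟨(i:ℕ)-1, by omega⟩) := by
    intro j
    apply propext
    constructor
    · intro h; exact Fin.ext (by simp; omega)
    · intro h; subst h; simp; omega
  unfold Wm
  simp only [Matrix.mulVec, dotProduct, Matrix.of_apply, hi, if_false, key,
    ite_mul, zero_mul]
  rw [Finset.sum_ite_eq']
  simp

lemma Wm_colsum (m n : ℕ) (hm : 2 ≤ m) (j : Fin (n+1)) :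
    ∑ i : Fin (n+1), Wm m n i j = if (j:ℕ) < n then 1 else 0 := by
  have hm0 : (m:ℝ) ≠ 0 := by positivity
  rw [Fin.sum_univ_succ]
  have h0 : Wm m n 0 j = if (j:ℕ) < n then ((m:ℝ)-1)/m else 0 := by simp [Wm]
  have hs : ∀ i : Fin n, Wm m n i.succ j = if (j:ℕ) = (i:ℕ) then 1/(m:ℝ) else 0 := by
    intro i
    have : ((i.succ : Fin (n+1)) : ℕ) = (i:ℕ) + 1 := rfl
    simp only [Wm, Matrix.of_apply, this]
    rw [if_neg (by omega)]
    congr 1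
    apply propext; omega
  simp only [h0, hs]
  by_cases hj : (j:ℕ) < n
  · rw [if_pos hj, if_pos hj]
    have key : ∀ i : Fin n, ((j:ℕ) = (i:ℕ)) = (i = ⟨(j:ℕ), hj⟩) := by
      intro i; apply propext; constructor
      · intro h; exact Fin.ext (by simp [← h])
      · intro h; subst h; rfl
    simp only [key]
    rw [Finset.sum_ite_eq']
    simp only [Finset.mem_univ, if_pos]
    field_simp
    ring
  · rw [if_neg hj, if_neg hj]
    have : ∀ i : Fin n, ((j:ℕ) = (i:ℕ)) = False := by
      intro i; apply propext; simp; omega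
    simp [this]

lemma Wm_mass (m n : ℕ) (hm : 2 ≤ m) (v : Fin (n+1) → ℝ) :
    ∑ i : Fin (n+1), (Wm m n).mulVec v i = (∑ j : Fin (n+1), v j) - v (Fin.last n) := by
  have : ∑ i : Fin (n+1), (Wm m n).mulVec v i
      = ∑ j : Fin (n+1), (∑ i : Fin (n+1), Wm m n i j) * v j := by
    simp only [Matrix.mulVec, dotProduct, Finset.sum_mul]
    rw [Finset.sum_comm]
  rw [this]
  simp only [Wm_colsum m n hm, ite_mul, one_mul, zero_mul]
  have split : ∀ j : Fin (n+1),
      (if (j:ℕ) < n then v j else 0) = v j - (if j = Fin.last n then v j else 0) := by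
    intro j
    by_cases hj : (j:ℕ) < n
    · rw [if_pos hj, if_neg (by intro h; subst h; simp at hj), sub_zero]
    · have : j = Fin.last n := Fin.ext (by have := j.isLt; simp [Fin.last]; omega)
      rw [if_neg hj, if_pos this, this, sub_self]
  simp only [split]
  rw [Finset.sum_sub_distrib, Finset.sum_ite_eq']
  simp

lemma sum_fin_lt_pow (n : ℕ) (c : ℝ) :
    ∑ j : Fin (n+1), (if (j:ℕ) < n then c^(n-(j:ℕ)) else 0)
      = c * ∑ t ∈ Finset.range n, c^t := by
  rw [Fin.sum_univ_eq_sum_range (fun j => if j < n then c^(n-j) else 0) (n+1),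
    Finset.sum_range_succ, if_neg (by omega), add_zero]
  rw [Finset.mul_sum]
  rw [← Finset.sum_range_reflect (fun t => c * c^t) n]
  apply Finset.sum_congr rfl
  intro j hj
  rw [Finset.mem_range] at hj
  rw [if_pos hj, ← pow_succ']
  congr 1
  omega

lemma sum_fin_pow (n : ℕ) (c : ℝ) :
    ∑ j : Fin (n+1), c^(n-(j:ℕ)) = ∑ t ∈ Finset.range (n+1), c^t := by
  rw [Fin.sum_univ_eq_sum_range (fun j => c^(n-j)) (n+1),
    ← Finset.sum_range_reflect (fun t => c^t) (n+1)]
  apply Finset.sum_congr rfl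
  intro j hj
  rw [Finset.mem_range] at hj
  have : n + 1 - 1 - j = n - j := by omega
  rw [this]
section
variable {N : ℕ}

lemma mulVec_nonneg' (M : Matrix (Fin N) (Fin N) ℝ) (hM : ∀ i j, 0 ≤ M i j)
    (v : Fin N → ℝ) (hv : ∀ j, 0 ≤ v j) (i : Fin N) : 0 ≤ M.mulVec v i := by
  rw [Matrix.mulVec, dotProduct]
  exact Finset.sum_nonneg fun j _ => mul_nonneg (hM i j) (hv j)

lemma mulVec_mono' (M : Matrix (Fin N) (Fin N) ℝ) (hM : ∀ i j, 0 ≤ M i j)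
    (v u : Fin N → ℝ) (h : ∀ j, v j ≤ u j) (i : Fin N) : M.mulVec v i ≤ M.mulVec u i := by
  simp only [Matrix.mulVec, dotProduct]
  exact Finset.sum_le_sum fun j _ => mul_le_mul_of_nonneg_left (h j) (hM i j)

lemma pow_entry_nonneg (M : Matrix (Fin N) (Fin N) ℝ) (hM : ∀ i j, 0 ≤ M i j) (k : ℕ) :
    ∀ i j, 0 ≤ (M ^ k) i j := by
  induction k with
  | zero => intro i j; simp [Matrix.one_apply]; split_ifs <;> norm_num
  | succ k ih =>
    intro i j
    rw [pow_succ, Matrix.mul_apply]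
    exact Finset.sum_nonneg fun l _ => mul_nonneg (ih i l) (hM l j)

end

lemma fiber_card (m n k : ℕ) (T : Finset (List (Fin m)))
    (hT : ∀ l : List (Fin m), l ∈ T ↔ 1 ≤ l.length ∧ l.length ≤ n)
    (hk1 : 1 ≤ k) (hk2 : k ≤ n) :
    (T.filter (fun l => l.length = k)).card = m ^ k := by
  classical
  rw [← Fintype.card_coe]
  have e : {l // l ∈ T.filter (fun l => l.length = k)} ≃ List.Vector (Fin m) k :=
    { toFun := fun l => ⟨l.1, (Finset.mem_filter.mp l.2).2⟩
      invFun := fun v => ⟨v.1, Finset.mem_filter.mpr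
        ⟨(hT v.1).mpr ⟨by rw [v.2]; exact hk1, by rw [v.2]; exact hk2⟩, v.2⟩⟩
      left_inv := fun l => Subtype.ext rfl
      right_inv := fun v => Subtype.ext rfl }
  rw [Fintype.card_congr e, card_vector, Fintype.card_fin]

lemma T_card_eq (m n : ℕ) (T : Finset (List (Fin m)))
    (hT : ∀ l : List (Fin m), l ∈ T ↔ 1 ≤ l.length ∧ l.length ≤ n) :
    T.card = ∑ k ∈ Finset.range n, m ^ (k + 1) := by
  classical
  rw [Finset.card_eq_sum_card_fiberwise (f := fun l => l.length) (t := Finset.range (n+1))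
    (fun l hl => Finset.mem_range.mpr (Nat.lt_succ_of_le ((hT l).mp hl).2))]
  rw [Finset.sum_range_succ']
  have h0 : (T.filter (fun l => l.length = 0)).card = 0 := by
    rw [Finset.card_eq_zero, Finset.filter_eq_empty_iff]
    intro l hl
    have := (hT l).mp hl
    omega
  rw [h0, add_zero]
  exact Finset.sum_congr rfl fun k hk =>
    fiber_card m n (k+1) T hT (by omega) (by have := Finset.mem_range.mp hk; omega)

lemma Wm_mulVec_s (m n : ℕ) (hm : 2 ≤ m) :
    (Wm m n).mulVec (fun i => (m:ℝ)^(n-(i:ℕ)))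
      = (fun i : Fin (n+1) => (m:ℝ)^(n-(i:ℕ))) - (fun i => if i = 0 then 1 else 0) := by
  have hm0 : (0:ℝ) < m := by positivity
  have hm1 : (m:ℝ) ≠ 1 := by
    have : (2:ℝ) ≤ m := by exact_mod_cast hm
    linarith
  funext i
  by_cases hi : (i:ℕ) = 0
  · have hi' : i = 0 := Fin.ext (by simpa using hi)
    subst hi'
    rw [Wm_mulVec_zero, sum_fin_lt_pow]
    have hg := geom_sum_mul (m:ℝ) n
    have key : ((m:ℝ)-1)/m * ((m:ℝ) * ∑ t ∈ Finset.range n, (m:ℝ)^t)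
        = (∑ t ∈ Finset.range n, (m:ℝ)^t) * ((m:ℝ) - 1) := by
      field_simp
    rw [key, hg]
    simp
  · rw [Wm_mulVec_succ m n _ i hi]
    have hle : (i:ℕ) ≤ n := by omega
    have : n - ((i:ℕ)-1) = (n - (i:ℕ)) + 1 := by omega
    simp only [Pi.sub_apply, this, pow_succ]
    rw [if_neg (by intro h; subst h; simp at hi)]
    field_simp
    simp

lemma Wm_mulVec_w (m n : ℕ) (hm : 2 ≤ m) (x : ℝ) (hx1 : 1 < x) (hxm : x ≤ m)
    (hxc : ((m:ℝ) - x) * (m:ℝ)^n = (m:ℝ) - 1) (i : Fin (n+1)) :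
    (Wm m n).mulVec (fun i => x^(n-(i:ℕ))) i ≤ (x/(m:ℝ)) * x^(n-(i:ℕ)) := by
  have hm0 : (0:ℝ) < m := by positivity
  have hx0 : (0:ℝ) < x := by linarith
  by_cases hi : (i:ℕ) = 0
  · have hi' : i = 0 := Fin.ext (by simpa using hi)
    subst hi'
    rw [Wm_mulVec_zero, sum_fin_lt_pow]
    have hg := geom_sum_mul x n
    have hxn : x^n ≤ (m:ℝ)^n := pow_le_pow_left₀ (le_of_lt hx0) hxm n
    have hkey : ((m:ℝ)-1) * (∑ t ∈ Finset.range n, x^t) ≤ x^n := by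
      rw [← mul_le_mul_iff_of_pos_right (show (0:ℝ) < x - 1 by linarith)]
      have h2 : ((m:ℝ) - x) * x^n ≤ ((m:ℝ) - x) * (m:ℝ)^n :=
        mul_le_mul_of_nonneg_left hxn (by linarith)
      rw [hxc] at h2
      nlinarith [hg]
    have hG0 : (0:ℝ) ≤ ∑ t ∈ Finset.range n, x^t :=
      Finset.sum_nonneg fun t _ => pow_nonneg (le_of_lt hx0) t
    simp only [Fin.val_zero, Nat.sub_zero]
    rw [div_mul_eq_mul_div, div_mul_eq_mul_div, div_le_div_iff₀ hm0 hm0]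
    have : ((m:ℝ)-1) * (x * ∑ t ∈ Finset.range n, x^t) ≤ x * x^n := by
      nlinarith [hkey]
    nlinarith [this]
  · rw [Wm_mulVec_succ m n _ i hi]
    have hle : (i:ℕ) ≤ n := by omega
    have heq : n - ((i:ℕ)-1) = (n - (i:ℕ)) + 1 := by omega
    simp only [heq, pow_succ]
    apply le_of_eq
    field_simp
/-- For integers `m ≥ 2`, `n ≥ 1`, with `A` the `(n+1)×(n+1)` real matrix whose first row is
`(m-1, …, m-1, 0)` and whose row `i ≥ 1` has a single `1` in column `i-1`, and `W = (1/m)·A`,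
the sum `∑ₖ k·(Wᵏ)_{n,0}` equals the number of lists over `Fin m` of length at least `1`
and at most `n`, i.e. the number `T_{m,n}` of edges of the complete `m`-ary rooted tree of
height `n`. -/
theorem stmt_2 (m n : ℕ) (hm : 2 ≤ m) (hn : 1 ≤ n)
    (A W : Matrix (Fin (n + 1)) (Fin (n + 1)) ℝ)
    (hA : ∀ i j : Fin (n + 1), A i j =
      if (i : ℕ) = 0 then (if (j : ℕ) < n then (m : ℝ) - 1 else 0)
      else (if (j : ℕ) + 1 = (i : ℕ) then 1 else 0))
    (hW : W = (1 / (m : ℝ)) • A)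
    (T : Finset (List (Fin m)))
    (hT : ∀ l : List (Fin m), l ∈ T ↔ 1 ≤ l.length ∧ l.length ≤ n) :
    ∑' k : ℕ, (k : ℝ) * (W ^ k) (Fin.last n) 0 = (T.card : ℝ) := by
  classical
  have hWeq : W = Wm m n := by
    ext i j
    rw [hW]
    simp only [Matrix.smul_apply, hA, Wm, Matrix.of_apply, smul_eq_mul]
    split_ifs <;> ring
  subst hWeq
  -- numeric facts
  have hm0 : (0:ℝ) < m := by positivity
  have hm1 : (1:ℝ) < (m:ℝ) := by exact_mod_cast lt_of_lt_of_le one_lt_two hm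
  have hmn1 : (1:ℝ) < (m:ℝ)^n := one_lt_pow₀ hm1 (by omega)
  set x : ℝ := (m:ℝ) - ((m:ℝ)-1)/(m:ℝ)^n with hxdef
  have hmnpos : (0:ℝ) < (m:ℝ)^n := by positivity
  have hxc : ((m:ℝ) - x) * (m:ℝ)^n = (m:ℝ) - 1 := by
    rw [hxdef]; field_simp; ring
  have hdivpos : (0:ℝ) < ((m:ℝ)-1)/(m:ℝ)^n := by
    apply div_pos (by linarith) hmnpos
  have hxm : x ≤ (m:ℝ) := by rw [hxdef]; linarith
  have hxltm : x < (m:ℝ) := by rw [hxdef]; linarith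
  have hx1 : 1 < x := by
    rw [hxdef]
    have h2 : ((m:ℝ)-1)/(m:ℝ)^n < (m:ℝ)-1 := div_lt_self (by linarith) hmn1
    linarith
  have hx0 : (0:ℝ) < x := by linarith
  set r : ℝ := x / m with hrdef
  have hr0 : 0 ≤ r := by positivity
  have hr1 : r < 1 := by rw [hrdef, div_lt_one hm0]; exact hxltm
  -- vectors
  set s : Fin (n+1) → ℝ := fun i => (m:ℝ)^(n-(i:ℕ)) with hsdef
  set w : Fin (n+1) → ℝ := fun i => x^(n-(i:ℕ)) with hwdef
  set e0 : Fin (n+1) → ℝ := fun i => if i = 0 then 1 else 0 with he0def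
  have hWs : (Wm m n).mulVec s = s - e0 := Wm_mulVec_s m n hm
  have hWw : ∀ i, (Wm m n).mulVec w i ≤ r * w i := Wm_mulVec_w m n hm x hx1 hxm hxc
  set vs : ℕ → Fin (n+1) → ℝ := fun k => (Wm m n ^ k).mulVec s with hvsdef
  set ve : ℕ → Fin (n+1) → ℝ := fun k => (Wm m n ^ k).mulVec e0 with hvedef
  set vw : ℕ → Fin (n+1) → ℝ := fun k => (Wm m n ^ k).mulVec w with hvwdef
  set σ : ℕ → ℝ := fun k => ∑ i, vs k i with hσdef
  set S : ℕ → ℝ := fun k => ∑ i, ve k i with hSdef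
  set p : ℕ → ℝ := fun k => ve k (Fin.last n) with hpdef
  -- p is the matrix entry
  have hp_entry : ∀ k, (Wm m n ^ k) (Fin.last n) 0 = p k := by
    intro k
    show _ = ve k (Fin.last n)
    simp only [hvedef, he0def, Matrix.mulVec, dotProduct, mul_ite, mul_one, mul_zero]
    rw [Finset.sum_ite_eq']
    simp
  -- step relations
  have hstep : ∀ (v : Fin (n+1) → ℝ) (k : ℕ),
      (Wm m n ^ (k+1)).mulVec v = (Wm m n).mulVec ((Wm m n ^ k).mulVec v) := by
    intro v k
    rw [Matrix.mulVec_mulVec, ← pow_succ']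
  have he0eq : e0 = s - (Wm m n).mulVec s := by rw [hWs]; abel
  have hve_vs : ∀ k, ve k = vs k - vs (k+1) := by
    intro k
    show (Wm m n ^ k).mulVec e0 = (Wm m n ^ k).mulVec s - (Wm m n ^ (k+1)).mulVec s
    rw [he0eq, Matrix.mulVec_sub, Matrix.mulVec_mulVec, ← pow_succ]
  have hSσ : ∀ k, S k = σ k - σ (k+1) := by
    intro k
    rw [hSdef, hσdef]
    simp only [hve_vs k, Pi.sub_apply]
    rw [Finset.sum_sub_distrib]
  have hpS : ∀ k, p k = S k - S (k+1) := by
    intro k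
    have : S (k+1) = S k - p k := by
      show (∑ i, ve (k+1) i) = (∑ i, ve k i) - ve k (Fin.last n)
      have h1 : ve (k+1) = (Wm m n).mulVec (ve k) := hstep e0 k
      rw [h1, Wm_mass m n hm]
    linarith
  -- nonnegativity
  have hWnn := Wm_nonneg m n hm
  have hpow : ∀ k i j, 0 ≤ (Wm m n ^ k) i j := fun k => pow_entry_nonneg _ hWnn k
  have hsnn : ∀ i, 0 ≤ s i := fun i => by simp only [hsdef]; positivity
  have hwnn : ∀ i, 0 ≤ w i := fun i => by simp only [hwdef]; positivity
  have he0nn : ∀ i, 0 ≤ e0 i := fun i => by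
    simp only [he0def]; split_ifs <;> norm_num
  have hvsnn : ∀ k i, 0 ≤ vs k i := fun k i => mulVec_nonneg' _ (hpow k) s hsnn i
  have hvenn : ∀ k i, 0 ≤ ve k i := fun k i => mulVec_nonneg' _ (hpow k) e0 he0nn i
  have hvwnn : ∀ k i, 0 ≤ vw k i := fun k i => mulVec_nonneg' _ (hpow k) w hwnn i
  have hσnn : ∀ k, 0 ≤ σ k := fun k => Finset.sum_nonneg fun i _ => hvsnn k i
  have hSnn : ∀ k, 0 ≤ S k := fun k => Finset.sum_nonneg fun i _ => hvenn k i
  have hpnn : ∀ k, 0 ≤ p k := fun k => hvenn k _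
  -- geometric decay
  have hvw_le : ∀ k i, vw k i ≤ r^k * w i := by
    intro k
    induction k with
    | zero =>
      intro i
      rw [hvwdef]
      simp only [pow_zero, Matrix.one_mulVec, one_mul]
      exact le_refl _
    | succ k ih =>
      intro i
      have h1 : vw (k+1) i = (Wm m n).mulVec (vw k) i := by
        rw [hvwdef]; simp only [hstep w k]
      rw [h1]
      have h2 : (Wm m n).mulVec (vw k) i ≤ (Wm m n).mulVec (fun j => r^k * w j) i :=
        mulVec_mono' _ hWnn _ _ (fun j => ih j) i
      have h3 : (Wm m n).mulVec (fun j => r^k * w j) i = r^k * (Wm m n).mulVec w i := by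
        simp only [Matrix.mulVec, dotProduct, Finset.mul_sum]
        exact Finset.sum_congr rfl fun j _ => by ring
      have h4 : r^k * (Wm m n).mulVec w i ≤ r^k * (r * w i) :=
        mul_le_mul_of_nonneg_left (hWw i) (pow_nonneg hr0 k)
      have h5 := le_trans h2 (le_of_eq h3)
      have h6 : r^k * (r * w i) = r^(k+1) * w i := by ring
      linarith
  have he0w : ∀ i, e0 i ≤ w i := by
    intro i
    simp only [he0def, hwdef]
    split_ifs with h
    · exact one_le_pow₀ (le_of_lt hx1)
    · positivity
  have hve_vw : ∀ k i, ve k i ≤ vw k i := fun k i =>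
    mulVec_mono' _ (hpow k) e0 w he0w i
  set sw : ℝ := ∑ i, w i with hswdef
  have hswnn : 0 ≤ sw := Finset.sum_nonneg fun i _ => hwnn i
  have hS_le : ∀ k, S k ≤ r^k * sw := by
    intro k
    show (∑ i, ve k i) ≤ _
    rw [hswdef, Finset.mul_sum]
    exact Finset.sum_le_sum fun i _ => le_trans (hve_vw k i) (hvw_le k i)
  set C : ℝ := ((m:ℝ)/x)^n with hCdef
  have hC0 : 0 ≤ C := by positivity
  have hs_le : ∀ i, s i ≤ C * w i := by
    intro i
    simp only [hsdef, hwdef, hCdef]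
    have hle : (i:ℕ) ≤ n := by omega
    have h1 : (m:ℝ)^n = (m:ℝ)^(n-(i:ℕ)) * (m:ℝ)^(i:ℕ) := by
      rw [← pow_add]; congr 1; omega
    have h2 : x^n = x^(n-(i:ℕ)) * x^(i:ℕ) := by
      rw [← pow_add]; congr 1; omega
    rw [div_pow, div_mul_eq_mul_div, le_div_iff₀ (by positivity)]
    rw [h1, h2]
    have hxi : x^(i:ℕ) ≤ (m:ℝ)^(i:ℕ) := pow_le_pow_left₀ (le_of_lt hx0) hxm _
    nlinarith [mul_le_mul_of_nonneg_left hxi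
      (by positivity : (0:ℝ) ≤ (m:ℝ)^(n-(i:ℕ)) * x^(n-(i:ℕ)))]
  have hσ_le : ∀ k, σ k ≤ r^k * (C * sw) := by
    intro k
    have h1 : ∀ i, vs k i ≤ C * vw k i := by
      intro i
      have h2 : vs k i ≤ (Wm m n ^ k).mulVec (fun j => C * w j) i :=
        mulVec_mono' _ (hpow k) s _ hs_le i
      have h3 : (Wm m n ^ k).mulVec (fun j => C * w j) i = C * vw k i := by
        rw [hvwdef]
        simp only [Matrix.mulVec, dotProduct, Finset.mul_sum]
        exact Finset.sum_congr rfl fun j _ => by ring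
      rw [h3] at h2; exact h2
    calc σ k ≤ ∑ i, C * vw k i := Finset.sum_le_sum fun i _ => h1 i
      _ ≤ ∑ i, C * (r^k * w i) := Finset.sum_le_sum fun i _ =>
          mul_le_mul_of_nonneg_left (hvw_le k i) hC0
      _ = r^k * (C * sw) := by rw [hswdef, Finset.mul_sum, Finset.mul_sum]; exact Finset.sum_congr rfl fun i _ => by ring
  -- limits
  have hrpow : Filter.Tendsto (fun N : ℕ => r^N) Filter.atTop (nhds 0) :=
    tendsto_pow_atTop_nhds_zero_of_lt_one hr0 hr1
  have hσ0 : Filter.Tendsto (fun N : ℕ => σ (N+1)) Filter.atTop (nhds 0) := by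
    have hb : ∀ N : ℕ, σ (N+1) ≤ r^N * (r*(C*sw)) := fun N =>
      le_trans (hσ_le (N+1)) (le_of_eq (by ring))
    exact squeeze_zero (fun N => hσnn (N+1)) hb
      (by simpa using hrpow.mul_const (r*(C*sw)))
  have hNS0 : Filter.Tendsto (fun N : ℕ => (N:ℝ) * S N) Filter.atTop (nhds 0) := by
    have hsum1 : Filter.Tendsto (fun N : ℕ => (N:ℝ) * r^N) Filter.atTop (nhds 0) := by
      have h := (summable_pow_mul_geometric_of_norm_lt_one (R := ℝ) 1
        (by rw [Real.norm_eq_abs, abs_of_nonneg hr0]; exact hr1)).tendsto_atTop_zero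
      simpa using h
    have hb : ∀ N : ℕ, (N:ℝ) * S N ≤ ((N:ℝ) * r^N) * sw := fun N =>
      le_trans (mul_le_mul_of_nonneg_left (hS_le N) (Nat.cast_nonneg N))
        (le_of_eq (by ring))
    exact squeeze_zero (fun N => mul_nonneg (Nat.cast_nonneg N) (hSnn N)) hb
      (by simpa using hsum1.mul_const sw)
  -- partial sums
  have hF : ∀ N, ∑ k ∈ Finset.range N, (k:ℝ) * p k = σ 1 - σ (N+1) - N * S N := by
    intro N
    induction N with
    | zero => simp
    | succ N ih =>
      rw [Finset.sum_range_succ, ih]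
      push_cast
      linear_combination (N:ℝ) * hpS N + hSσ (N+1)
  -- summability and value
  have hpos : ∀ k : ℕ, 0 ≤ (k:ℝ) * p k := fun k => mul_nonneg (Nat.cast_nonneg k) (hpnn k)
  have hble : ∀ N, ∑ k ∈ Finset.range N, (k:ℝ) * p k ≤ σ 1 := by
    intro N
    rw [hF N]
    have h1 := hσnn (N+1)
    have h2 := mul_nonneg (Nat.cast_nonneg N) (hSnn N)
    linarith
  have hsmm : Summable (fun k : ℕ => (k:ℝ) * p k) := summable_of_sum_range_le hpos hble
  have htend : Filter.Tendsto (fun N => ∑ k ∈ Finset.range N, (k:ℝ) * p k)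
      Filter.atTop (nhds (σ 1)) := by
    have h := (tendsto_const_nhds (x := σ 1) (f := Filter.atTop (α := ℕ))).sub hσ0 |>.sub hNS0
    simp only [sub_zero] at h
    exact h.congr fun N => (hF N).symm
  have htsum : ∑' k : ℕ, (k:ℝ) * p k = σ 1 :=
    tendsto_nhds_unique hsmm.hasSum.tendsto_sum_nat htend
  -- final computation
  have hσ1 : σ 1 = (T.card : ℝ) := by
    show ∑ i, vs 1 i = (T.card : ℝ)
    simp only [hvsdef, pow_one, hWs, Pi.sub_apply]
    rw [Finset.sum_sub_distrib]
    have h1 : ∑ i : Fin (n+1), e0 i = 1 := by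
      rw [he0def]
      rw [Finset.sum_ite_eq']
      simp
    have h2 : ∑ i : Fin (n+1), s i = ∑ t ∈ Finset.range (n+1), (m:ℝ)^t := by
      rw [hsdef]; exact sum_fin_pow n (m:ℝ)
    rw [h1, h2, Finset.sum_range_succ', T_card_eq m n T hT]
    push_cast
    simp
  rw [show ∑' k : ℕ, (k:ℝ) * (Wm m n ^ k) (Fin.last n) 0 = ∑' k : ℕ, (k:ℝ) * p k from
    tsum_congr fun k => by rw [hp_entry k], htsum, hσ1]
end

section
/- Let m ≥ 2 and n ≥ 1 be integers and let W = (1/m)·A, where A is the (n+1)×(n+1) real matrix with A 0 j = m−1 for 0 ≤ j ≤ n−1, A 0 n = 0, and for 1 ≤ i ≤ n: A i j = 1 if j = i−1 and 0 otherwise. Then the series ∑_{k=0}^∞ k²·(W^k)_{n,0} converges and its sum equals (m/(m−1)²)·(2·m^{2n+1} − (2n+3)·m^{n+1} + (2n+1)·m^n + m − 1). -/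
open Finset

set_option maxHeartbeats 1600000 in
lemma aux_main (m n : ℕ) (hm : 2 ≤ m) (hn : 1 ≤ n)
    (p s : ℕ → ℝ) (c : ℝ) (hc : c = ((m:ℝ)-1)/(m:ℝ)^(n+1))
    (hs0 : s 0 = 1)
    (hrec : ∀ k, s (k+1) = s k - p (k+1))
    (hpc : ∀ k, p (k+n+1) = c * s k)
    (hp0 : ∀ k, k < n → p k = 0)
    (hpn : p n = ((m:ℝ)^n)⁻¹)
    (hppos : ∀ k, 0 ≤ p k) (hspos : ∀ k, 0 ≤ s k) :
    HasSum (fun k : ℕ => (k:ℝ)^2 * p k)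
      ((m : ℝ) / ((m : ℝ) - 1) ^ 2 *
        (2 * (m : ℝ) ^ (2 * n + 1) - (2 * (n : ℝ) + 3) * (m : ℝ) ^ (n + 1)
          + (2 * (n : ℝ) + 1) * (m : ℝ) ^ n + (m : ℝ) - 1)) := by
  have hm0 : (0:ℝ) < m := by positivity
  have hm1 : (1:ℝ) < m := by exact_mod_cast hm
  have hmpow : (m:ℝ) ≤ (m:ℝ)^(n+1) := le_self_pow₀ (le_of_lt hm1) (by omega)
  have hcpos : 0 < c := by
    rw [hc]; apply div_pos (by linarith) (by positivity)
  have hc1 : c < 1 := by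
    rw [hc, div_lt_one (by positivity)]; linarith
  set r : ℝ := 1 - c with hr
  have hr0 : 0 ≤ r := by simp [hr]; linarith
  have hr1 : r < 1 := by simp [hr]; linarith
  -- antitone
  have hmono : ∀ a b, s (a + b) ≤ s a := by
    intro a b
    induction b with
    | zero => simp
    | succ b ih =>
      have := hrec (a+b)
      have hp := hppos (a+b+1)
      calc s (a + (b+1)) = s (a+b) - p (a+b+1) := by rw [← hrec]; ring_nf
        _ ≤ s (a+b) := by linarith
        _ ≤ s a := ih
  -- decay
  have hdecay : ∀ k, s (k + (n+1)) ≤ r * s k := by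
    intro k
    have h1 : s (k + (n+1)) = s (k+n) - c * s k := by
      have := hrec (k+n); rw [← hpc k]; rw [show k + (n+1) = k+n+1 by ring] at *; linarith [this]
    have h2 : s (k+n) ≤ s k := hmono k n
    rw [h1, hr]; nlinarith [hspos k]
  -- geometric bound
  have hbound : ∀ k, s k ≤ r ^ (k / (n+1)) := by
    intro k
    induction k using Nat.strong_induction_on with
    | _ k ih =>
      by_cases hk : k < n+1
      · rw [Nat.div_eq_of_lt hk, pow_zero]
        calc s k = s (0 + k) := by rw [Nat.zero_add]
          _ ≤ s 0 := hmono 0 k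
          _ = 1 := hs0
      · push_neg at hk
        have hk2 : k - (n+1) + (n+1) = k := by omega
        have h1 := hdecay (k - (n+1))
        rw [hk2] at h1
        have h2 := ih (k - (n+1)) (by omega)
        have h3 : k / (n+1) = (k - (n+1)) / (n+1) + 1 := by
          conv_lhs => rw [← hk2]
          rw [Nat.add_div_right _ (Nat.succ_pos n)]
        rw [h3, pow_succ]
        calc s k ≤ r * s (k - (n+1)) := h1
          _ ≤ r * r ^ ((k - (n+1)) / (n+1)) := by
              exact mul_le_mul_of_nonneg_left h2 hr0
          _ = r ^ ((k - (n+1)) / (n+1)) * r := by ring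
  -- master summability
  have hBsum : Summable (fun t : ℕ => (((t:ℝ)+1)^2+1) * r^t) := by
    have h1 : Summable (fun t : ℕ => ((t:ℝ))^2 * r^t) := by
      have := summable_pow_mul_geometric_of_norm_lt_one 2 (r := r)
        (by rw [Real.norm_eq_abs, abs_of_nonneg hr0]; exact hr1)
      exact this
    have h2 : Summable (fun t : ℕ => ((t:ℝ))^1 * r^t) := by
      have := summable_pow_mul_geometric_of_norm_lt_one 1 (r := r)
        (by rw [Real.norm_eq_abs, abs_of_nonneg hr0]; exact hr1)
      exact this
    have h3 : Summable (fun t : ℕ => r^t) := summable_geometric_of_lt_one hr0 hr1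
    have : (fun t : ℕ => (((t:ℝ)+1)^2+1) * r^t)
        = fun t : ℕ => ((t:ℝ))^2 * r^t + 2 * (((t:ℝ))^1 * r^t) + 2 * r^t := by
      funext t; ring
    rw [this]
    exact (h1.add (h2.mul_left 2)).add (h3.mul_left 2)
  have hBpos : ∀ t : ℕ, 0 ≤ (((t:ℝ)+1)^2+1) * r^t := by
    intro t; positivity
  set C : ℝ := ((n:ℝ)+1)^3 * ∑' t : ℕ, (((t:ℝ)+1)^2+1) * r^t with hC
  set hfun : ℕ → ℝ := fun k => ((k:ℝ)^2+1) * r^(k/(n+1)) with hhfun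
  have hhpos : ∀ k, 0 ≤ hfun k := by intro k; positivity
  have hblock : ∀ K, ∑ k ∈ range ((n+1)*K), hfun k ≤ ∑ t ∈ range K, ((n:ℝ)+1)^3 * ((((t:ℝ)+1)^2+1) * r^t) := by
    intro K
    induction K with
    | zero => simp
    | succ K ih =>
      rw [Nat.mul_succ, Finset.sum_range_add,
        show ∑ t ∈ range (K+1), ((n:ℝ)+1)^3 * ((((t:ℝ)+1)^2+1) * r^t)
            = (∑ t ∈ range K, ((n:ℝ)+1)^3 * ((((t:ℝ)+1)^2+1) * r^t))
              + ((n:ℝ)+1)^3 * ((((K:ℝ)+1)^2+1) * r^K) from Finset.sum_range_succ _ K]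
      apply add_le_add ih
      have hterm : ∀ j ∈ range (n+1), hfun ((n+1)*K + j) ≤ ((n:ℝ)+1)^2 * ((((K:ℝ)+1)^2+1) * r^K) := by
        intro j hj
        rw [Finset.mem_range] at hj
        have hdiv : ((n+1)*K + j) / (n+1) = K := by
          rw [Nat.mul_add_div (Nat.succ_pos n), Nat.div_eq_of_lt hj, Nat.add_zero]
        rw [hhfun]
        simp only []
        rw [hdiv]
        rw [show ((n:ℝ)+1)^2 * ((((K:ℝ)+1)^2+1) * r^K)
            = (((n:ℝ)+1)^2 * (((K:ℝ)+1)^2+1)) * r^K from by ring]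
        apply mul_le_mul_of_nonneg_right _ (pow_nonneg hr0 K)
        have hle : ((n+1)*K + j : ℕ) ≤ (n+1)*(K+1) := by nlinarith [hj]
        have hle' : (((n+1)*K + j : ℕ):ℝ) ≤ ((n:ℝ)+1)*((K:ℝ)+1) := by
          calc (((n+1)*K + j : ℕ):ℝ) ≤ (((n+1)*(K+1) : ℕ):ℝ) := by exact_mod_cast hle
            _ = ((n:ℝ)+1)*((K:ℝ)+1) := by push_cast; ring
        have hnn : (0:ℝ) ≤ (((n+1)*K + j : ℕ):ℝ) := Nat.cast_nonneg _
        nlinarith [sq_nonneg ((n:ℝ)+1), sq_nonneg ((K:ℝ)+1)]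
      calc ∑ j ∈ range (n+1), hfun ((n+1)*K + j)
          ≤ ∑ _j ∈ range (n+1), ((n:ℝ)+1)^2 * ((((K:ℝ)+1)^2+1) * r^K) := Finset.sum_le_sum hterm
        _ = ((n:ℝ)+1) * (((n:ℝ)+1)^2 * ((((K:ℝ)+1)^2+1) * r^K)) := by
            rw [Finset.sum_const, Finset.card_range]; push_cast; ring
        _ = ((n:ℝ)+1)^3 * ((((K:ℝ)+1)^2+1) * r^K) := by ring
  have hhsum : Summable hfun := by
    apply summable_of_sum_range_le (c := C) hhpos
    intro K
    calc ∑ k ∈ range K, hfun k ≤ ∑ k ∈ range ((n+1)*K), hfun k := by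
          apply Finset.sum_le_sum_of_subset_of_nonneg
          · exact Finset.range_subset_range.2 (by nlinarith)
          · intro k _ _; exact hhpos k
      _ ≤ ∑ t ∈ range K, ((n:ℝ)+1)^3 * ((((t:ℝ)+1)^2+1) * r^t) := hblock K
      _ ≤ C := by
          rw [hC, ← Finset.mul_sum]
          apply mul_le_mul_of_nonneg_left _ (by positivity)
          exact Summable.sum_le_tsum _ (fun t _ => hBpos t) hBsum
  -- summability of k^d * s k
  have hdom : ∀ k : ℕ, s k ≤ r ^ (k/(n+1)) := hbound
  have hSs0 : Summable s := by
    apply Summable.of_nonneg_of_le hspos (fun k => ?_) hhsum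
    calc s k ≤ r ^ (k/(n+1)) := hdom k
      _ ≤ ((k:ℝ)^2+1) * r ^ (k/(n+1)) := by
          nlinarith [pow_nonneg hr0 (k/(n+1)), sq_nonneg (k:ℝ)]
  have hSs1 : Summable (fun k : ℕ => (k:ℝ) * s k) := by
    apply Summable.of_nonneg_of_le (fun k => mul_nonneg (by positivity) (hspos k)) (fun k => ?_) hhsum
    calc (k:ℝ) * s k ≤ (k:ℝ) * r ^ (k/(n+1)) :=
          mul_le_mul_of_nonneg_left (hdom k) (by positivity)
      _ ≤ ((k:ℝ)^2+1) * r ^ (k/(n+1)) := by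
          apply mul_le_mul_of_nonneg_right _ (pow_nonneg hr0 _)
          nlinarith [sq_nonneg ((k:ℝ)-1)]
  have hSs2 : Summable (fun k : ℕ => (k:ℝ)^2 * s k) := by
    apply Summable.of_nonneg_of_le (fun k => mul_nonneg (by positivity) (hspos k)) (fun k => ?_) hhsum
    calc (k:ℝ)^2 * s k ≤ (k:ℝ)^2 * r ^ (k/(n+1)) :=
          mul_le_mul_of_nonneg_left (hdom k) (by positivity)
      _ ≤ ((k:ℝ)^2+1) * r ^ (k/(n+1)) := by
          apply mul_le_mul_of_nonneg_right _ (pow_nonneg hr0 _)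
          linarith
  -- summability of k^d * p k
  have hSp0 : Summable p := by
    rw [← summable_nat_add_iff (n+1)]
    have : (fun k : ℕ => p (k + (n+1))) = fun k => c * s k := by
      funext k; rw [show k + (n+1) = k + n + 1 from rfl, hpc k]
    rw [this]; exact hSs0.mul_left c
  have hSp1 : Summable (fun k : ℕ => (k:ℝ) * p k) := by
    rw [← summable_nat_add_iff (n+1)]
    have : (fun k : ℕ => ((k + (n+1) : ℕ):ℝ) * p (k + (n+1)))
        = fun k : ℕ => c * ((k:ℝ) * s k) + (c * ((n:ℝ)+1)) * s k := by
      funext k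
      rw [show k + (n+1) = k + n + 1 from rfl, hpc k]
      push_cast; ring
    rw [this]; exact (hSs1.mul_left c).add (hSs0.mul_left _)
  have hSp2 : Summable (fun k : ℕ => (k:ℝ)^2 * p k) := by
    rw [← summable_nat_add_iff (n+1)]
    have : (fun k : ℕ => ((k + (n+1) : ℕ):ℝ)^2 * p (k + (n+1)))
        = fun k : ℕ => c * ((k:ℝ)^2 * s k) + (2 * c * ((n:ℝ)+1)) * ((k:ℝ) * s k)
            + (c * ((n:ℝ)+1)^2) * s k := by
      funext k
      rw [show k + (n+1) = k + n + 1 from rfl, hpc k]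
      push_cast; ring
    rw [this]
    exact ((hSs2.mul_left c).add (hSs1.mul_left _)).add (hSs0.mul_left _)
  set T0 : ℝ := ∑' k : ℕ, s k with hT0def
  set T1 : ℝ := ∑' k : ℕ, (k:ℝ) * s k with hT1def
  set T2 : ℝ := ∑' k : ℕ, (k:ℝ)^2 * s k with hT2def
  set P0 : ℝ := ∑' k : ℕ, p k with hP0def
  set P1 : ℝ := ∑' k : ℕ, (k:ℝ) * p k with hP1def
  set P2 : ℝ := ∑' k : ℕ, (k:ℝ)^2 * p k with hP2def
  have hp00 : p 0 = 0 := hp0 0 hn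
  have hSps0 : Summable (fun k : ℕ => p (k+1)) := (summable_nat_add_iff 1).2 hSp0
  have hSps1 : Summable (fun k : ℕ => ((k+1:ℕ):ℝ) * p (k+1)) := (summable_nat_add_iff 1).2 hSp1
  have hSps2 : Summable (fun k : ℕ => ((k+1:ℕ):ℝ)^2 * p (k+1)) := (summable_nat_add_iff 1).2 hSp2
  -- Eq P0 = 1
  have eqP0 : P0 = 1 := by
    have h1 : T0 = s 0 + ∑' k : ℕ, s (k+1) := Summable.tsum_eq_zero_add hSs0
    have h2 : P0 = p 0 + ∑' k : ℕ, p (k+1) := Summable.tsum_eq_zero_add hSp0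
    have h3 : ∑' k : ℕ, s (k+1) = T0 - ∑' k : ℕ, p (k+1) := by
      rw [← Summable.tsum_sub hSs0 hSps0]
      exact tsum_congr fun k => hrec k
    rw [hs0] at h1; rw [hp00, zero_add] at h2
    linarith
  -- Eq P1 = T0
  have eqP1 : P1 = T0 := by
    have h1 : T1 = (0:ℝ) * s 0 + ∑' k : ℕ, ((k+1:ℕ):ℝ) * s (k+1) := by
      have := Summable.tsum_eq_zero_add hSs1
      simpa using this
    have h2 : P1 = (0:ℝ) * p 0 + ∑' k : ℕ, ((k+1:ℕ):ℝ) * p (k+1) := by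
      have := Summable.tsum_eq_zero_add hSp1
      simpa using this
    have h3 : ∑' k : ℕ, ((k+1:ℕ):ℝ) * s (k+1)
        = ∑' k : ℕ, (((k:ℝ) * s k + s k) - ((k+1:ℕ):ℝ) * p (k+1)) := by
      apply tsum_congr
      intro k
      rw [hrec k]; push_cast; ring
    rw [h3, Summable.tsum_sub (hSs1.add hSs0) hSps1, Summable.tsum_add hSs1 hSs0] at h1
    simp only [zero_mul, zero_add] at h1 h2
    rw [← h2] at h1
    linarith
  -- Eq P2 = 2*T1 + T0
  have eqP2 : P2 = 2*T1 + T0 := by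
    have h1 : T2 = (0:ℝ)^2 * s 0 + ∑' k : ℕ, ((k+1:ℕ):ℝ)^2 * s (k+1) := by
      have := Summable.tsum_eq_zero_add hSs2
      simpa using this
    have h2 : P2 = (0:ℝ)^2 * p 0 + ∑' k : ℕ, ((k+1:ℕ):ℝ)^2 * p (k+1) := by
      have := Summable.tsum_eq_zero_add hSp2
      simpa using this
    have h3 : ∑' k : ℕ, ((k+1:ℕ):ℝ)^2 * s (k+1)
        = ∑' k : ℕ, ((((k:ℝ)^2 * s k + 2 * ((k:ℝ) * s k)) + s k) - ((k+1:ℕ):ℝ)^2 * p (k+1)) := by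
      apply tsum_congr
      intro k
      rw [hrec k]; push_cast; ring
    rw [h3, Summable.tsum_sub (((hSs2.add (hSs1.mul_left 2))).add hSs0) hSps2,
      Summable.tsum_add (hSs2.add (hSs1.mul_left 2)) hSs0,
      Summable.tsum_add hSs2 (hSs1.mul_left 2), tsum_mul_left] at h1
    simp only [zero_pow, zero_mul, zero_add, ne_eq, OfNat.ofNat_ne_zero,
      not_false_eq_true] at h1 h2
    rw [← h2] at h1
    linarith
  -- Eq4 : 1 = (m^n)⁻¹ + c*T0
  have eq4 : 1 = ((m:ℝ)^n)⁻¹ + c * T0 := by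
    have h := Summable.sum_add_tsum_nat_add (f := p) (n+1) hSp0
    have hfin : ∑ i ∈ range (n+1), p i = ((m:ℝ)^n)⁻¹ := by
      rw [Finset.sum_range_succ, Finset.sum_eq_zero (fun i hi => hp0 i (mem_range.1 hi)),
        zero_add, hpn]
    have hinf : ∑' k : ℕ, p (k + (n+1)) = c * T0 := by
      rw [show (fun k : ℕ => p (k + (n+1))) = fun k => c * s k from
        funext fun k => by rw [show k + (n+1) = k + n + 1 from rfl, hpc k], tsum_mul_left]
    rw [hfin, hinf] at h
    rw [← eqP0]; linarith
  -- Eq5 : T0 = n*(m^n)⁻¹ + c*T1 + c*(n+1)*T0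
  have eq5 : T0 = (n:ℝ) * ((m:ℝ)^n)⁻¹ + c * T1 + c * ((n:ℝ)+1) * T0 := by
    have h := Summable.sum_add_tsum_nat_add (f := fun k : ℕ => (k:ℝ) * p k) (n+1) hSp1
    have hfin : ∑ i ∈ range (n+1), (i:ℝ) * p i = (n:ℝ) * ((m:ℝ)^n)⁻¹ := by
      rw [Finset.sum_range_succ, Finset.sum_eq_zero
        (fun i hi => by rw [hp0 i (mem_range.1 hi), mul_zero]), zero_add, hpn]
    have hinf : ∑' k : ℕ, ((k + (n+1) : ℕ):ℝ) * p (k + (n+1)) = c * T1 + c * ((n:ℝ)+1) * T0 := by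
      rw [show (fun k : ℕ => ((k + (n+1) : ℕ):ℝ) * p (k + (n+1)))
          = fun k : ℕ => c * ((k:ℝ) * s k) + (c * ((n:ℝ)+1)) * s k from funext fun k => by
        rw [show k + (n+1) = k + n + 1 from rfl, hpc k]; push_cast; ring]
      rw [Summable.tsum_add (hSs1.mul_left c) (hSs0.mul_left _), tsum_mul_left, tsum_mul_left]
    rw [hfin, hinf] at h
    have h' : (n:ℝ) * ((m:ℝ)^n)⁻¹ + (c * T1 + c * ((n:ℝ)+1) * T0) = P1 := by
      simpa using h
    rw [eqP1] at h'
    linarith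
  -- final algebra
  have hcne : c ≠ 0 := ne_of_gt hcpos
  have hmne : (m:ℝ) ≠ 0 := ne_of_gt hm0
  have hm1ne : (m:ℝ) - 1 ≠ 0 := by linarith
  have hmnne : (m:ℝ)^n ≠ 0 := by positivity
  have hT0v : T0 = ((m:ℝ)^(n+1) - m)/((m:ℝ)-1) := by
    have h : T0 = (1 - ((m:ℝ)^n)⁻¹)/c := by
      rw [eq_div_iff hcne]; linarith
    rw [h, hc]
    field_simp
    ring
  have hT1v : T1 = (T0 - (n:ℝ) * ((m:ℝ)^n)⁻¹ - c * ((n:ℝ)+1) * T0)/c := by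
    rw [eq_div_iff hcne]; linarith
  have hfinal : P2 = (m : ℝ) / ((m : ℝ) - 1) ^ 2 *
      (2 * (m : ℝ) ^ (2 * n + 1) - (2 * (n : ℝ) + 3) * (m : ℝ) ^ (n + 1)
        + (2 * (n : ℝ) + 1) * (m : ℝ) ^ n + (m : ℝ) - 1) := by
    rw [eqP2, hT1v, hT0v, hc]
    field_simp
    ring
  exact hfinal ▸ hSp2.hasSum




/-- For integers `m ≥ 2`, `n ≥ 1`, with `A` the `(n+1)×(n+1)` real matrix whose first row is
`(m-1, …, m-1, 0)` and whose row `i ≥ 1` has a single `1` in column `i-1`, and `W = (1/m)·A`,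
the series `∑ₖ k²·(Wᵏ)_{n,0}` converges with sum
`(m/(m−1)²)·(2·m^{2n+1} − (2n+3)·m^{n+1} + (2n+1)·mⁿ + m − 1)`. -/
theorem stmt_3 (m n : ℕ) (hm : 2 ≤ m) (hn : 1 ≤ n)
    (A W : Matrix (Fin (n + 1)) (Fin (n + 1)) ℝ)
    (hA : ∀ i j : Fin (n + 1), A i j =
      if (i : ℕ) = 0 then (if (j : ℕ) < n then (m : ℝ) - 1 else 0)
      else (if (j : ℕ) + 1 = (i : ℕ) then 1 else 0))
    (hW : W = (1 / (m : ℝ)) • A) :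
    HasSum (fun k : ℕ => (k : ℝ) ^ 2 * (W ^ k) (Fin.last n) 0)
      ((m : ℝ) / ((m : ℝ) - 1) ^ 2 *
        (2 * (m : ℝ) ^ (2 * n + 1) - (2 * (n : ℝ) + 3) * (m : ℝ) ^ (n + 1)
          + (2 * (n : ℝ) + 1) * (m : ℝ) ^ n + (m : ℝ) - 1)) := by
  have hm0 : (0:ℝ) < m := by
    have : (0:ℕ) < m := by omega
    exact_mod_cast this
  have hmne : (m:ℝ) ≠ 0 := ne_of_gt hm0
  set G : ℕ → ℕ → ℝ := fun k j => if h : j < n+1 then (W^k) ⟨j, h⟩ 0 else 0 with hG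
  set sq : ℕ → ℝ := fun k => ∑ j ∈ Finset.range n, G k j with hsq
  set pq : ℕ → ℝ := fun k => G k n with hpq
  have hG0 : ∀ j, j < n+1 → G 0 j = if j = 0 then 1 else 0 := by
    intro j hj
    simp only [hG, dif_pos hj, pow_zero, Matrix.one_apply]
    by_cases h : j = 0
    · subst h; rw [if_pos rfl, if_pos]; exact Fin.ext rfl
    · rw [if_neg, if_neg h]
      intro hcon
      exact h (by simpa [Fin.ext_iff] using hcon)
  have hWval : ∀ (i j : Fin (n+1)), W i j = (1/(m:ℝ)) * A i j := by
    intro i j; rw [hW]; simp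
  have hrecM : ∀ k (i : Fin (n+1)), (W^(k+1)) i 0 = ∑ j : Fin (n+1), W i j * (W^k) j 0 := by
    intro k i
    rw [pow_succ']
    simp [Matrix.mul_apply]
  have hGcast : ∀ k (j : Fin (n+1)), (W^k) j 0 = G k (j:ℕ) := by
    intro k j
    simp [hG, dif_pos j.isLt]
    intro h; have := j.isLt; omega
  have hGrec0 : ∀ k, G (k+1) 0 = (((m:ℝ)-1)/m) * sq k := by
    intro k
    have h0 : (0:ℕ) < n+1 := by omega
    have key : ∀ j : Fin (n+1), W ⟨0,h0⟩ j * (W^k) j 0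
        = (fun t : ℕ => if t < n then (((m:ℝ)-1)/m) * G k t else 0) (j:ℕ) := by
      intro j
      rw [hWval, hA]
      have h00 : ((⟨0,h0⟩ : Fin (n+1)) : ℕ) = 0 := rfl
      rw [if_pos h00, hGcast]
      by_cases hj : (j:ℕ) < n
      · simp only [if_pos hj]; ring
      · simp only [if_neg hj]; ring
    simp only [hG, dif_pos h0]
    rw [hrecM]
    calc ∑ j : Fin (n+1), W ⟨0,h0⟩ j * (W^k) j 0
        = ∑ j : Fin (n+1), (fun t : ℕ => if t < n then (((m:ℝ)-1)/m) * G k t else 0) (j:ℕ) :=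
          Finset.sum_congr rfl (fun j _ => key j)
      _ = ∑ j ∈ Finset.range (n+1), (if j < n then (((m:ℝ)-1)/m) * G k j else 0) := by
          exact Fin.sum_univ_eq_sum_range (fun t => if t < n then (((m:ℝ)-1)/m) * G k t else 0) (n+1)
      _ = ∑ j ∈ Finset.range n, (if j < n then (((m:ℝ)-1)/m) * G k j else 0) := by
          rw [Finset.sum_range_succ, if_neg (lt_irrefl n), add_zero]
      _ = ∑ j ∈ Finset.range n, (((m:ℝ)-1)/m) * G k j :=
          Finset.sum_congr rfl (fun j hj => if_pos (Finset.mem_range.1 hj))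
      _ = (((m:ℝ)-1)/m) * sq k := by rw [hsq, Finset.mul_sum]
  have hGshift : ∀ k j, j < n → G (k+1) (j+1) = (1/(m:ℝ)) * G k j := by
    intro k j hj
    have hj1 : j+1 < n+1 := by omega
    have hjlt : j < n+1 := by omega
    have key : ∀ i : Fin (n+1), W ⟨j+1,hj1⟩ i * (W^k) i 0
        = if i = (⟨j, hjlt⟩ : Fin (n+1)) then (1/(m:ℝ)) * G k j else 0 := by
      intro i
      rw [hWval, hA]
      have hne : ¬ (((⟨j+1,hj1⟩ : Fin (n+1)) : ℕ) = 0) := by simp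
      rw [if_neg hne]
      by_cases hi : i = (⟨j, hjlt⟩ : Fin (n+1))
      · subst hi
        have h1 : ((⟨j, hjlt⟩ : Fin (n+1)) : ℕ) + 1 = ((⟨j+1, hj1⟩ : Fin (n+1)) : ℕ) := rfl
        rw [if_pos h1, if_pos rfl, hGcast]
        simp only [Fin.val_mk]
        ring
      · rw [if_neg hi, if_neg]
        · ring
        · intro hcon
          apply hi
          apply Fin.ext
          simpa using hcon
    simp only [hG, dif_pos hj1]
    rw [hrecM]
    rw [Finset.sum_congr rfl (fun i _ => key i)]
    simp only [Finset.sum_ite_eq', Finset.mem_univ, if_true]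
    rfl
  have hGzero : ∀ k j, n+1 ≤ j → G k j = 0 := by
    intro k j hj
    simp [hG, dif_neg (by omega : ¬ j < n+1)]
    intro h; omega
  have hGnn : ∀ k j, 0 ≤ G k j := by
    intro k
    induction k with
    | zero =>
      intro j
      by_cases h : j < n+1
      · rw [hG0 j h]; split <;> norm_num
      · rw [hGzero 0 j (by omega)]
    | succ k ih =>
      intro j
      by_cases h : j < n+1
      · match j, h with
        | 0, _ =>
          rw [hGrec0 k]
          have : 0 ≤ sq k := Finset.sum_nonneg (fun j _ => ih j)
          have hc : 0 ≤ ((m:ℝ)-1)/m := by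
            apply div_nonneg _ (le_of_lt hm0)
            have : (2:ℝ) ≤ m := by exact_mod_cast hm
            linarith
          positivity
        | (t+1), ht =>
          rw [hGshift k t (by omega)]
          have := ih t
          positivity
      · rw [hGzero _ j (by omega)]
  have hGiter : ∀ t k j, j + t ≤ n → G (k+t) (j+t) = ((1:ℝ)/m)^t * G k j := by
    intro t
    induction t with
    | zero => intro k j _; simp
    | succ t ih =>
      intro k j h
      calc G (k+(t+1)) (j+(t+1)) = G ((k+t)+1) ((j+t)+1) := rfl
        _ = (1/(m:ℝ)) * G (k+t) (j+t) := hGshift (k+t) (j+t) (by omega)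
        _ = (1/(m:ℝ)) * (((1:ℝ)/m)^t * G k j) := by rw [ih k j (by omega)]
        _ = ((1:ℝ)/m)^(t+1) * G k j := by ring
  have hs0 : sq 0 = 1 := by
    rw [hsq]
    simp only []
    rw [Finset.sum_congr rfl (fun j hj => hG0 j (by
      have := Finset.mem_range.1 hj; omega))]
    rw [Finset.sum_ite_eq' (Finset.range n) 0 (fun _ => (1:ℝ))]
    rw [if_pos (Finset.mem_range.2 (by omega))]
  have hrecs : ∀ k, sq (k+1) = sq k - pq (k+1) := by
    intro k
    obtain ⟨n', rfl⟩ : ∃ n', n = n' + 1 := ⟨n - 1, by omega⟩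
    have e1 : sq (k+1) = (∑ j ∈ Finset.range n', G (k+1) (j+1)) + G (k+1) 0 := by
      rw [hsq]; exact Finset.sum_range_succ' _ n'
    have e2 : ∑ j ∈ Finset.range n', G (k+1) (j+1) = ∑ j ∈ Finset.range n', (1/(m:ℝ)) * G k j :=
      Finset.sum_congr rfl (fun j hj => hGshift k j (by
        have := Finset.mem_range.1 hj; omega))
    have e3 : sq k = (∑ j ∈ Finset.range n', G k j) + G k n' := by
      rw [hsq]; exact Finset.sum_range_succ _ n'
    have e4 : pq (k+1) = (1/(m:ℝ)) * G k n' := by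
      rw [hpq]; exact hGshift k n' (by omega)
    have e5 : ∑ j ∈ Finset.range n', G k j = sq k - G k n' := by rw [e3]; ring
    rw [e1, e2, ← Finset.mul_sum, hGrec0, e5, e4,
      show ((m:ℝ)-1)/m = 1 - 1/m from by field_simp]
    ring
  have hpc : ∀ k, pq (k+n+1) = (((m:ℝ)-1)/(m:ℝ)^(n+1)) * sq k := by
    intro k
    have h := hGiter n (k+1) 0 (by omega)
    rw [Nat.zero_add, show (k+1)+n = k+n+1 from by omega] at h
    rw [hpq]
    simp only []
    rw [h, hGrec0, ← mul_assoc]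
    congr 1
    rw [div_pow, one_pow, div_mul_div_comm, one_mul, ← pow_succ]
  have hp0 : ∀ k, k < n → pq k = 0 := by
    intro k hk
    have h := hGiter k 0 (n-k) (by omega)
    rw [Nat.zero_add, show (n-k)+k = n from by omega] at h
    rw [hpq]
    simp only []
    rw [h, hG0 (n-k) (by omega), if_neg (by omega), mul_zero]
  have hpn : pq n = ((m:ℝ)^n)⁻¹ := by
    have h := hGiter n 0 0 (by omega)
    rw [Nat.zero_add] at h
    rw [hpq]
    simp only []
    rw [h, hG0 0 (by omega), if_pos rfl, mul_one, one_div, inv_pow]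
  have hppos : ∀ k, 0 ≤ pq k := fun k => hGnn k n
  have hspos : ∀ k, 0 ≤ sq k := fun k => Finset.sum_nonneg (fun j _ => hGnn k j)
  have key := aux_main m n hm hn pq sq _ rfl hs0 hrecs hpc hp0 hpn hppos hspos
  have hfe : (fun k : ℕ => (k:ℝ)^2 * (W^k) (Fin.last n) 0) = fun k : ℕ => (k:ℝ)^2 * pq k := by
    funext k
    rw [hpq]
    simp only [hG]
    rw [dif_pos (by omega : n < n+1)]
    rfl
  rw [hfe]
  exact key
end

section
/- Let m ≥ 2 and n ≥ 1 be integers and let W = (1/m)·A, where A is the (n+1)×(n+1) real matrix with A 0 j = m−1 for 0 ≤ j ≤ n−1, A 0 n = 0, and for 1 ≤ i ≤ n: A i j = 1 if j = i−1 and 0 otherwise. Then (∑_{k=0}^∞ k²·(W^k)_{n,0}) − (∑_{k=0}^∞ k·(W^k)_{n,0})² = (m/(m−1)²)·(m^{2n+1} − (2n+1)·m^{n+1} + (2n+1)·m^n − 1). -/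
noncomputable def aSeq (m n : ℕ) : ℕ → ℝ
  | 0 => 1
  | (k+1) => ((m:ℝ)-1)/m * ∑ j ∈ Finset.range (min (k+1) n),
      ((1:ℝ)/m)^j * aSeq m n (k-j)
  termination_by k => k
  decreasing_by exact Nat.lt_succ_of_le (Nat.sub_le k j)

section main
variable {m n : ℕ}

lemma mR_pos (hm : 2 ≤ m) : (0:ℝ) < (m:ℝ) := by
  have : (2:ℝ) ≤ (m:ℝ) := by exact_mod_cast hm
  linarith

lemma mR_two (hm : 2 ≤ m) : (2:ℝ) ≤ (m:ℝ) := by exact_mod_cast hm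

lemma aSeq_nonneg (hm : 2 ≤ m) : ∀ k, 0 ≤ aSeq m n k := by
  intro k
  induction k using Nat.strong_induction_on with
  | _ k ih =>
    match k with
    | 0 => rw [aSeq]; norm_num
    | (k+1) =>
      rw [aSeq]
      have hm' : (0:ℝ) < (m:ℝ) := mR_pos hm
      have h1 : (0:ℝ) ≤ ((m:ℝ)-1)/m := by
        apply div_nonneg _ (le_of_lt hm'); linarith [mR_two hm]
      apply mul_nonneg h1
      apply Finset.sum_nonneg
      intro j _
      exact mul_nonneg (pow_nonneg (by positivity) j)
        (ih (k-j) (Nat.lt_succ_of_le (Nat.sub_le k j)))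

lemma one_div_m_ne_one (hm : 2 ≤ m) : (1:ℝ)/(m:ℝ) ≠ 1 := by
  have h2 := mR_two hm
  have : (1:ℝ)/(m:ℝ) < 1 := by rw [div_lt_one (by linarith)]; linarith
  exact ne_of_lt this

lemma aSeq_small (hm : 2 ≤ m) : ∀ k, 1 ≤ k → k ≤ n → aSeq m n k = ((m:ℝ)-1)/m := by
  intro k
  induction k using Nat.strong_induction_on with
  | _ k ih =>
    match k with
    | 0 => intro h _; exact absurd h (by omega)
    | (k+1) =>
      intro _ hk
      rw [aSeq]
      have hmin : min (k+1) n = k+1 := by omega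
      rw [hmin, Finset.sum_range_succ]
      have hterm : ∀ j ∈ Finset.range k,
          ((1:ℝ)/m)^j * aSeq m n (k-j) = ((1:ℝ)/m)^j * (((m:ℝ)-1)/m) := by
        intro j hj
        rw [Finset.mem_range] at hj
        rw [ih (k-j) (by omega) (by omega) (by omega)]
      rw [Finset.sum_congr rfl hterm]
      have ha0 : aSeq m n (k-k) = 1 := by simp [aSeq]
      rw [ha0]
      rw [← Finset.sum_mul]
      have hm0 : (m:ℝ) ≠ 0 := ne_of_gt (mR_pos hm)
      have hq : ((m:ℝ)-1)/m = 1 - 1/m := by field_simp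
      have hgs := geom_sum_mul ((1:ℝ)/m) k
      rw [hq]
      linear_combination ((1:ℝ)/m - 1) * hgs

lemma aSeq_rec (hm : 2 ≤ m) (hn : 1 ≤ n) : ∀ k, n ≤ k →
    aSeq m n (k+1) = aSeq m n k - ((m:ℝ)-1)/(m:ℝ)^(n+1) * aSeq m n (k-n) := by
  intro k hk
  obtain ⟨l, rfl⟩ : ∃ l, k = l + 1 := ⟨k - 1, by omega⟩
  have hm0 : (m:ℝ) ≠ 0 := ne_of_gt (mR_pos hm)
  have h1 : aSeq m n (l+1+1) = ((m:ℝ)-1)/m * ∑ j ∈ Finset.range n,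
      ((1:ℝ)/m)^j * aSeq m n (l+1-j) := by
    rw [aSeq]
    congr 1
    rw [min_eq_right (by omega)]
  have h2 : aSeq m n (l+1) = ((m:ℝ)-1)/m * ∑ j ∈ Finset.range n,
      ((1:ℝ)/m)^j * aSeq m n (l-j) := by
    rw [aSeq]
    congr 1
    rw [min_eq_right (by omega)]
  -- telescoping: ∑_{j<n} x^j a(l+1-j) = a(l+1) + x * ∑_{j<n} x^j a(l-j) - x^n a(l+1-n)
  have key : ∑ j ∈ Finset.range n, ((1:ℝ)/m)^j * aSeq m n (l+1-j)
      = aSeq m n (l+1) + (1/m) * (∑ j ∈ Finset.range n, ((1:ℝ)/m)^j * aSeq m n (l-j))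
        - ((1:ℝ)/m)^n * aSeq m n (l+1-n) := by
    have e1 : ∑ j ∈ Finset.range (n+1), ((1:ℝ)/m)^j * aSeq m n (l+1-j)
        = ∑ j ∈ Finset.range n, ((1:ℝ)/m)^j * aSeq m n (l+1-j)
          + ((1:ℝ)/m)^n * aSeq m n (l+1-n) := Finset.sum_range_succ _ n
    have e2 : ∑ j ∈ Finset.range (n+1), ((1:ℝ)/m)^j * aSeq m n (l+1-j)
        = (∑ j ∈ Finset.range n, ((1:ℝ)/m)^(j+1) * aSeq m n (l+1-(j+1)))
          + ((1:ℝ)/m)^0 * aSeq m n (l+1-0) := Finset.sum_range_succ' _ n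
    have e3 : ∑ j ∈ Finset.range n, ((1:ℝ)/m)^(j+1) * aSeq m n (l+1-(j+1))
        = (1/m) * ∑ j ∈ Finset.range n, ((1:ℝ)/m)^j * aSeq m n (l-j) := by
      rw [Finset.mul_sum]
      apply Finset.sum_congr rfl
      intro j _
      have : l + 1 - (j+1) = l - j := by omega
      rw [this, pow_succ]
      ring
    rw [e3] at e2
    simp only [pow_zero, Nat.sub_zero, one_mul] at e2
    linarith [e1, e2]
  rw [h1, key]
  have hmn : ((m:ℝ))^n ≠ 0 := pow_ne_zero _ hm0
  have hp : ((1:ℝ)/m)^n = 1/(m:ℝ)^n := by rw [div_pow, one_pow]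
  have hq : ((m:ℝ)-1)/m = 1 - 1/m := by field_simp
  have hc : ((m:ℝ)-1)/(m:ℝ)^(n+1) = (1 - 1/(m:ℝ)) * (1/(m:ℝ)^n) := by
    rw [← hq, div_mul_div_comm, mul_one, pow_succ, mul_comm ((m:ℝ)^n) _]
  rw [hq] at h2 ⊢
  rw [hc, hp]
  set S := ∑ j ∈ Finset.range n, ((1:ℝ)/m)^j * aSeq m n (l-j) with hS
  set b := aSeq m n (l+1)
  set d := aSeq m n (l+1-n)
  linear_combination (-(1:ℝ)/m) * h2

lemma c_pos (hm : 2 ≤ m) : (0:ℝ) < ((m:ℝ)-1)/(m:ℝ)^(n+1) := by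
  apply div_pos (by linarith [mR_two hm]) (pow_pos (mR_pos hm) _)

lemma c_lt_one (hm : 2 ≤ m) : ((m:ℝ)-1)/(m:ℝ)^(n+1) < 1 := by
  rw [div_lt_one (pow_pos (mR_pos hm) _)]
  have h2 := mR_two hm
  have h3 : (m:ℝ) ≤ (m:ℝ)^(n+1) := le_self_pow₀ (by linarith) (by omega)
  linarith

lemma aSeq_antitone (hm : 2 ≤ m) (hn : 1 ≤ n) : ∀ k, aSeq m n (k+1) ≤ aSeq m n k := by
  intro k
  rcases lt_or_ge k n with hk | hk
  · rcases Nat.eq_zero_or_pos k with rfl | hk0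
    · have h1 : aSeq m n 1 = ((m:ℝ)-1)/m := aSeq_small hm 1 le_rfl hn
      have h0 : aSeq m n 0 = 1 := by rw [aSeq]
      rw [h0, h1]
      have := mR_pos hm
      rw [div_le_one this]
      linarith
    · rw [aSeq_small hm (k+1) (by omega) (by omega), aSeq_small hm k (by omega) (by omega)]
  · rw [aSeq_rec hm hn k hk]
    have := mul_nonneg (le_of_lt (c_pos (m:=m) (n:=n) hm)) (aSeq_nonneg (m:=m) (n:=n) hm (k-n))
    linarith

lemma aSeq_mono (hm : 2 ≤ m) (hn : 1 ≤ n) : ∀ j k, j ≤ k → aSeq m n k ≤ aSeq m n j := by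
  intro j k hjk
  exact antitone_nat_of_succ_le (aSeq_antitone hm hn) hjk

lemma aSeq_decay (hm : 2 ≤ m) (hn : 1 ≤ n) :
    ∀ k, aSeq m n (n + k) ≤ (1 - ((m:ℝ)-1)/(m:ℝ)^(n+1))^k := by
  intro k
  induction k with
  | zero =>
    simp only [Nat.add_zero, pow_zero]
    calc aSeq m n n ≤ aSeq m n 0 := aSeq_mono hm hn 0 n (Nat.zero_le n)
    _ = 1 := by rw [aSeq]
  | succ k ih =>
    have hrec := aSeq_rec hm hn (n + k) (Nat.le_add_right n k)
    have hnk : n + k - n = k := by omega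
    rw [hnk] at hrec
    have hmono : aSeq m n (n + k) ≤ aSeq m n k := aSeq_mono hm hn k (n+k) (by omega)
    have hc := c_pos (m:=m) (n:=n) hm
    have hc1 := c_lt_one (m:=m) (n:=n) hm
    have h1 : aSeq m n (n + (k+1)) = aSeq m n (n + k) - ((m:ℝ)-1)/(m:ℝ)^(n+1) * aSeq m n k := by
      rw [show n + (k+1) = (n + k) + 1 by omega, hrec]
    rw [h1]
    have hbound : aSeq m n (n+k) - ((m:ℝ)-1)/(m:ℝ)^(n+1) * aSeq m n k
        ≤ (1 - ((m:ℝ)-1)/(m:ℝ)^(n+1)) * aSeq m n (n+k) := by nlinarith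
    calc aSeq m n (n+k) - ((m:ℝ)-1)/(m:ℝ)^(n+1) * aSeq m n k
        ≤ (1 - ((m:ℝ)-1)/(m:ℝ)^(n+1)) * aSeq m n (n+k) := hbound
      _ ≤ (1 - ((m:ℝ)-1)/(m:ℝ)^(n+1)) * (1 - ((m:ℝ)-1)/(m:ℝ)^(n+1))^k := by
          apply mul_le_mul_of_nonneg_left ih (by linarith)
      _ = (1 - ((m:ℝ)-1)/(m:ℝ)^(n+1))^(k+1) := by rw [pow_succ]; ring

lemma aSeq_summable_pow (hm : 2 ≤ m) (hn : 1 ≤ n) (d : ℕ) :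
    Summable (fun k : ℕ => ((k:ℝ))^d * aSeq m n k) := by
  set r : ℝ := 1 - ((m:ℝ)-1)/(m:ℝ)^(n+1) with hr
  have hr0 : 0 ≤ r := by have := c_lt_one (m:=m) (n:=n) hm; simp only [hr]; linarith
  have hr1 : r < 1 := by have := c_pos (m:=m) (n:=n) hm; simp only [hr]; linarith
  have h1 : Summable (fun k : ℕ => ((k:ℝ))^d * r^k) :=
    summable_pow_mul_geometric_of_norm_lt_one d
      (by rw [Real.norm_eq_abs, abs_of_nonneg hr0]; exact hr1)
  have h2 : Summable (fun k : ℕ => (((k+n:ℕ)):ℝ)^d * r^(k+n)) :=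
    (summable_nat_add_iff n).2 h1
  have hrn : (r:ℝ)^n ≠ 0 ∨ True := Or.inr trivial
  have h3 : Summable (fun k : ℕ => (((k+n:ℕ)):ℝ)^d * r^k) := by
    rcases eq_or_ne r 0 with h0 | h0
    · apply (summable_nat_add_iff 1).1
      have : (fun k : ℕ => (((k+1+n:ℕ)):ℝ)^d * r^(k+1)) = (fun k : ℕ => 0) := by
        funext k; rw [h0]; simp
      rw [this]; exact summable_zero
    · have h4 := h2.mul_left ((r^n)⁻¹)
      have : (fun k : ℕ => (r^n)⁻¹ * ((((k+n:ℕ)):ℝ)^d * r^(k+n)))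
          = (fun k : ℕ => (((k+n:ℕ)):ℝ)^d * r^k) := by
        funext k
        rw [pow_add]
        field_simp
      rwa [this] at h4
  have h5 : Summable (fun k : ℕ => (((k+n:ℕ)):ℝ)^d * aSeq m n (k+n)) := by
    apply Summable.of_nonneg_of_le _ _ h3
    · intro k
      exact mul_nonneg (pow_nonneg (Nat.cast_nonneg _) _) (aSeq_nonneg hm _)
    · intro k
      apply mul_le_mul_of_nonneg_left _ (pow_nonneg (Nat.cast_nonneg _) _)
      rw [show k + n = n + k by omega]
      exact aSeq_decay hm hn k
  exact (summable_nat_add_iff n).1 h5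

lemma tsum_shiftR (f : ℕ → ℝ) (hf : Summable f) (N : ℕ) :
    ∑' k, f (k + N) = ∑' k, f k - ∑ i ∈ Finset.range N, f i := by
  have := Summable.sum_add_tsum_nat_add N hf
  linarith

lemma aSeq_E0 (hm : 2 ≤ m) (hn : 1 ≤ n) :
    ((m:ℝ)-1)/(m:ℝ)^(n+1) * (∑' k, aSeq m n k) = aSeq m n n := by
  set c : ℝ := ((m:ℝ)-1)/(m:ℝ)^(n+1) with hc
  have hs0 : Summable (aSeq m n) := by
    have := aSeq_summable_pow hm hn 0
    simpa using this
  have h1 : ∀ k : ℕ, aSeq m n (k + (n+1)) = aSeq m n (k + n) - c * aSeq m n k := by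
    intro k
    have h := aSeq_rec hm hn (k+n) (by omega)
    rw [show k+n-n = k by omega] at h
    rw [show k+(n+1) = k+n+1 by omega, h]
  have hsn : Summable (fun k => aSeq m n (k + n)) := (summable_nat_add_iff n).2 hs0
  have e1 : ∑' k, aSeq m n (k + (n+1)) = ∑' k, aSeq m n k - ∑ i ∈ Finset.range (n+1), aSeq m n i :=
    tsum_shiftR _ hs0 (n+1)
  have e2 : ∑' k, aSeq m n (k + n) = ∑' k, aSeq m n k - ∑ i ∈ Finset.range n, aSeq m n i :=
    tsum_shiftR _ hs0 n
  have e3 : ∑' k, aSeq m n (k + (n+1)) = ∑' k, aSeq m n (k + n) - c * ∑' k, aSeq m n k := by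
    rw [tsum_congr h1, Summable.tsum_sub hsn (hs0.mul_left c), tsum_mul_left]
  have e4 : ∑ i ∈ Finset.range (n+1), aSeq m n i
      = ∑ i ∈ Finset.range n, aSeq m n i + aSeq m n n := Finset.sum_range_succ _ _
  rw [e1, e2, e4] at e3
  linarith

lemma aSeq_E1 (hm : 2 ≤ m) (hn : 1 ≤ n) :
    ((m:ℝ)-1)/(m:ℝ)^(n+1) * (∑' k : ℕ, (k:ℝ) * aSeq m n k)
      = (n:ℝ) * aSeq m n n
        + (1 - ((m:ℝ)-1)/(m:ℝ)^(n+1) * ((n:ℝ)+1)) * (∑' k, aSeq m n k)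
        - ∑ i ∈ Finset.range n, aSeq m n i := by
  set c : ℝ := ((m:ℝ)-1)/(m:ℝ)^(n+1) with hc
  set g : ℕ → ℝ := fun k => (k:ℝ) * aSeq m n k with hg
  have hs0 : Summable (aSeq m n) := by simpa using aSeq_summable_pow hm hn 0
  have hsg : Summable g := by
    have := aSeq_summable_pow hm hn 1
    simpa [hg] using this
  have hsgn : Summable (fun k => g (k + n)) := (summable_nat_add_iff n).2 hsg
  have hsan : Summable (fun k => aSeq m n (k + n)) := (summable_nat_add_iff n).2 hs0
  have h1 : ∀ k : ℕ, aSeq m n (k + (n+1)) = aSeq m n (k + n) - c * aSeq m n k := by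
    intro k
    have h := aSeq_rec hm hn (k+n) (by omega)
    rw [show k+n-n = k by omega] at h
    rw [show k+(n+1) = k+n+1 by omega, h]
  have hpt : ∀ k : ℕ, g (k + (n+1))
      = (g (k+n) + aSeq m n (k+n)) - (c * g k + (c*((n:ℝ)+1)) * aSeq m n k) := by
    intro k
    simp only [hg]
    rw [h1 k]
    push_cast
    ring
  have hx : Summable (fun k => g (k+n) + aSeq m n (k+n)) := hsgn.add hsan
  have hy : Summable (fun k => c * g k + (c*((n:ℝ)+1)) * aSeq m n k) :=
    (hsg.mul_left c).add (hs0.mul_left (c*((n:ℝ)+1)))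
  have e3 : ∑' k, g (k + (n+1))
      = (∑' k, g (k+n) + ∑' k, aSeq m n (k+n))
        - (c * ∑' k, g k + (c*((n:ℝ)+1)) * ∑' k, aSeq m n k) := by
    rw [tsum_congr hpt, Summable.tsum_sub hx hy, Summable.tsum_add hsgn hsan,
      Summable.tsum_add (hsg.mul_left c) (hs0.mul_left (c*((n:ℝ)+1))), tsum_mul_left, tsum_mul_left]
  rw [tsum_shiftR g hsg (n+1), tsum_shiftR g hsg n, tsum_shiftR _ hs0 n,
    Finset.sum_range_succ] at e3
  have hgn : g n = (n:ℝ) * aSeq m n n := rfl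
  rw [hgn] at e3
  linarith

lemma aSeq_E2 (hm : 2 ≤ m) (hn : 1 ≤ n) :
    ((m:ℝ)-1)/(m:ℝ)^(n+1) * (∑' k : ℕ, (k:ℝ)^2 * aSeq m n k)
      = (n:ℝ)^2 * aSeq m n n
        + (2 - 2*(((m:ℝ)-1)/(m:ℝ)^(n+1))*((n:ℝ)+1)) * (∑' k : ℕ, (k:ℝ) * aSeq m n k)
        - 2 * (∑ i ∈ Finset.range n, (i:ℝ) * aSeq m n i)
        + (1 - ((m:ℝ)-1)/(m:ℝ)^(n+1) * ((n:ℝ)+1)^2) * (∑' k, aSeq m n k)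
        - ∑ i ∈ Finset.range n, aSeq m n i := by
  set c : ℝ := ((m:ℝ)-1)/(m:ℝ)^(n+1) with hc
  set g : ℕ → ℝ := fun k => (k:ℝ) * aSeq m n k with hg
  set g2 : ℕ → ℝ := fun k => (k:ℝ)^2 * aSeq m n k with hg2
  have hs0 : Summable (aSeq m n) := by simpa using aSeq_summable_pow hm hn 0
  have hsg : Summable g := by simpa [hg] using aSeq_summable_pow hm hn 1
  have hsg2 : Summable g2 := by simpa [hg2] using aSeq_summable_pow hm hn 2
  have hsgn : Summable (fun k => g (k + n)) := (summable_nat_add_iff n).2 hsg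
  have hsg2n : Summable (fun k => g2 (k + n)) := (summable_nat_add_iff n).2 hsg2
  have hsan : Summable (fun k => aSeq m n (k + n)) := (summable_nat_add_iff n).2 hs0
  have h1 : ∀ k : ℕ, aSeq m n (k + (n+1)) = aSeq m n (k + n) - c * aSeq m n k := by
    intro k
    have h := aSeq_rec hm hn (k+n) (by omega)
    rw [show k+n-n = k by omega] at h
    rw [show k+(n+1) = k+n+1 by omega, h]
  have hpt : ∀ k : ℕ, g2 (k + (n+1))
      = (g2 (k+n) + (2 * g (k+n) + aSeq m n (k+n)))
        - (c * g2 k + ((2*c*((n:ℝ)+1)) * g k + (c*((n:ℝ)+1)^2) * aSeq m n k)) := by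
    intro k
    simp only [hg, hg2]
    rw [h1 k]
    push_cast
    ring
  have hx : Summable (fun k => g2 (k+n) + (2 * g (k+n) + aSeq m n (k+n))) :=
    hsg2n.add ((hsgn.mul_left 2).add hsan)
  have hy : Summable (fun k => c * g2 k + ((2*c*((n:ℝ)+1)) * g k + (c*((n:ℝ)+1)^2) * aSeq m n k)) :=
    (hsg2.mul_left c).add ((hsg.mul_left _).add (hs0.mul_left _))
  have e3 : ∑' k, g2 (k + (n+1))
      = (∑' k, g2 (k+n) + (2 * ∑' k, g (k+n) + ∑' k, aSeq m n (k+n)))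
        - (c * ∑' k, g2 k + ((2*c*((n:ℝ)+1)) * ∑' k, g k + (c*((n:ℝ)+1)^2) * ∑' k, aSeq m n k)) := by
    rw [tsum_congr hpt, Summable.tsum_sub hx hy, Summable.tsum_add hsg2n ((hsgn.mul_left 2).add hsan),
      Summable.tsum_add (hsgn.mul_left 2) hsan,
      Summable.tsum_add (hsg2.mul_left c) ((hsg.mul_left _).add (hs0.mul_left _)),
      Summable.tsum_add (hsg.mul_left _) (hs0.mul_left _),
      tsum_mul_left, tsum_mul_left, tsum_mul_left, tsum_mul_left]
  rw [tsum_shiftR g2 hsg2 (n+1), tsum_shiftR g2 hsg2 n, tsum_shiftR g hsg n,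
    tsum_shiftR _ hs0 n, Finset.sum_range_succ] at e3
  have hgn : g2 n = (n:ℝ)^2 * aSeq m n n := rfl
  rw [hgn] at e3
  linarith

lemma sumIdR (N : ℕ) : ∑ i ∈ Finset.range N, (i:ℝ) = (N:ℝ)*((N:ℝ)-1)/2 := by
  induction N with
  | zero => simp
  | succ N ih => rw [Finset.sum_range_succ, ih]; push_cast; ring

lemma aSeq_sum_range (hm : 2 ≤ m) (hn : 1 ≤ n) :
    ∑ i ∈ Finset.range n, aSeq m n i = 1 + ((n:ℝ)-1)*(((m:ℝ)-1)/m) := by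
  obtain ⟨l, rfl⟩ : ∃ l, n = l + 1 := ⟨n - 1, by omega⟩
  rw [Finset.sum_range_succ']
  have : ∀ j ∈ Finset.range l, aSeq m (l+1) (j+1) = ((m:ℝ)-1)/m := by
    intro j hj
    exact aSeq_small hm (j+1) (by omega) (by rw [Finset.mem_range] at hj; omega)
  rw [Finset.sum_congr rfl this, Finset.sum_const, Finset.card_range]
  have h0 : aSeq m (l+1) 0 = 1 := by rw [aSeq]
  rw [h0]
  push_cast
  ring

lemma aSeq_wsum_range (hm : 2 ≤ m) (hn : 1 ≤ n) :
    ∑ i ∈ Finset.range n, (i:ℝ) * aSeq m n i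
      = (((m:ℝ)-1)/m) * ((n:ℝ)*((n:ℝ)-1)/2) := by
  have : ∀ i ∈ Finset.range n, (i:ℝ) * aSeq m n i = (i:ℝ) * (((m:ℝ)-1)/m) := by
    intro i hi
    rcases Nat.eq_zero_or_pos i with rfl | hi0
    · simp
    · rw [aSeq_small hm i hi0 (by rw [Finset.mem_range] at hi; omega)]
  rw [Finset.sum_congr rfl this, ← Finset.sum_mul, sumIdR]
  ring

lemma aSeq_A0 (hm : 2 ≤ m) (hn : 1 ≤ n) : ∑' k, aSeq m n k = (m:ℝ)^n := by
  have hm0 : (m:ℝ) ≠ 0 := ne_of_gt (mR_pos hm)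
  have hM0 : ((m:ℝ))^n ≠ 0 := pow_ne_zero _ hm0
  have hcne : ((m:ℝ)-1)/(m:ℝ)^(n+1) ≠ 0 := ne_of_gt (c_pos hm)
  apply mul_left_cancel₀ hcne
  rw [aSeq_E0 hm hn, aSeq_small hm n hn le_rfl, pow_succ]
  field_simp

lemma aSeq_A1 (hm : 2 ≤ m) (hn : 1 ≤ n) :
    ∑' k : ℕ, (k:ℝ) * aSeq m n k
      = (m:ℝ)^n * ((m:ℝ)*(m:ℝ)^n - m - n*((m:ℝ)-1))/((m:ℝ)-1) := by
  have hm0 : (m:ℝ) ≠ 0 := ne_of_gt (mR_pos hm)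
  have hm1 : (m:ℝ) - 1 ≠ 0 := by have := mR_two hm; intro h; linarith
  have hM0 : ((m:ℝ))^n ≠ 0 := pow_ne_zero _ hm0
  have hcne : ((m:ℝ)-1)/(m:ℝ)^(n+1) ≠ 0 := ne_of_gt (c_pos hm)
  apply mul_left_cancel₀ hcne
  rw [aSeq_E1 hm hn, aSeq_A0 hm hn, aSeq_small hm n hn le_rfl,
    aSeq_sum_range hm hn, pow_succ]
  field_simp
  ring

lemma aSeq_A2 (hm : 2 ≤ m) (hn : 1 ≤ n) :
    ∑' k : ℕ, (k:ℝ)^2 * aSeq m n k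
      = ((m:ℝ)*(m:ℝ)^n/((m:ℝ)-1)) *
          (2*((m:ℝ)^n * ((m:ℝ)*(m:ℝ)^n - m - n*((m:ℝ)-1))/((m:ℝ)-1))
              *(1-((n:ℝ)+1)*((m:ℝ)-1)/((m:ℝ)*(m:ℝ)^n))
            - ((m:ℝ)-1)*((n:ℝ)^2+2*n)/m + (m:ℝ)^n - 1) := by
  have hm0 : (m:ℝ) ≠ 0 := ne_of_gt (mR_pos hm)
  have hm1 : (m:ℝ) - 1 ≠ 0 := by have := mR_two hm; intro h; linarith
  have hM0 : ((m:ℝ))^n ≠ 0 := pow_ne_zero _ hm0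
  have hcne : ((m:ℝ)-1)/(m:ℝ)^(n+1) ≠ 0 := ne_of_gt (c_pos hm)
  apply mul_left_cancel₀ hcne
  rw [aSeq_E2 hm hn, aSeq_A0 hm hn, aSeq_A1 hm hn, aSeq_small hm n hn le_rfl,
    aSeq_sum_range hm hn, aSeq_wsum_range hm hn, pow_succ]
  field_simp
  ring

lemma W_pow_entry (hm : 2 ≤ m) (hn : 1 ≤ n)
    (A W : Matrix (Fin (n + 1)) (Fin (n + 1)) ℝ)
    (hA : ∀ i j : Fin (n + 1), A i j =
      if (i : ℕ) = 0 then (if (j : ℕ) < n then (m : ℝ) - 1 else 0)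
      else (if (j : ℕ) + 1 = (i : ℕ) then 1 else 0))
    (hW : W = (1 / (m : ℝ)) • A) :
    ∀ (k : ℕ) (i : Fin (n+1)), (W ^ k) i 0
      = if k < (i:ℕ) then 0 else ((1:ℝ)/m)^(i:ℕ) * aSeq m n (k - (i:ℕ)) := by
  intro k
  induction k with
  | zero =>
    intro i
    rw [pow_zero, Matrix.one_apply]
    rcases Nat.eq_zero_or_pos (i:ℕ) with hi | hi
    · have : i = 0 := Fin.ext (by simpa using hi)
      simp only [this, if_pos rfl, hi]
      norm_num [aSeq]
    · have : ¬ (i = 0) := by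
        intro h; rw [h] at hi; simp at hi
      rw [if_neg this, if_pos (by omega)]
  | succ k ih =>
    intro i
    rw [pow_succ', Matrix.mul_apply]
    have hWe : ∀ a b : Fin (n+1), W a b = (1/(m:ℝ)) * A a b := by
      intro a b; rw [hW]; simp [Matrix.smul_apply, smul_eq_mul]
    rcases Nat.eq_zero_or_pos (i:ℕ) with hi | hi
    · -- i = 0 case
      have hsum : ∀ j : Fin (n+1), W i j * (W^k) j 0
          = (1/(m:ℝ)) * (if (j:ℕ) < n then (m:ℝ)-1 else 0)
            * (if k < (j:ℕ) then 0 else ((1:ℝ)/m)^(j:ℕ) * aSeq m n (k - (j:ℕ))) := by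
        intro j
        rw [hWe, hA, if_pos hi, ih j, mul_assoc]
      rw [Finset.sum_congr rfl (fun j _ => hsum j)]
      have hconv : ∑ j : Fin (n+1), ((1/(m:ℝ)) * (if (j:ℕ) < n then (m:ℝ)-1 else 0)
            * (if k < (j:ℕ) then 0 else ((1:ℝ)/m)^(j:ℕ) * aSeq m n (k - (j:ℕ))))
          = ∑ j ∈ Finset.range (n+1), ((1/(m:ℝ)) * (if j < n then (m:ℝ)-1 else 0)
            * (if k < j then 0 else ((1:ℝ)/m)^j * aSeq m n (k - j))) :=
        Fin.sum_univ_eq_sum_range (fun j => ((1/(m:ℝ)) * (if j < n then (m:ℝ)-1 else 0)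
            * (if k < j then 0 else ((1:ℝ)/m)^j * aSeq m n (k - j)))) (n+1)
      rw [hconv]
      have hsub : Finset.range (min (k+1) n) ⊆ Finset.range (n+1) :=
        Finset.range_subset_range.2 (by omega)
      have hzero : ∀ j ∈ Finset.range (n+1), j ∉ Finset.range (min (k+1) n) →
          ((1/(m:ℝ)) * (if j < n then (m:ℝ)-1 else 0)
            * (if k < j then 0 else ((1:ℝ)/m)^j * aSeq m n (k - j))) = 0 := by
        intro j _ hj
        rw [Finset.mem_range] at hj
        rcases lt_or_ge j n with h1 | h1
        · rw [if_pos h1, if_pos (by omega)]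
          ring
        · rw [if_neg (by omega)]
          ring
      rw [← Finset.sum_subset hsub hzero]
      have heach : ∀ j ∈ Finset.range (min (k+1) n),
          ((1/(m:ℝ)) * (if j < n then (m:ℝ)-1 else 0)
            * (if k < j then 0 else ((1:ℝ)/m)^j * aSeq m n (k - j)))
          = ((m:ℝ)-1)/m * (((1:ℝ)/m)^j * aSeq m n (k - j)) := by
        intro j hj
        rw [Finset.mem_range] at hj
        rw [if_pos (by omega), if_neg (by omega)]
        ring
      rw [Finset.sum_congr rfl heach, ← Finset.mul_sum]
      have : (if k + 1 < (i:ℕ) then (0:ℝ) else ((1:ℝ)/m)^(i:ℕ) * aSeq m n (k+1 - (i:ℕ)))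
          = aSeq m n (k+1) := by
        rw [if_neg (by omega), hi]
        norm_num
      rw [this, aSeq]
    · -- i ≥ 1 case
      have hi' : (i:ℕ) - 1 < n + 1 := by omega
      set i' : Fin (n+1) := ⟨(i:ℕ)-1, hi'⟩ with hidef
      have hmain : ∑ j : Fin (n+1), W i j * (W^k) j 0 = W i i' * (W^k) i' 0 := by
        apply Finset.sum_eq_single i'
        · intro j _ hj
          rw [hWe, hA, if_neg (by omega)]
          have : ¬ ((j:ℕ) + 1 = (i:ℕ)) := by
            intro h
            apply hj
            apply Fin.ext
            simp only [hidef]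
            omega
          rw [if_neg this]
          ring
        · intro h
          exact absurd (Finset.mem_univ i') h
      rw [hmain, hWe, hA, if_neg (by omega), if_pos (by simp only [hidef]; omega), ih i']
      simp only [hidef]
      rcases lt_or_ge (k+1) (i:ℕ) with h1 | h1
      · rw [if_pos (by omega), if_pos (by omega)]
        ring
      · rw [if_neg (by omega), if_neg (by omega)]
        have hpow : ((1:ℝ)/m)^((i:ℕ)-1) * ((1:ℝ)/m) = ((1:ℝ)/m)^(i:ℕ) := by
          rw [← pow_succ]
          congr 1
          omega
        have hidx : k - ((i:ℕ)-1) = k + 1 - (i:ℕ) := by omega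
        rw [hidx, ← hpow]
        ring

end main

/-- For integers `m ≥ 2`, `n ≥ 1`, with `A` the `(n+1)×(n+1)` real matrix whose first row is
`(m-1, …, m-1, 0)` and whose row `i ≥ 1` has a single `1` in column `i-1`, and `W = (1/m)·A`,
`(∑ₖ k²·(Wᵏ)_{n,0}) − (∑ₖ k·(Wᵏ)_{n,0})²` equals
`(m/(m−1)²)·(m^{2n+1} − (2n+1)·m^{n+1} + (2n+1)·mⁿ − 1)` (the variance of the string length). -/
theorem stmt_4 (m n : ℕ) (hm : 2 ≤ m) (hn : 1 ≤ n)
    (A W : Matrix (Fin (n + 1)) (Fin (n + 1)) ℝ)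
    (hA : ∀ i j : Fin (n + 1), A i j =
      if (i : ℕ) = 0 then (if (j : ℕ) < n then (m : ℝ) - 1 else 0)
      else (if (j : ℕ) + 1 = (i : ℕ) then 1 else 0))
    (hW : W = (1 / (m : ℝ)) • A) :
    (∑' k : ℕ, (k : ℝ) ^ 2 * (W ^ k) (Fin.last n) 0)
      - (∑' k : ℕ, (k : ℝ) * (W ^ k) (Fin.last n) 0) ^ 2
      = (m : ℝ) / ((m : ℝ) - 1) ^ 2 *
        ((m : ℝ) ^ (2 * n + 1) - (2 * (n : ℝ) + 1) * (m : ℝ) ^ (n + 1)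
          + (2 * (n : ℝ) + 1) * (m : ℝ) ^ n - 1) := by
  have hWp := W_pow_entry hm hn A W hA hW
  have hlast : ((Fin.last n : Fin (n+1)) : ℕ) = n := Fin.val_last n
  have hpk : ∀ k : ℕ, (W ^ k) (Fin.last n) 0
      = if k < n then 0 else ((1:ℝ)/m)^n * aSeq m n (k - n) := by
    intro k
    rw [hWp k (Fin.last n), hlast]
  have hs0 : Summable (aSeq m n) := by simpa using aSeq_summable_pow hm hn 0
  have hs1 : Summable (fun k : ℕ => (k:ℝ) * aSeq m n k) := by
    simpa using aSeq_summable_pow hm hn 1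
  have hs2 : Summable (fun k : ℕ => (k:ℝ)^2 * aSeq m n k) := by
    simpa using aSeq_summable_pow hm hn 2
  set f1 : ℕ → ℝ := fun k => (k:ℝ) * (W ^ k) (Fin.last n) 0 with hf1
  set f2 : ℕ → ℝ := fun k => (k:ℝ)^2 * (W ^ k) (Fin.last n) 0 with hf2
  -- shifted shapes
  have hshape1 : ∀ k : ℕ, f1 (k + n)
      = ((1:ℝ)/m)^n * ((k:ℝ) * aSeq m n k) + ((n:ℝ)*((1:ℝ)/m)^n) * aSeq m n k := by
    intro k
    simp only [hf1]
    rw [hpk (k+n), if_neg (by omega), show k + n - n = k by omega]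
    push_cast
    ring
  have hshape2 : ∀ k : ℕ, f2 (k + n)
      = ((1:ℝ)/m)^n * ((k:ℝ)^2 * aSeq m n k)
        + (2*(n:ℝ)*((1:ℝ)/m)^n) * ((k:ℝ) * aSeq m n k)
        + ((n:ℝ)^2*((1:ℝ)/m)^n) * aSeq m n k := by
    intro k
    simp only [hf2]
    rw [hpk (k+n), if_neg (by omega), show k + n - n = k by omega]
    push_cast
    ring
  have hsf1n : Summable (fun k => f1 (k + n)) := by
    rw [funext hshape1]
    exact (hs1.mul_left _).add (hs0.mul_left _)
  have hsf2n : Summable (fun k => f2 (k + n)) := by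
    rw [funext hshape2]
    exact ((hs2.mul_left _).add (hs1.mul_left _)).add (hs0.mul_left _)
  have hsf1 : Summable f1 := (summable_nat_add_iff n).1 hsf1n
  have hsf2 : Summable f2 := (summable_nat_add_iff n).1 hsf2n
  have hzero1 : ∑ i ∈ Finset.range n, f1 i = 0 := by
    apply Finset.sum_eq_zero
    intro i hi
    rw [Finset.mem_range] at hi
    simp only [hf1]
    rw [hpk i, if_pos hi, mul_zero]
  have hzero2 : ∑ i ∈ Finset.range n, f2 i = 0 := by
    apply Finset.sum_eq_zero
    intro i hi
    rw [Finset.mem_range] at hi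
    simp only [hf2]
    rw [hpk i, if_pos hi, mul_zero]
  have ht1 : ∑' k, f1 k
      = ((1:ℝ)/m)^n * (∑' k : ℕ, (k:ℝ) * aSeq m n k)
        + ((n:ℝ)*((1:ℝ)/m)^n) * (∑' k, aSeq m n k) := by
    rw [← Summable.sum_add_tsum_nat_add n hsf1, hzero1, zero_add, tsum_congr hshape1,
      Summable.tsum_add (hs1.mul_left _) (hs0.mul_left _), tsum_mul_left, tsum_mul_left]
  have ht2 : ∑' k, f2 k
      = ((1:ℝ)/m)^n * (∑' k : ℕ, (k:ℝ)^2 * aSeq m n k)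
        + (2*(n:ℝ)*((1:ℝ)/m)^n) * (∑' k : ℕ, (k:ℝ) * aSeq m n k)
        + ((n:ℝ)^2*((1:ℝ)/m)^n) * (∑' k, aSeq m n k) := by
    rw [← Summable.sum_add_tsum_nat_add n hsf2, hzero2, zero_add, tsum_congr hshape2,
      Summable.tsum_add ((hs2.mul_left _).add (hs1.mul_left _)) (hs0.mul_left _),
      Summable.tsum_add (hs2.mul_left _) (hs1.mul_left _), tsum_mul_left, tsum_mul_left, tsum_mul_left]
  show (∑' k, f2 k) - (∑' k, f1 k)^2 = _
  rw [ht1, ht2, aSeq_A0 hm hn, aSeq_A1 hm hn, aSeq_A2 hm hn]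
  have hm0 : (m:ℝ) ≠ 0 := ne_of_gt (mR_pos hm)
  have hm1 : (m:ℝ) - 1 ≠ 0 := by have := mR_two hm; intro h; linarith
  have hM0 : ((m:ℝ))^n ≠ 0 := pow_ne_zero _ hm0
  have hpinv : ((1:ℝ)/m)^n = 1/(m:ℝ)^n := by rw [div_pow, one_pow]
  have hpow1 : (m:ℝ)^(n+1) = (m:ℝ)^n * m := pow_succ _ _
  have hpow2 : (m:ℝ)^(2*n+1) = ((m:ℝ)^n)^2 * m := by
    rw [pow_succ, two_mul, pow_add]; ring
  rw [hpinv, hpow1, hpow2]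
  field_simp
  ring
end

section
/- Let m ≥ 2 and n ≥ 1 be integers, let W = (1/m)·A with A as below, and let S_{m,n} = ∑_{(a,b)} lcp(a,b), the sum over all ordered pairs (a,b) of lists over Fin m of length at most n of the length of the longest common prefix of a and b. Then (∑_{k=0}^∞ k²·(W^k)_{n,0}) − (∑_{k=0}^∞ k·(W^k)_{n,0})² = (m − 1)·S_{m,n}, i.e. the variance of the number of random letters drawn from an m-letter alphabet until n consecutive occurrences of a fixed letter appear equals (m−1) times the sum of common sub-path lengths over all ordered pairs of nodes of the complete m-ary rooted tree of height n. -/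
open Filter Topology

/-- The longest common prefix of two lists. -/
def lcp {α : Type*} [DecidableEq α] : List α → List α → List α
  | a :: as, b :: bs => if a = b then a :: lcp as bs else []
  | _, _ => []

lemma lcp_nil_left {α : Type*} [DecidableEq α] (b : List α) : lcp [] b = [] := by
  cases b <;> rfl

lemma lcp_nil_right {α : Type*} [DecidableEq α] (a : List α) : lcp a [] = [] := by
  cases a <;> rfl

lemma lcp_cons {α : Type*} [DecidableEq α] (x y : α) (xs ys : List α) :
    lcp (x :: xs) (y :: ys) = if x = y then x :: lcp xs ys else [] := rfl

def treeL (m : ℕ) : ℕ → Finset (List (Fin m))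
  | 0 => {[]}
  | n + 1 => insert [] ((Finset.univ ×ˢ treeL m n).image fun p => p.1 :: p.2)

lemma mem_treeL (m n : ℕ) (l : List (Fin m)) : l ∈ treeL m n ↔ l.length ≤ n := by
  induction n generalizing l with
  | zero =>
    simp [treeL, List.length_eq_zero_iff]
  | succ n ih =>
    simp only [treeL, Finset.mem_insert, Finset.mem_image, Finset.mem_product]
    constructor
    · rintro (rfl | ⟨⟨x, xs⟩, ⟨-, hxs⟩, rfl⟩)
      · simp
      · simpa using (ih xs).1 hxs
    · intro hl
      cases l with
      | nil => exact Or.inl rfl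
      | cons x xs =>
        refine Or.inr ⟨(x, xs), ⟨Finset.mem_univ _, (ih xs).2 ?_⟩, rfl⟩
        simpa using hl

lemma cons_inj_pair (m : ℕ) :
    Function.Injective (fun p : Fin m × List (Fin m) => p.1 :: p.2) := by
  rintro ⟨a, as⟩ ⟨b, bs⟩ h
  simp only [List.cons.injEq] at h
  simp [h.1, h.2]

lemma card_treeL (m : ℕ) (n : ℕ) :
    (treeL m (n + 1)).card = 1 + m * (treeL m n).card := by
  rw [treeL, Finset.card_insert_of_notMem, Finset.card_image_of_injective _ (cons_inj_pair m),
    Finset.card_product]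
  · simp [add_comm, mul_comm]
  · simp

lemma treeS_rec (m : ℕ) (n : ℕ) :
    (∑ a ∈ treeL m (n+1), ∑ b ∈ treeL m (n+1), (lcp a b).length)
      = m * ((∑ a ∈ treeL m n, ∑ b ∈ treeL m n, (lcp a b).length) + (treeL m n).card ^ 2) := by
  have hnil : ([] : List (Fin m)) ∉ (Finset.univ ×ˢ treeL m n).image fun p => p.1 :: p.2 := by
    simp
  rw [treeL, Finset.sum_insert hnil]
  have h1 : ∑ b ∈ insert ([] : List (Fin m))
      ((Finset.univ ×ˢ treeL m n).image fun p => p.1 :: p.2), (lcp [] b).length = 0 := by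
    apply Finset.sum_eq_zero; intro b _; rw [lcp_nil_left]; rfl
  rw [h1, zero_add]
  rw [Finset.sum_image (fun a _ b _ h => cons_inj_pair m h)]
  have h2 : ∀ p : Fin m × List (Fin m),
      (∑ b ∈ insert ([] : List (Fin m))
        ((Finset.univ ×ˢ treeL m n).image fun p => p.1 :: p.2), (lcp (p.1 :: p.2) b).length)
      = ∑ q ∈ Finset.univ ×ˢ treeL m n, (lcp (p.1 :: p.2) (q.1 :: q.2)).length := by
    intro p
    rw [Finset.sum_insert hnil, lcp_nil_right]
    simp only [List.length_nil, zero_add]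
    rw [Finset.sum_image (fun a _ b _ h => cons_inj_pair m h)]
  rw [Finset.sum_congr rfl (fun p _ => h2 p)]
  rw [Finset.sum_product]
  have h3 : ∀ (x : Fin m) (xs : List (Fin m)),
      (∑ q ∈ Finset.univ ×ˢ treeL m n, (lcp (x :: xs) (q.1 :: q.2)).length)
      = ∑ y : Fin m, ∑ ys ∈ treeL m n, (if x = y then (lcp xs ys).length + 1 else 0) := by
    intro x xs
    rw [Finset.sum_product]
    refine Finset.sum_congr rfl fun y _ => Finset.sum_congr rfl fun ys _ => ?_
    rw [lcp_cons]
    split_ifs <;> simp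
  simp only [h3]
  have h4 : ∀ (x : Fin m) (xs : List (Fin m)),
      (∑ y : Fin m, ∑ ys ∈ treeL m n, (if x = y then (lcp xs ys).length + 1 else 0))
      = ∑ ys ∈ treeL m n, ((lcp xs ys).length + 1) := by
    intro x xs
    rw [Finset.sum_comm]
    refine Finset.sum_congr rfl fun ys _ => ?_
    simp
  simp only [h4, Finset.sum_add_distrib, Finset.sum_const, smul_eq_mul, mul_one]
  rw [Finset.sum_comm]
  simp only [Finset.sum_add_distrib, Finset.sum_const, Finset.card_univ, Fintype.card_fin,
    smul_eq_mul]
  rw [Finset.sum_comm]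
  ring

lemma card_treeL_real (m n : ℕ) :
    ((treeL m n).card : ℝ) * ((m : ℝ) - 1) = (m : ℝ) ^ (n + 1) - 1 := by
  induction n with
  | zero => simp [treeL]
  | succ n ih =>
    rw [card_treeL]
    push_cast
    linear_combination (m : ℝ) * ih

lemma treeS_closed (m n : ℕ) :
    ((∑ a ∈ treeL m n, ∑ b ∈ treeL m n, (lcp a b).length : ℕ) : ℝ) * ((m : ℝ) - 1) ^ 3
      = (m : ℝ) ^ (2 * n + 2) - (2 * n + 1) * (m : ℝ) ^ (n + 2)
        + (2 * n + 1) * (m : ℝ) ^ (n + 1) - (m : ℝ) := by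
  induction n with
  | zero =>
    simp [treeL, lcp_nil_left]
  | succ n ih =>
    rw [treeS_rec]
    push_cast
    push_cast at ih
    have hc := card_treeL_real m n
    linear_combination (m : ℝ) * ih
      + (m : ℝ) * ((m : ℝ) - 1) * (((treeL m n).card : ℝ) * ((m : ℝ) - 1)
          + ((m : ℝ) ^ (n + 1) - 1)) * hc


lemma telescope_tsum (g : ℕ → ℝ) (hs : Summable fun k => g k - g (k + 1))
    (h0 : Tendsto g atTop (nhds 0)) : ∑' k, (g k - g (k + 1)) = g 0 := by
  have hps : Tendsto (fun K => ∑ i ∈ Finset.range K, (g i - g (i + 1))) atTop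
      (nhds (∑' k, (g k - g (k + 1)))) := hs.hasSum.tendsto_sum_nat
  have heq : ∀ K, ∑ i ∈ Finset.range K, (g i - g (i + 1)) = g 0 - g K := by
    intro K; exact Finset.sum_range_sub' g K
  rw [funext heq] at hps
  have : Tendsto (fun K => g 0 - g K) atTop (nhds (g 0 - 0)) :=
    (tendsto_const_nhds).sub h0
  rw [sub_zero] at this
  exact tendsto_nhds_unique hps this

lemma moments_calc (n : ℕ) (hn : 1 ≤ n) (q M : ℝ) (hq : 0 < q) (hM : 0 < M)
    (hqM : q * M < 1)
    (u p : ℕ → ℝ)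
    (hu0 : u 0 = 1)
    (hpsmall : ∀ k, k < n → p k = 0)
    (hpn : p n = M)
    (hmass : ∀ k, u (k + 1) = u k - p (k + 1))
    (hprec : ∀ k, p (k + n + 1) = q * M * u k)
    (hunn : ∀ k, 0 ≤ u k)
    (hpnn : ∀ k, 0 ≤ p k) :
    (∑' k : ℕ, (k : ℝ) ^ 2 * p k) - (∑' k : ℕ, (k : ℝ) * p k) ^ 2
      = 2 * ((((1 - M) / (q * M)) - n - 1 + M) / (q * M))
        + (1 - M) / (q * M) - ((1 - M) / (q * M)) ^ 2 := by
  have hqM0 : 0 < q * M := mul_pos hq hM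
  -- u is 1 below n
  have husmall : ∀ k, k < n → u k = 1 := by
    intro k hk
    induction k with
    | zero => exact hu0
    | succ k ih =>
      rw [hmass k, hpsmall _ hk, ih (Nat.lt_of_succ_lt hk), sub_zero]
  have hun : u n = 1 - M := by
    obtain ⟨n', rfl⟩ := Nat.exists_eq_succ_of_ne_zero (show n ≠ 0 by omega)
    rw [hmass n', husmall n' (by omega), hpn]
  -- monotonicity and decay
  have hmono : ∀ j k, j ≤ k → u k ≤ u j := by
    intro j k hjk
    have : ∀ t, u (t + 1) ≤ u t := fun t => by
      rw [hmass t]; linarith [hpnn (t + 1)]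
    exact (antitone_nat_of_succ_le this) hjk
  have hu1 : ∀ k, u k ≤ 1 := fun k => le_trans (hmono 0 k (Nat.zero_le k)) (le_of_eq hu0)
  have hurec : ∀ k, u (k + n + 1) = u (k + n) - q * M * u k := by
    intro k; rw [hmass (k + n), hprec k]
  set r : ℝ := 1 - q * M with hr
  have hr0 : 0 < r := by linarith
  have hr1 : r < 1 := by linarith
  have hdecay : ∀ k, u (k + (n + 1)) ≤ r * u k := by
    intro k
    have h1 : u (k + n) ≤ u k := hmono k (k + n) (Nat.le_add_right _ _)
    have := hurec k
    have hk : k + (n + 1) = k + n + 1 := by omega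
    rw [hk, this, hr]
    nlinarith [hunn k]
  set d : ℕ := n + 1 with hd
  have hgeo : ∀ k, u k ≤ r ^ (k / d) := by
    intro k
    induction k using Nat.strong_induction_on with
    | _ k ih =>
      by_cases hk : k < d
      · rw [Nat.div_eq_of_lt hk, pow_zero]; exact hu1 k
      · push_neg at hk
        have hk2 : k - d + d = k := Nat.sub_add_cancel hk
        have h1 : u k ≤ r * u (k - d) := by
          have := hdecay (k - d); rwa [hk2] at this
        have h2 : u (k - d) ≤ r ^ ((k - d) / d) := ih (k - d) (by omega)
        have h3 : k / d = (k - d) / d + 1 := by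
          rw [Nat.div_eq_sub_div (by omega) hk]
        rw [h3, pow_succ]
        calc u k ≤ r * u (k - d) := h1
          _ ≤ r * r ^ ((k - d) / d) := by nlinarith [hunn (k - d)]
          _ = r ^ ((k - d) / d) * r := by ring
  -- geometric bound via rpow
  set ρ : ℝ := r ^ ((d : ℝ)⁻¹) with hρ
  have hρ0 : 0 < ρ := Real.rpow_pos_of_pos hr0 _
  have hρ1 : ρ < 1 := Real.rpow_lt_one (le_of_lt hr0) hr1 (by positivity)
  have hρd : ρ ^ d = r := by
    rw [hρ, ← Real.rpow_natCast (r ^ ((d:ℝ)⁻¹)) d, ← Real.rpow_mul (le_of_lt hr0)]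
    rw [inv_mul_cancel₀ (by positivity : (d:ℝ) ≠ 0), Real.rpow_one]
  set C : ℝ := (ρ ^ (d - 1))⁻¹ with hC
  have hC0 : 0 < C := by positivity
  have hub : ∀ k, u k ≤ C * ρ ^ k := by
    intro k
    have h1 : u k ≤ r ^ (k / d) := hgeo k
    have h2 : r ^ (k / d) = ρ ^ (d * (k / d)) := by rw [pow_mul, hρd]
    have h3 : ρ ^ (d * (k / d)) * ρ ^ (d - 1) ≤ ρ ^ k := by
      rw [← pow_add]
      apply pow_le_pow_of_le_one (le_of_lt hρ0) (le_of_lt hρ1)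
      have e1 := Nat.div_add_mod k d
      have e2 := Nat.mod_lt k (show 0 < d by omega)
      omega
    have h4 : u k * ρ ^ (d - 1) ≤ ρ ^ k := le_trans (by nlinarith [pow_pos hρ0 (d-1)]) h3
    rw [hC]
    rw [← le_div_iff₀ (pow_pos hρ0 (d-1))] at h4
    calc u k ≤ ρ ^ k / ρ ^ (d - 1) := h4
      _ = (ρ ^ (d-1))⁻¹ * ρ ^ k := by ring
  -- summability
  have Sgeo : Summable (fun k : ℕ => C * ρ ^ k) :=
    (summable_geometric_of_lt_one (le_of_lt hρ0) hρ1).mul_left C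
  have Su0 : Summable u := Summable.of_nonneg_of_le hunn hub Sgeo
  have Sgeo1 : Summable (fun k : ℕ => C * ((k : ℝ) * ρ ^ k)) := by
    have := summable_pow_mul_geometric_of_norm_lt_one 1
      (show ‖ρ‖ < 1 by rwa [Real.norm_eq_abs, abs_of_pos hρ0])
    simpa using this.mul_left C
  have Su1 : Summable (fun k : ℕ => (k : ℝ) * u k) := by
    refine Summable.of_nonneg_of_le
      (fun k => mul_nonneg (Nat.cast_nonneg k) (hunn k)) (fun k => ?_) Sgeo1
    have := mul_le_mul_of_nonneg_left (hub k) (Nat.cast_nonneg (α := ℝ) k)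
    calc (k : ℝ) * u k ≤ (k : ℝ) * (C * ρ ^ k) := this
      _ = C * ((k : ℝ) * ρ ^ k) := by ring
  have Sgeo2 : Summable (fun k : ℕ => C * ((k : ℝ) ^ 2 * ρ ^ k)) := by
    have := summable_pow_mul_geometric_of_norm_lt_one 2
      (show ‖ρ‖ < 1 by rwa [Real.norm_eq_abs, abs_of_pos hρ0])
    exact this.mul_left C
  have Su2 : Summable (fun k : ℕ => (k : ℝ) ^ 2 * u k) := by
    refine Summable.of_nonneg_of_le
      (fun k => mul_nonneg (by positivity) (hunn k)) (fun k => ?_) Sgeo2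
    have := mul_le_mul_of_nonneg_left (hub k) (by positivity : (0:ℝ) ≤ (k : ℝ) ^ 2)
    calc (k : ℝ) ^ 2 * u k ≤ (k : ℝ) ^ 2 * (C * ρ ^ k) := this
      _ = C * ((k : ℝ) ^ 2 * ρ ^ k) := by ring
  have hpu : ∀ k, p (k + 1) = u k - u (k + 1) := by
    intro k; have := hmass k; linarith
  set g : ℕ → ℝ := fun k => (k : ℝ) * u k with hgdef
  set h2 : ℕ → ℝ := fun k => (k : ℝ) ^ 2 * u k with hh2def
  have Sgs : Summable (fun k => g (k + 1)) := (summable_nat_add_iff 1).2 Su1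
  have Sh2s : Summable (fun k => h2 (k + 1)) := (summable_nat_add_iff 1).2 Su2
  set f1 : ℕ → ℝ := fun k => (k : ℝ) * p k with hf1def
  set f2 : ℕ → ℝ := fun k => (k : ℝ) ^ 2 * p k with hf2def
  have hf1 : ∀ k, f1 (k + 1) = (g k - g (k + 1)) + u k := by
    intro k
    simp only [hf1def, hgdef, hpu k]
    push_cast
    ring
  have hf2 : ∀ k, f2 (k + 1) = (h2 k - h2 (k + 1)) + (2 * (k : ℝ) + 1) * u k := by
    intro k
    simp only [hf2def, hh2def, hpu k]
    push_cast
    ring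
  have Sf1succ : Summable (fun k => f1 (k + 1)) := by
    refine (((Su1.add Su0).sub Sgs).congr fun k => ?_)
    rw [hf1 k]; ring
  have Sf2succ : Summable (fun k => f2 (k + 1)) := by
    have S2mid : Summable (fun k : ℕ => (2 * (k : ℝ) + 1) * u k) := by
      refine (((Su1.mul_left 2).add Su0).congr fun k => ?_); ring
    refine (((Su2.sub Sh2s).add S2mid).congr fun k => ?_)
    rw [hf2 k]
  have Sf1 : Summable f1 := (summable_nat_add_iff 1).1 Sf1succ
  have Sf2 : Summable f2 := (summable_nat_add_iff 1).1 Sf2succ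
  -- the key linear equations
  set U : ℝ := ∑' k, u k with hUdef
  set V : ℝ := ∑' k, g k with hVdef
  have B1 : ∑ i ∈ Finset.range n, u i = n := by
    rw [Finset.sum_congr rfl (fun i hi => husmall i (Finset.mem_range.1 hi))]
    simp
  have A1 := Summable.sum_add_tsum_nat_add (f := u) n Su0
  have A2 := Summable.sum_add_tsum_nat_add (f := u) (n + 1) Su0
  have T1 : ∑' k, u (k + n) = U - n := by
    rw [B1] at A1; linarith
  have B2 : ∑ i ∈ Finset.range (n + 1), u i = n + (1 - M) := by
    rw [Finset.sum_range_succ, B1, hun]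
  have T2 : ∑' k, u (k + (n + 1)) = U - n - (1 - M) := by
    rw [B2] at A2; linarith
  have hSun : Summable (fun k => u (k + n)) := (summable_nat_add_iff n).2 Su0
  have hSun1 : Summable (fun k => u (k + (n + 1))) := (summable_nat_add_iff (n + 1)).2 Su0
  have A3 : ∑' k, u (k + (n + 1)) = (∑' k, u (k + n)) - q * M * U := by
    have hpt : ∀ k : ℕ, u (k + (n + 1)) = u (k + n) - q * M * u k := by
      intro k
      have := hurec k
      have e : k + (n + 1) = k + n + 1 := by omega
      rw [e, this]
    rw [tsum_congr hpt, Summable.tsum_sub hSun (Su0.mul_left (q * M)), tsum_mul_left]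
  have hU : q * M * U = 1 - M := by
    rw [T1, T2] at A3; linarith
  -- V equation
  have A1' := Summable.sum_add_tsum_nat_add (f := g) n Su1
  have A2' := Summable.sum_add_tsum_nat_add (f := g) (n + 1) Su1
  have B2' : ∑ i ∈ Finset.range (n + 1), g i = (∑ i ∈ Finset.range n, g i) + n * (1 - M) := by
    rw [Finset.sum_range_succ, hgdef]
    simp only []
    rw [hun]
  have hSgn : Summable (fun k => g (k + n)) := (summable_nat_add_iff n).2 Su1
  have A3' : ∑' k, g (k + (n + 1))
      = (∑' k, g (k + n)) + (U - n) - (q * M * V + ((n : ℝ) + 1) * (q * M * U)) := by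
    have hpt : ∀ k : ℕ, g (k + (n + 1))
        = (g (k + n) + u (k + n)) - q * M * ((k : ℝ) * u k + ((n : ℝ) + 1) * u k) := by
      intro k
      have e : k + (n + 1) = k + n + 1 := by omega
      simp only [hgdef, e, hurec k]
      push_cast
      ring
    have Sa : Summable (fun k => g (k + n) + u (k + n)) := hSgn.add hSun
    have Sb : Summable (fun k : ℕ => q * M * ((k : ℝ) * u k + ((n : ℝ) + 1) * u k)) :=
      (Su1.add (Su0.mul_left _)).mul_left _
    rw [tsum_congr hpt, Summable.tsum_sub Sa Sb, Summable.tsum_add hSgn hSun, T1, tsum_mul_left,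
      Summable.tsum_add Su1 (Su0.mul_left _), tsum_mul_left]
    have hgV : (∑' (k : ℕ), (k : ℝ) * u k) = V := rfl
    have hUU : (∑' (k : ℕ), u k) = U := rfl
    rw [hgV, hUU]
    ring
  have hV : q * M * V = U - n - (1 - M) := by
    rw [B2'] at A2'
    have e1 : ∑' k, g (k + n) = V - ∑ i ∈ Finset.range n, g i := by linarith
    rw [e1] at A3'
    have e2 : ∑' k, g (k + (n + 1)) = V - (∑ i ∈ Finset.range n, g i) - n * (1 - M) := by
      linarith
    rw [e2] at A3'
    linear_combination A3' - ((n : ℝ) + 1) * hU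
  -- telescoping sums
  have tg : Tendsto g atTop (nhds 0) := Su1.tendsto_atTop_zero
  have th2 : Tendsto h2 atTop (nhds 0) := Su2.tendsto_atTop_zero
  have Stel1 : Summable (fun k => g k - g (k + 1)) := by
    refine ((Sf1succ.sub Su0).congr fun k => ?_)
    rw [hf1 k]; ring
  have Stel2 : Summable (fun k => h2 k - h2 (k + 1)) := by
    have S2mid : Summable (fun k : ℕ => (2 * (k : ℝ) + 1) * u k) := by
      refine (((Su1.mul_left 2).add Su0).congr fun k => ?_); ring
    refine ((Sf2succ.sub S2mid).congr fun k => ?_)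
    rw [hf2 k]; ring
  have tel1 : ∑' k, (g k - g (k + 1)) = 0 := by
    rw [telescope_tsum g Stel1 tg]; simp [hgdef]
  have tel2 : ∑' k, (h2 k - h2 (k + 1)) = 0 := by
    rw [telescope_tsum h2 Stel2 th2]; simp [hh2def]
  -- first moment
  have E1 : ∑' k, f1 k = U := by
    rw [Summable.tsum_eq_zero_add Sf1, tsum_congr hf1, Summable.tsum_add Stel1 Su0, tel1]
    simp [hf1def]
    rfl
  -- second moment
  have E2 : ∑' k, f2 k = 2 * V + U := by
    have S2mid : Summable (fun k : ℕ => (2 * (k : ℝ) + 1) * u k) := by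
      refine (((Su1.mul_left 2).add Su0).congr fun k => ?_); ring
    have T2mid : ∑' k : ℕ, (2 * (k : ℝ) + 1) * u k = 2 * V + U := by
      have hpt : ∀ k : ℕ, (2 * (k : ℝ) + 1) * u k = 2 * ((k : ℝ) * u k) + u k := by
        intro k; ring
      have hgV : (∑' (k : ℕ), (k : ℝ) * u k) = V := rfl
      have hUU : (∑' (k : ℕ), u k) = U := rfl
      rw [tsum_congr hpt, Summable.tsum_add (Su1.mul_left 2) Su0, tsum_mul_left, hgV, hUU]
    rw [Summable.tsum_eq_zero_add Sf2, tsum_congr hf2, Summable.tsum_add Stel2 S2mid, tel2, T2mid]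
    simp [hf2def]
  -- conclude
  have hUval : U = (1 - M) / (q * M) := by
    rw [eq_div_iff (ne_of_gt hqM0)]; linarith
  have hVval : V = ((1 - M) / (q * M) - n - 1 + M) / (q * M) := by
    rw [eq_div_iff (ne_of_gt hqM0), ← hUval]; linarith
  calc (∑' k : ℕ, (k : ℝ) ^ 2 * p k) - (∑' k : ℕ, (k : ℝ) * p k) ^ 2
      = (∑' k, f2 k) - (∑' k, f1 k) ^ 2 := rfl
    _ = 2 * V + U - U ^ 2 := by rw [E1, E2]
    _ = _ := by rw [hUval, hVval]


/-- For integers `m ≥ 2`, `n ≥ 1`, with `W = (1/m)·A` the transfer matrix of the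
string-generation process, the variance `∑ₖ k²·(Wᵏ)_{n,0} − (∑ₖ k·(Wᵏ)_{n,0})²` equals
`(m − 1)` times `S_{m,n}`, the sum over all ordered pairs `(a, b)` of lists over `Fin m` of
length at most `n` (the nodes of the complete `m`-ary rooted tree of height `n`) of the length
of the longest common prefix of `a` and `b`. -/
theorem stmt_5 (m n : ℕ) (hm : 2 ≤ m) (hn : 1 ≤ n)
    (A W : Matrix (Fin (n + 1)) (Fin (n + 1)) ℝ)
    (hA : ∀ i j : Fin (n + 1), A i j =
      if (i : ℕ) = 0 then (if (j : ℕ) < n then (m : ℝ) - 1 else 0)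
      else (if (j : ℕ) + 1 = (i : ℕ) then 1 else 0))
    (hW : W = (1 / (m : ℝ)) • A)
    (L : Finset (List (Fin m))) (hL : ∀ l : List (Fin m), l ∈ L ↔ l.length ≤ n)
    (S : ℕ) (hS : S = ∑ a ∈ L, ∑ b ∈ L, (lcp a b).length) :
    (∑' k : ℕ, (k : ℝ) ^ 2 * (W ^ k) (Fin.last n) 0)
      - (∑' k : ℕ, (k : ℝ) * (W ^ k) (Fin.last n) 0) ^ 2
      = ((m : ℝ) - 1) * (S : ℝ) := by
  have hm2 : (2 : ℝ) ≤ (m : ℝ) := by exact_mod_cast hm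
  have hmpos : (0 : ℝ) < m := by linarith
  have hm0 : (m : ℝ) ≠ 0 := ne_of_gt hmpos
  set q : ℝ := ((m : ℝ) - 1) / m with hqdef
  set M : ℝ := (1 / (m : ℝ)) ^ n with hMdef
  set c : ℕ → Fin (n + 1) → ℝ := fun k i => (W ^ k) i 0 with hcdef
  set p : ℕ → ℝ := fun k => c k (Fin.last n) with hpdef
  set u : ℕ → ℝ := fun k => ∑ i : Fin n, c k (Fin.castSucc i) with hudef
  have Wval : ∀ i j, W i j = (1 / (m : ℝ)) * A i j := by
    intro i j; rw [hW]; simp [Matrix.smul_apply]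
  have Wnn : ∀ i j, 0 ≤ W i j := by
    intro i j
    rw [Wval, hA]
    have h1 : (0:ℝ) ≤ (m:ℝ) - 1 := by linarith
    have h2 : (0:ℝ) ≤ 1 / (m:ℝ) := by positivity
    split_ifs <;> nlinarith [mul_nonneg h2 h1]
  have c0 : ∀ i, c 0 i = if i = 0 then 1 else 0 := by
    intro i
    simp [hcdef, Matrix.one_apply]
  have cstep : ∀ k i, c (k + 1) i = ∑ j, W i j * c k j := by
    intro k i
    simp only [hcdef, pow_succ']
    rw [Matrix.mul_apply]
  have cnn : ∀ k i, 0 ≤ c k i := by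
    intro k
    induction k with
    | zero => intro i; rw [c0]; split_ifs <;> norm_num
    | succ k ih =>
      intro i
      rw [cstep]
      exact Finset.sum_nonneg fun j _ => mul_nonneg (Wnn i j) (ih j)
  -- row i ≥ 1 picks up entry i - 1
  have rowi : ∀ k (j : ℕ) (hj : j + 1 < n + 1),
      c (k + 1) ⟨j + 1, hj⟩ = (1 / (m : ℝ)) * c k ⟨j, by omega⟩ := by
    intro k j hj
    rw [cstep]
    rw [Finset.sum_eq_single (⟨j, by omega⟩ : Fin (n + 1))]
    · rw [Wval, hA]
      norm_num
    · intro b _ hb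
      rw [Wval, hA]
      have : ¬ ((b : ℕ) + 1 = j + 1) := by
        intro hcon
        apply hb
        apply Fin.ext
        simpa using hcon
      simp only [this]
      norm_num
    · intro hcon
      exact absurd (Finset.mem_univ _) hcon
  have chain : ∀ (j : ℕ) (hj : j < n + 1) (k : ℕ),
      c (k + j) ⟨j, hj⟩ = (1 / (m : ℝ)) ^ j * c k ⟨0, by omega⟩ := by
    intro j
    induction j with
    | zero => intro hj k; simp
    | succ j ih =>
      intro hj k
      have e : k + (j + 1) = (k + j) + 1 := by omega
      rw [e, rowi (k + j) j hj, ih (by omega) k, pow_succ]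
      ring
  have czero : ∀ (j : ℕ) (hj : j < n + 1) (k : ℕ), k < j → c k ⟨j, hj⟩ = 0 := by
    intro j
    induction j with
    | zero => intro hj k hk; omega
    | succ j ih =>
      intro hj k hk
      cases k with
      | zero =>
        rw [c0]
        have : (⟨j + 1, hj⟩ : Fin (n + 1)) ≠ 0 := by
          intro hcon
          have := congrArg Fin.val hcon
          simp at this
        simp [this]
      | succ k =>
        rw [rowi k j hj, ih (by omega) k (by omega), mul_zero]
  -- row 0
  have row0 : ∀ k, c (k + 1) ⟨0, by omega⟩ = q * u k := by
    intro k
    rw [cstep]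
    rw [Fin.sum_univ_castSucc]
    have hlast : W ⟨0, by omega⟩ (Fin.last n) = 0 := by
      rw [Wval, hA]
      simp
    rw [hlast, zero_mul, add_zero]
    have hterm : ∀ i : Fin n, W ⟨0, by omega⟩ (Fin.castSucc i) * c k (Fin.castSucc i)
        = q * c k (Fin.castSucc i) := by
      intro i
      rw [Wval, hA]
      have h1 : ((Fin.castSucc i : Fin (n+1)) : ℕ) < n := by simp
      simp only [h1, if_true]
      rw [hqdef]; ring
    rw [Finset.sum_congr rfl fun i _ => hterm i, ← Finset.mul_sum]
  -- column sums
  have colsum : ∀ j : Fin (n + 1), (∑ i, W i j) = if (j : ℕ) < n then 1 else 0 := by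
    intro j
    have : (∑ i, W i j) = (1 / (m : ℝ)) * ∑ i, A i j := by
      rw [Finset.mul_sum]
      exact Finset.sum_congr rfl fun i _ => Wval i j
    rw [this, Fin.sum_univ_succ]
    have h0 : A 0 j = if (j : ℕ) < n then (m : ℝ) - 1 else 0 := by
      rw [hA]; norm_num
    have hsucc : ∀ i : Fin n, A i.succ j = if (j : ℕ) + 1 = (i : ℕ) + 1 then 1 else 0 := by
      intro i
      rw [hA]
      have : ((i.succ : Fin (n + 1)) : ℕ) = (i : ℕ) + 1 := rfl
      rw [this]
      simp
    rw [h0, Finset.sum_congr rfl fun i _ => hsucc i]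
    by_cases hj : (j : ℕ) < n
    · rw [if_pos hj, if_pos hj]
      have : (∑ i : Fin n, if (j : ℕ) + 1 = (i : ℕ) + 1 then (1:ℝ) else 0) = 1 := by
        rw [Finset.sum_eq_single (⟨(j : ℕ), hj⟩ : Fin n)]
        · simp
        · intro b _ hb
          have : ¬ ((j : ℕ) + 1 = (b : ℕ) + 1) := by
            intro hcon
            apply hb
            apply Fin.ext
            simp
            omega
          simp [this]
          omega
        · intro hcon; exact absurd (Finset.mem_univ _) hcon
      rw [this]
      field_simp
      ring
    · rw [if_neg hj, if_neg hj]
      have : (∑ i : Fin n, if (j : ℕ) + 1 = (i : ℕ) + 1 then (1:ℝ) else 0) = 0 := by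
        apply Finset.sum_eq_zero
        intro i _
        have : ¬ ((j : ℕ) + 1 = (i : ℕ) + 1) := by
          have := i.isLt
          omega
        simp [this]
        omega
      rw [this]
      ring
  -- mass conservation
  have mass : ∀ k, u (k + 1) = u k - p (k + 1) := by
    intro k
    have htot : (∑ i, c (k + 1) i) = u (k + 1) + p (k + 1) := by
      rw [Fin.sum_univ_castSucc]
    have htot2 : (∑ i, c (k + 1) i) = u k := by
      have h1 : (∑ i, c (k + 1) i) = ∑ j, (∑ i, W i j) * c k j := by
        rw [Finset.sum_congr rfl fun i (_ : i ∈ Finset.univ) => cstep k i, Finset.sum_comm]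
        exact Finset.sum_congr rfl fun j _ => by rw [Finset.sum_mul]
      rw [h1]
      rw [Finset.sum_congr rfl fun j (_ : j ∈ Finset.univ) => by rw [colsum j]]
      rw [Fin.sum_univ_castSucc]
      have hlast : ¬ (((Fin.last n : Fin (n+1)) : ℕ) < n) := by simp
      rw [if_neg hlast, zero_mul, add_zero]
      simp only [hudef]
      refine Finset.sum_congr rfl fun i _ => ?_
      have h1 : ((Fin.castSucc i : Fin (n+1)) : ℕ) < n := by simp
      rw [if_pos h1, one_mul]
    linarith [htot, htot2]
  -- u 0 = 1
  have u0 : u 0 = 1 := by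
    simp only [hudef]
    rw [Finset.sum_eq_single (⟨0, by omega⟩ : Fin n)]
    · rw [c0]
      have : (Fin.castSucc (⟨0, by omega⟩ : Fin n)) = (0 : Fin (n+1)) := by
        apply Fin.ext; simp
      simp [this]
    · intro b _ hb
      rw [c0]
      have : (Fin.castSucc b) ≠ (0 : Fin (n+1)) := by
        intro hcon
        apply hb
        apply Fin.ext
        have := congrArg Fin.val hcon
        simpa using this
      simp [this]
    · intro hcon; exact absurd (Finset.mem_univ _) hcon
  -- p facts
  have hlastfin : (Fin.last n : Fin (n + 1)) = ⟨n, by omega⟩ := rfl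
  have psmall : ∀ k, k < n → p k = 0 := by
    intro k hk
    simp only [hpdef]
    rw [hlastfin]
    exact czero n (by omega) k hk
  have pn : p n = M := by
    simp only [hpdef]
    rw [hlastfin]
    have := chain n (by omega) 0
    rw [zero_add] at this
    rw [this, c0]
    have : (⟨0, by omega⟩ : Fin (n+1)) = 0 := rfl
    simp [this, hMdef]
  have hprec : ∀ k, p (k + n + 1) = q * M * u k := by
    intro k
    simp only [hpdef]
    rw [hlastfin]
    have e : k + n + 1 = (k + 1) + n := by omega
    rw [e, chain n (by omega) (k + 1), row0 k, hMdef]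
    ring
  have unn : ∀ k, 0 ≤ u k := fun k => Finset.sum_nonneg fun i _ => cnn k _
  have pnn : ∀ k, 0 ≤ p k := fun k => cnn k _
  -- parameters
  have hq : 0 < q := div_pos (by linarith) hmpos
  have hM : 0 < M := by rw [hMdef]; positivity
  have hqM : q * M < 1 := by
    have hq1 : q < 1 := by rw [hqdef, div_lt_one hmpos]; linarith
    have hM1 : M ≤ 1 := by
      rw [hMdef]
      apply pow_le_one₀ (by positivity)
      rw [div_le_one hmpos]; linarith
    nlinarith
  have hmain := moments_calc n hn q M hq hM hqM u p u0 psmall pn mass hprec unn pnn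
  -- identify S
  have hLt : L = treeL m n := Finset.ext fun l => by rw [hL, mem_treeL]
  have hm1 : (m : ℝ) - 1 ≠ 0 := by linarith
  have hSR : (S : ℝ) * ((m : ℝ) - 1) ^ 3
      = (m : ℝ) ^ (2 * n + 2) - (2 * n + 1) * (m : ℝ) ^ (n + 2)
        + (2 * n + 1) * (m : ℝ) ^ (n + 1) - (m : ℝ) := by
    rw [hS, hLt]; exact treeS_closed m n
  have hSval : (S : ℝ) = ((m : ℝ) ^ (2 * n + 2) - (2 * n + 1) * (m : ℝ) ^ (n + 2)
        + (2 * n + 1) * (m : ℝ) ^ (n + 1) - (m : ℝ)) / ((m : ℝ) - 1) ^ 3 := by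
    rw [eq_div_iff (pow_ne_zero 3 hm1)]; exact hSR
  show (∑' k : ℕ, (k : ℝ) ^ 2 * p k) - (∑' k : ℕ, (k : ℝ) * p k) ^ 2
      = ((m : ℝ) - 1) * (S : ℝ)
  rw [hmain, hSval, hqdef, hMdef]
  have e1 : (m : ℝ) ^ (2 * n + 2) = ((m : ℝ) ^ n) ^ 2 * (m : ℝ) ^ 2 := by
    rw [pow_add, pow_mul']
  have e2 : (m : ℝ) ^ (n + 2) = (m : ℝ) ^ n * (m : ℝ) ^ 2 := by rw [pow_add]
  have e3 : (m : ℝ) ^ (n + 1) = (m : ℝ) ^ n * (m : ℝ) := by rw [pow_succ]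
  have e4 : (1 / (m : ℝ)) ^ n = ((m : ℝ) ^ n)⁻¹ := by rw [one_div, inv_pow]
  have hx0 : (m : ℝ) ^ n ≠ 0 := pow_ne_zero n hm0
  rw [e1, e2, e3, e4]
  field_simp
  ring
end

section
/- Let n ≥ 1 be an integer and let S_{2,n} = ∑_{(a,b)} lcp(a,b), the sum over all ordered pairs (a,b) of lists over Fin 2 of length at most n of the length of the longest common prefix of a and b. Then S_{2,n} = 4·2^{2n} − (4n+2)·2^n − 2 (the integer sequence A286778). -/
namespace Stmt7Aux

def T : ℕ → Finset (List (Fin 2))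
  | 0 => {[]}
  | n+1 => insert [] ((T n).image (List.cons 0) ∪ (T n).image (List.cons 1))

lemma mem_T : ∀ (n : ℕ) (l : List (Fin 2)), l ∈ T n ↔ l.length ≤ n
  | 0, l => by simp [T, List.length_eq_zero_iff]
  | n+1, [] => by simp [T]
  | n+1, x :: t => by
    simp only [T, Finset.mem_insert, Finset.mem_union, Finset.mem_image]
    constructor
    · rintro (h | ⟨t', ht', h⟩ | ⟨t', ht', h⟩)
      · simp at h
      · obtain ⟨rfl, rfl⟩ := List.cons_eq_cons.mp h
        simpa [Nat.succ_le_succ_iff] using (mem_T n t').mp ht'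
      · obtain ⟨rfl, rfl⟩ := List.cons_eq_cons.mp h
        simpa [Nat.succ_le_succ_iff] using (mem_T n t').mp ht'
    · intro h
      have ht : t ∈ T n := (mem_T n t).mpr (by simpa using h)
      fin_cases x
      · exact Or.inr (Or.inl ⟨t, ht, rfl⟩)
      · exact Or.inr (Or.inr ⟨t, ht, rfl⟩)

lemma sum_T_succ (n : ℕ) (g : List (Fin 2) → ℕ) :
    ∑ l ∈ T (n+1), g l = g [] + (∑ t ∈ T n, g (0 :: t) + ∑ t ∈ T n, g (1 :: t)) := by
  have hnm : ([] : List (Fin 2)) ∉ (T n).image (List.cons 0) ∪ (T n).image (List.cons 1) := by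
    simp
  have hdisj : Disjoint ((T n).image (List.cons 0)) ((T n).image (List.cons 1)) := by
    rw [Finset.disjoint_left]
    rintro a ha hb
    simp only [Finset.mem_image] at ha hb
    obtain ⟨t, _, rfl⟩ := ha
    obtain ⟨t', _, h⟩ := hb
    simp at h
  rw [show T (n+1) = insert [] ((T n).image (List.cons 0) ∪ (T n).image (List.cons 1)) from rfl,
    Finset.sum_insert hnm, Finset.sum_union hdisj,
    Finset.sum_image (fun x _ y _ h => by injection h),
    Finset.sum_image (fun x _ y _ h => by injection h)]

def Ssum (n : ℕ) : ℕ := ∑ a ∈ T n, ∑ b ∈ T n, (lcp a b).length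

lemma card_T (n : ℕ) : ((T n).card : ℤ) = 2 ^ (n+1) - 1 := by
  induction n with
  | zero => simp [T]
  | succ n ih =>
    have h := sum_T_succ n (fun _ => 1)
    simp only [Finset.sum_const, smul_eq_mul, mul_one] at h
    rw [h]
    push_cast
    rw [ih]
    ring

lemma Ssum_succ (n : ℕ) :
    Ssum (n+1) = 2 * Ssum n + 2 * (T n).card ^ 2 := by
  unfold Ssum
  simp only [sum_T_succ]
  simp only [lcp, if_pos rfl, List.length_nil, List.length_cons]
  have h01 : ((0 : Fin 2) = 1) = False := by simp [Fin.ext_iff]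
  have h10 : ((1 : Fin 2) = 0) = False := by simp [Fin.ext_iff]
  simp only [h01, h10, if_false, if_true, eq_self_iff_true, List.length_cons,
    List.length_nil, Finset.sum_add_distrib, Finset.sum_const, smul_eq_mul, mul_zero,
    mul_one, zero_add, add_zero]
  ring

lemma key : ∀ n : ℕ, (Ssum n : ℤ) = 4 * 4 ^ n - (4 * n + 2) * 2 ^ n - 2
  | 0 => by simp [Ssum, T, lcp]
  | n+1 => by
    have h := key n
    have hc := card_T n
    have hs : (Ssum (n+1) : ℤ) = 2 * Ssum n + 2 * ((T n).card : ℤ) ^ 2 := by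
      exact_mod_cast congrArg (Nat.cast : ℕ → ℤ) (Ssum_succ n)
    have h4 : (4 : ℤ) ^ n = 2 ^ n * 2 ^ n := by
      rw [show (4:ℤ) = 2*2 by norm_num, mul_pow]
    rw [hs, h, hc]
    push_cast
    simp only [pow_succ]
    rw [h4]
    ring

end Stmt7Aux

/-- For an integer `n ≥ 1`, the sum `S_{2,n}` over all ordered pairs `(a, b)` of lists over
`Fin 2` of length at most `n` of the length of the longest common prefix of `a` and `b`
satisfies `S_{2,n} = 4·2^{2n} − (4n+2)·2ⁿ − 2` (the integer sequence A286778). -/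
theorem stmt_7 (n : ℕ) (hn : 1 ≤ n)
    (L : Finset (List (Fin 2))) (hL : ∀ l : List (Fin 2), l ∈ L ↔ l.length ≤ n)
    (S : ℕ) (hS : S = ∑ a ∈ L, ∑ b ∈ L, (lcp a b).length) :
    (S : ℤ) = 4 * 2 ^ (2 * n) - (4 * (n : ℤ) + 2) * 2 ^ n - 2 := by
  have hLT : L = Stmt7Aux.T n := Finset.ext (by simp [hL, Stmt7Aux.mem_T])
  have : S = Stmt7Aux.Ssum n := by rw [hS, hLT]; rfl
  rw [this, Stmt7Aux.key n]
  have : (2 : ℤ) ^ (2 * n) = 4 ^ n := by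
    rw [pow_mul]; norm_num
  rw [this]
end

section
/- Let m ≥ 2 and n ≥ 1 be integers, let 1 ≤ d ≤ n, and let c be a list over Fin m of length d. Let Q_c be the set of ordered pairs (a,b) of lists over Fin m of length at most n such that the longest common prefix of a and b equals c. Then (m − 1)·|Q_c| = m^{2(n−d)+1} − 1; equivalently, |Q_c| = 2·C(m,2)·((m^{n−d} − 1)/(m − 1))² + 2·((m^{n−d+1} − 1)/(m − 1) − 1) + 1, where C(m,2) is a binomial coefficient. -/
namespace Stmt8Aux

variable {α : Type*} [DecidableEq α]

theorem lcp_nil_left (b : List α) : lcp [] b = [] := rfl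

theorem lcp_nil_right (a : List α) : lcp a [] = [] := by cases a <;> rfl

theorem lcp_cons (a b : α) (as bs : List α) :
    lcp (a :: as) (b :: bs) = if a = b then a :: lcp as bs else [] := rfl

theorem lcp_append (c a b : List α) : lcp (c ++ a) (c ++ b) = c ++ lcp a b := by
  induction c with
  | nil => rfl
  | cons x xs ih => simp [lcp_cons, ih]

theorem lcp_prefix_left : ∀ a b : List α, lcp a b <+: a
  | [], b => by simp [lcp_nil_left]
  | _ :: _, [] => by simp [lcp_nil_right]
  | a :: as, b :: bs => by
    rw [lcp_cons]
    split
    · obtain ⟨t, ht⟩ := lcp_prefix_left as bs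
      exact ⟨t, by simp [ht]⟩
    · exact List.nil_prefix

theorem lcp_prefix_right : ∀ a b : List α, lcp a b <+: b
  | [], b => by simp [lcp_nil_left]
  | _ :: _, [] => by simp [lcp_nil_right]
  | a :: as, b :: bs => by
    rw [lcp_cons]
    split
    · obtain ⟨t, ht⟩ := lcp_prefix_right as bs
      rename_i h
      exact ⟨t, by simp [ht, h]⟩
    · exact List.nil_prefix

theorem lcp_ne_nil {a b : List α} (h : lcp a b ≠ []) :
    ∃ x as bs, a = x :: as ∧ b = x :: bs := by
  match a, b with
  | [], b => exact absurd (lcp_nil_left b) h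
  | x :: as, [] => exact absurd (lcp_nil_right _) h
  | x :: as, y :: bs =>
    rw [lcp_cons] at h
    split at h
    · rename_i heq; exact ⟨x, as, bs, rfl, by rw [heq]⟩
    · exact absurd rfl h

/-- Lists over `Fin m` of length at most `k`, as a `Finset`. -/
def Lb (m : ℕ) : ℕ → Finset (List (Fin m))
  | 0 => {[]}
  | k + 1 => insert [] ((Finset.univ ×ˢ Lb m k).image fun p => p.1 :: p.2)

theorem mem_Lb (m k : ℕ) (l : List (Fin m)) : l ∈ Lb m k ↔ l.length ≤ k := by
  induction k generalizing l with
  | zero => cases l <;> simp [Lb]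
  | succ k ih =>
    cases l with
    | nil => simp [Lb]
    | cons x xs => simp [Lb, ih, Nat.succ_le_succ_iff]

theorem cons_inj (m : ℕ) :
    Function.Injective (fun p : Fin m × List (Fin m) => p.1 :: p.2) := by
  rintro ⟨x, a⟩ ⟨y, b⟩ h
  simp only [List.cons.injEq] at h
  exact Prod.ext h.1 h.2

theorem sum_shift (m k : ℕ) :
    ∑ i ∈ Finset.range (k + 1), m ^ i = m * (∑ i ∈ Finset.range k, m ^ i) + 1 := by
  rw [Finset.sum_range_succ']
  simp only [pow_succ, pow_zero]
  rw [← Finset.sum_mul, mul_comm]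

theorem card_Lb (m k : ℕ) : (Lb m k).card = ∑ i ∈ Finset.range (k + 1), m ^ i := by
  induction k with
  | zero => simp [Lb]
  | succ k ih =>
    rw [sum_shift, ← ih]
    show (insert [] ((Finset.univ ×ˢ Lb m k).image fun p => p.1 :: p.2)).card = _
    rw [Finset.card_insert_of_notMem (by simp), Finset.card_image_of_injective _ (cons_inj m),
      Finset.card_product]
    simp [mul_comm]

theorem geom (e : ℕ) : ∀ k, e * (∑ i ∈ Finset.range k, (e + 1) ^ i) + 1 = (e + 1) ^ k
  | 0 => by simp
  | k + 1 => by
    rw [Finset.sum_range_succ, pow_succ, Nat.mul_add]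
    calc e * ∑ i ∈ Finset.range k, (e + 1) ^ i + e * (e + 1) ^ k + 1
        = (e * ∑ i ∈ Finset.range k, (e + 1) ^ i + 1) + e * (e + 1) ^ k := by ring
      _ = (e + 1) ^ k + e * (e + 1) ^ k := by rw [geom e k]
      _ = (e + 1) ^ k * (e + 1) := by ring

theorem card_P (m K : ℕ) (hm : 2 ≤ m) :
    (((Lb m K) ×ˢ (Lb m K)).filter (fun p => lcp p.1 p.2 = ([] : List (Fin m)))).card
      = m * (m - 1) * (∑ i ∈ Finset.range K, m ^ i) ^ 2
        + 2 * m * (∑ i ∈ Finset.range K, m ^ i) + 1 := by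
  cases K with
  | zero =>
    simp [Lb, Finset.filter_singleton, lcp_nil_left]
  | succ k =>
    set s : ℕ := ∑ i ∈ Finset.range (k + 1), m ^ i with hs
    have hcard : (Lb m (k + 1)).card = m * s + 1 := by
      rw [card_Lb, sum_shift, ← hs]
    -- complement set
    have hR : ((Lb m (k + 1)) ×ˢ (Lb m (k + 1))).filter
          (fun p => ¬ lcp p.1 p.2 = ([] : List (Fin m)))
        = ((Finset.univ ×ˢ (Lb m k ×ˢ Lb m k)).image
            fun q : Fin m × (List (Fin m) × List (Fin m)) => (q.1 :: q.2.1, q.1 :: q.2.2)) := by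
      ext p
      simp only [Finset.mem_filter, Finset.mem_product, mem_Lb, Finset.mem_image,
        Finset.mem_univ, true_and]
      constructor
      · rintro ⟨⟨h1, h2⟩, h3⟩
        obtain ⟨x, as, bs, ha, hb⟩ := lcp_ne_nil h3
        refine ⟨(x, (as, bs)), ⟨?_, ?_⟩, ?_⟩
        · rw [ha] at h1; simpa using h1
        · rw [hb] at h2; simpa using h2
        · rw [← ha, ← hb]
      · rintro ⟨⟨x, a, b⟩, ⟨h1, h2⟩, rfl⟩
        refine ⟨⟨by simpa using h1, by simpa using h2⟩, ?_⟩
        simp [lcp_cons]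
    have hRinj : Function.Injective
        (fun q : Fin m × (List (Fin m) × List (Fin m)) => (q.1 :: q.2.1, q.1 :: q.2.2)) := by
      rintro ⟨x, a, b⟩ ⟨y, a', b'⟩ h
      simp only [Prod.mk.injEq, List.cons.injEq] at h
      obtain ⟨⟨h1, h2⟩, h3, h4⟩ := h
      simp [h1, h2, h4]
    have hRcard : (((Lb m (k + 1)) ×ˢ (Lb m (k + 1))).filter
          (fun p => ¬ lcp p.1 p.2 = ([] : List (Fin m)))).card = m * s ^ 2 := by
      rw [hR, Finset.card_image_of_injective _ hRinj, Finset.card_product,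
        Finset.card_product, Finset.card_univ, Fintype.card_fin, card_Lb, ← hs]
      ring
    have hsum := Finset.card_filter_add_card_filter_not
      (s := (Lb m (k + 1)) ×ˢ (Lb m (k + 1)))
      (p := fun p => lcp p.1 p.2 = ([] : List (Fin m)))
    rw [hRcard, Finset.card_product, hcard] at hsum
    have key : m * (m - 1) * s ^ 2 + 2 * m * s + 1 + m * s ^ 2 = (m * s + 1) * (m * s + 1) := by
      obtain ⟨e, rfl⟩ : ∃ e, m = e + 1 := ⟨m - 1, by omega⟩
      simp only [Nat.add_sub_cancel]
      ring
    exact Nat.add_right_cancel (hsum.trans key.symm)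

end Stmt8Aux

open Stmt8Aux in
/-- For integers `m ≥ 2`, `n ≥ 1`, `1 ≤ d ≤ n` and a list `c` over `Fin m` of length `d`
(a node of the complete `m`-ary rooted tree of height `n` at depth `d`), the set `Q_c` of
ordered pairs `(a, b)` of lists over `Fin m` of length at most `n` whose longest common prefix
equals `c` satisfies `(m − 1)·|Q_c| = m^{2(n−d)+1} − 1`; equivalently,
`|Q_c| = 2·C(m,2)·((m^{n−d} − 1)/(m − 1))² + 2·((m^{n−d+1} − 1)/(m − 1) − 1) + 1`. -/
theorem stmt_8 (m n d : ℕ) (hm : 2 ≤ m) (hn : 1 ≤ n) (hd : 1 ≤ d) (hdn : d ≤ n)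
    (c : List (Fin m)) (hc : c.length = d)
    (L : Finset (List (Fin m))) (hL : ∀ l : List (Fin m), l ∈ L ↔ l.length ≤ n)
    (Q : Finset (List (Fin m) × List (Fin m)))
    (hQ : Q = (L ×ˢ L).filter (fun p => lcp p.1 p.2 = c)) :
    (m - 1) * Q.card = m ^ (2 * (n - d) + 1) - 1 ∧
    Q.card = 2 * Nat.choose m 2 * ((m ^ (n - d) - 1) / (m - 1)) ^ 2
      + 2 * ((m ^ (n - d + 1) - 1) / (m - 1) - 1) + 1 := by
  have hm1 : m - 1 + 1 = m := by omega
  -- the set of pairs of "tails"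
  have hQP : Q = (((Lb m (n - d)) ×ˢ (Lb m (n - d))).filter
      (fun p => lcp p.1 p.2 = ([] : List (Fin m)))).image
        (fun p => (c ++ p.1, c ++ p.2)) := by
    ext p
    simp only [hQ, Finset.mem_filter, Finset.mem_product, Finset.mem_image, hL, mem_Lb]
    constructor
    · rintro ⟨⟨h1, h2⟩, h3⟩
      obtain ⟨a', ha⟩ : c <+: p.1 := h3 ▸ lcp_prefix_left p.1 p.2
      obtain ⟨b', hb⟩ : c <+: p.2 := h3 ▸ lcp_prefix_right p.1 p.2
      have hlen1 : a'.length ≤ n - d := by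
        have := congrArg List.length ha
        simp [hc] at this
        omega
      have hlen2 : b'.length ≤ n - d := by
        have := congrArg List.length hb
        simp [hc] at this
        omega
      have hnil : lcp a' b' = [] := by
        apply List.append_cancel_left (as := c)
        rw [← lcp_append, ha, hb, h3, List.append_nil]
      exact ⟨(a', b'), ⟨⟨hlen1, hlen2⟩, hnil⟩, Prod.ext ha hb⟩
    · rintro ⟨⟨a', b'⟩, ⟨⟨h1, h2⟩, h3⟩, rfl⟩
      have h1' : a'.length ≤ n - d := h1
      have h2' : b'.length ≤ n - d := h2
      refine ⟨⟨?_, ?_⟩, ?_⟩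
      · simp only [List.length_append, hc]; omega
      · simp only [List.length_append, hc]; omega
      · simp [lcp_append, h3]
  have hginj : Function.Injective
      (fun p : List (Fin m) × List (Fin m) => (c ++ p.1, c ++ p.2)) := by
    rintro ⟨a, b⟩ ⟨a', b'⟩ h
    simp only [Prod.mk.injEq] at h
    exact Prod.ext (List.append_cancel_left h.1) (List.append_cancel_left h.2)
  set t : ℕ := ∑ i ∈ Finset.range (n - d), m ^ i with ht
  have Qcard : Q.card = m * (m - 1) * t ^ 2 + 2 * m * t + 1 := by
    rw [hQP, Finset.card_image_of_injective _ hginj, card_P m (n - d) hm]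
  have f1 : (m - 1) * t + 1 = m ^ (n - d) := by
    have := geom (m - 1) (n - d)
    rwa [hm1] at this
  have f2 : (m - 1) * (m * t + 1) + 1 = m ^ (n - d + 1) := by
    have := geom (m - 1) (n - d + 1)
    rw [hm1] at this
    rwa [sum_shift] at this
  constructor
  · have h : (m - 1) * Q.card + 1 = m ^ (2 * (n - d) + 1) := by
      have h2 : m ^ (2 * (n - d) + 1) = ((m - 1) * t + 1) ^ 2 * m := by
        rw [f1, ← pow_mul, ← pow_succ, Nat.mul_comm (n - d) 2]
      rw [h2, Qcard]
      obtain ⟨e, rfl⟩ : ∃ e, m = e + 1 := ⟨m - 1, by omega⟩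
      simp only [Nat.add_sub_cancel]
      ring
    exact Nat.eq_sub_of_add_eq h
  · have hdiv1 : (m ^ (n - d) - 1) / (m - 1) = t := by
      rw [← f1, Nat.add_sub_cancel, Nat.mul_div_cancel_left _ (by omega : 0 < m - 1)]
    have hdiv2 : (m ^ (n - d + 1) - 1) / (m - 1) = m * t + 1 := by
      rw [← f2, Nat.add_sub_cancel, Nat.mul_div_cancel_left _ (by omega : 0 < m - 1)]
    have hchoose : 2 * Nat.choose m 2 = m * (m - 1) := by
      rw [Nat.choose_two_right]
      apply Nat.mul_div_cancel'
      obtain ⟨e, rfl⟩ : ∃ e, m = e + 1 := ⟨m - 1, by omega⟩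
      simp only [Nat.add_sub_cancel]
      rw [mul_comm]
      exact (Nat.even_mul_succ_self e).two_dvd
    rw [Qcard, hdiv1, hdiv2, Nat.add_sub_cancel, ← hchoose]
    ring
end

section
/- Let m ≥ 2 and n ≥ 1 be integers and let z be a complex number satisfying z^n·(m − z) = m − 1. Then |z| < m (the absolute value of z is strictly less than m). -/
/-- For integers `m ≥ 2`, `n ≥ 1`, every complex number `z` with `zⁿ·(m − z) = m − 1`
satisfies `|z| < m`. -/
theorem stmt_12 (m n : ℕ) (hm : 2 ≤ m) (hn : 1 ≤ n) (z : ℂ)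
    (hz : z ^ n * ((m : ℂ) - z) = (m : ℂ) - 1) :
    ‖z‖ < m := by
  by_contra h
  push_neg at h
  set r := ‖z‖ with hr
  have hm1 : (2:ℝ) ≤ (m:ℝ) := by exact_mod_cast hm
  have hrm : (m:ℝ) ≤ r := h
  have hz1 : z ≠ 1 := by
    intro e
    rw [e] at hr
    simp at hr
    rw [hr] at hrm
    linarith
  have key : (z ^ n - ((m:ℂ)-1) * ∑ j ∈ Finset.range n, z ^ j) * (z - 1) = 0 := by
    linear_combination (-1:ℂ) * hz - ((m:ℂ)-1) * geom_sum_mul z n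
  have hzn : z ^ n = ((m:ℂ)-1) * ∑ j ∈ Finset.range n, z ^ j := by
    rcases mul_eq_zero.mp key with h1 | h2
    · exact sub_eq_zero.mp h1
    · exact absurd (sub_eq_zero.mp h2) hz1
  have hmabs : ‖((m:ℂ)-1)‖ = (m:ℝ)-1 := by
    have : ((m:ℂ)-1) = (((m:ℝ)-1 : ℝ) : ℂ) := by push_cast; ring
    rw [this, Complex.norm_real, Real.norm_eq_abs, abs_of_nonneg (by linarith)]
  have hsum : ‖∑ j ∈ Finset.range n, z ^ j‖ ≤ ∑ j ∈ Finset.range n, r ^ j := by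
    calc ‖∑ j ∈ Finset.range n, z ^ j‖
        ≤ ∑ j ∈ Finset.range n, ‖z ^ j‖ :=
          norm_sum_le _ _
      _ = ∑ j ∈ Finset.range n, r ^ j := by simp [norm_pow, hr]
  have habs : r ^ n ≤ ((m:ℝ)-1) * ∑ j ∈ Finset.range n, r ^ j := by
    calc r ^ n = ‖z ^ n‖ := (norm_pow z n).symm
      _ = ‖((m:ℂ)-1)‖ * ‖∑ j ∈ Finset.range n, z ^ j‖ := by
          rw [hzn, norm_mul]
      _ ≤ ((m:ℝ)-1) * ∑ j ∈ Finset.range n, r ^ j := by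
          rw [hmabs]
          exact mul_le_mul_of_nonneg_left hsum (by linarith)
  have hS0 : (0:ℝ) ≤ ∑ j ∈ Finset.range n, r ^ j :=
    Finset.sum_nonneg fun j _ => pow_nonneg (norm_nonneg z) j
  have h2 : ((m:ℝ)-1) * ∑ j ∈ Finset.range n, r ^ j ≤ (∑ j ∈ Finset.range n, r ^ j) * (r - 1) := by
    rw [mul_comm]
    exact mul_le_mul_of_nonneg_left (by linarith) hS0
  have h3 : (∑ j ∈ Finset.range n, r ^ j) * (r - 1) = r ^ n - 1 := geom_sum_mul r n
  linarith
end

section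
/- Let m ≥ 2 and n ≥ 1 be integers, let A be the (n+1)×(n+1) complex matrix with A 0 j = m−1 for 0 ≤ j ≤ n−1, A 0 n = 0, and for 1 ≤ i ≤ n: A i j = 1 if j = i−1 and 0 otherwise, and let W = (1/m)·A. Then the spectral radius of W is strictly less than 1. -/
open Finset

lemma aux_eig_bound (m n : ℕ) (hm : 2 ≤ m) (hn : 1 ≤ n)
    (A : Matrix (Fin (n + 1)) (Fin (n + 1)) ℂ)
    (hA : ∀ i j : Fin (n + 1), A i j =
      if (i : ℕ) = 0 then (if (j : ℕ) < n then (m : ℂ) - 1 else 0)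
      else (if (j : ℕ) + 1 = (i : ℕ) then 1 else 0))
    (μ : ℂ) (hμ : μ ∈ spectrum ℂ ((1 / (m : ℂ)) • A)) :
    ‖μ‖₊ < 1 := by
  set W : Matrix (Fin (n + 1)) (Fin (n + 1)) ℂ := (1 / (m : ℂ)) • A with hWdef
  by_contra hge
  push_neg at hge
  have habs : (1 : ℝ) ≤ ‖μ‖ := by
    have := hge
    rw [← NNReal.coe_le_coe] at this
    simpa using this
  have hm0 : (m : ℝ) ≠ 0 := by positivity
  have hm1R : (1:ℝ) ≤ (m:ℝ) := by exact_mod_cast le_trans one_le_two hm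
  have hm0' : (0 : ℝ) < (m : ℝ) := by positivity
  have hmc : (m : ℂ) ≠ 0 := by exact_mod_cast hm0
  -- obtain an eigenvector
  rw [spectrum.mem_iff] at hμ
  have hdet : (algebraMap ℂ (Matrix (Fin (n + 1)) (Fin (n + 1)) ℂ) μ - W).det = 0 := by
    by_contra h
    exact hμ ((Matrix.isUnit_iff_isUnit_det _).mpr (isUnit_iff_ne_zero.mpr h))
  obtain ⟨v, hv0, hveq⟩ := (Matrix.exists_mulVec_eq_zero_iff).mpr hdet
  have heig : ∀ i, ∑ j, W i j * v j = μ * v i := by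
    intro i
    have h1 : (algebraMap ℂ (Matrix (Fin (n + 1)) (Fin (n + 1)) ℂ) μ - W).mulVec v = 0 := hveq
    rw [Matrix.sub_mulVec] at h1
    have h2 : (algebraMap ℂ (Matrix (Fin (n + 1)) (Fin (n + 1)) ℂ) μ).mulVec v = μ • v := by
      rw [Algebra.algebraMap_eq_smul_one, Matrix.smul_mulVec, Matrix.one_mulVec]
    rw [h2, sub_eq_zero] at h1
    have := congrFun h1.symm i
    simpa [Matrix.mulVec, dotProduct, Pi.smul_apply, smul_eq_mul] using this
  -- the recurrence rows
  have hrow : ∀ k : Fin n, μ * v k.succ = (1 / (m : ℂ)) * v k.castSucc := by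
    intro k
    rw [← heig k.succ]
    have hterm : ∀ j : Fin (n + 1),
        W k.succ j * v j = if j = k.castSucc then (1 / (m : ℂ)) * v j else 0 := by
      intro j
      have hks : ((k.succ : Fin (n + 1)) : ℕ) = (k : ℕ) + 1 := rfl
      have hA' : A k.succ j = if (j : ℕ) + 1 = (k : ℕ) + 1 then 1 else 0 := by
        rw [hA]; simp [hks]
      by_cases hj : j = k.castSucc
      · subst hj
        simp [hWdef, Matrix.smul_apply, hA', smul_eq_mul]
      · have hne : ¬((j : ℕ) + 1 = (k : ℕ) + 1) := by
          intro h
          exact hj (Fin.ext (by simpa using Nat.succ_injective h))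
        simp [hWdef, Matrix.smul_apply, hA', hne, hj]
        intro h; exact (hne (by omega)).elim
    rw [Finset.sum_congr rfl (fun j _ => hterm j), Finset.sum_ite_eq' Finset.univ k.castSucc]
    simp
  -- row 0
  have hrow0 : μ * v 0 = ∑ j : Fin (n + 1),
      (if (j : ℕ) < n then (((m : ℂ) - 1) / m) * v j else 0) := by
    rw [← heig 0]
    refine Finset.sum_congr rfl (fun j _ => ?_)
    have hA' : A 0 j = if (j : ℕ) < n then (m : ℂ) - 1 else 0 := by rw [hA]; simp
    by_cases hj : (j : ℕ) < n
    · rw [hWdef]; simp only [Matrix.smul_apply, hA', hj, if_true, smul_eq_mul]; ring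
    · rw [hWdef]; simp [Matrix.smul_apply, hA', hj]
  set a : ℝ := ‖v 0‖ with ha
  -- decay along the chain
  have hbound : ∀ j : Fin (n + 1), ‖v j‖ ≤ a / (m : ℝ) ^ (j : ℕ) := by
    intro j
    induction j using Fin.induction with
    | zero => simp [ha]
    | succ k ih =>
      have h1 : ‖μ‖ * ‖v k.succ‖
          = (1 / (m : ℝ)) * ‖v k.castSucc‖ := by
        have := congrArg (‖·‖) (hrow k)
        simpa [map_mul, map_div₀, Complex.norm_natCast] using this
      have h2 : ‖v k.succ‖ ≤ ‖μ‖ * ‖v k.succ‖ := by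
        nlinarith [norm_nonneg (v k.succ)]
      have h3 : (1 / (m : ℝ)) * ‖v k.castSucc‖
          ≤ (1 / (m : ℝ)) * (a / (m : ℝ) ^ (k : ℕ)) := by
        rw [Fin.coe_castSucc] at ih
        have hpos : (0:ℝ) ≤ 1 / (m:ℝ) := by positivity
        exact mul_le_mul_of_nonneg_left ih hpos
      have : ‖v k.succ‖ ≤ (1 / (m : ℝ)) * (a / (m : ℝ) ^ (k : ℕ)) :=
        h2.trans (h1.le.trans h3)
      calc ‖v k.succ‖ ≤ (1 / (m : ℝ)) * (a / (m : ℝ) ^ (k : ℕ)) := this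
        _ = a / (m : ℝ) ^ ((k : ℕ) + 1) := by rw [pow_succ]; ring
        _ = a / (m : ℝ) ^ ((k.succ : Fin (n + 1)) : ℕ) := rfl
  -- bound row 0
  have hsum : a ≤ a * (1 - (1 / (m : ℝ)) ^ n) := by
    have hstep : ‖μ * v 0‖ ≤ ∑ j : Fin (n + 1),
        (if (j : ℕ) < n then (((m : ℝ) - 1) / m) * (a / (m : ℝ) ^ (j : ℕ)) else 0) := by
      rw [hrow0]
      refine (norm_sum_le _ _).trans (Finset.sum_le_sum fun j _ => ?_)
      · 
        by_cases hj : (j : ℕ) < n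
        · simp only [hj, if_true]
          rw [norm_mul, norm_div, Complex.norm_natCast]
          have h1 : ‖(m : ℂ) - 1‖ = (m : ℝ) - 1 := by
            have h2 : ((m : ℂ) - 1) = (((m : ℝ) - 1 : ℝ) : ℂ) := by push_cast; ring
            rw [h2, Complex.norm_real, Real.norm_eq_abs, abs_of_nonneg (by linarith)]
          rw [h1]
          exact mul_le_mul_of_nonneg_left (hbound j) (div_nonneg (by linarith) hm0'.le)
        · simp [hj]
    have hval : ∑ j : Fin (n + 1),
        (if (j : ℕ) < n then (((m : ℝ) - 1) / m) * (a / (m : ℝ) ^ (j : ℕ)) else 0)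
        = a * (1 - (1 / (m : ℝ)) ^ n) := by
      rw [Fin.sum_univ_castSucc]
      simp only [Fin.coe_castSucc, Fin.val_last, lt_irrefl, if_false, add_zero]
      have : ∀ j : Fin n, (if (j : ℕ) < n then (((m : ℝ) - 1) / m) * (a / (m : ℝ) ^ (j : ℕ)) else 0)
          = (((m : ℝ) - 1) / m) * a * (1 / (m : ℝ)) ^ (j : ℕ) := by
        intro j
        simp only [j.isLt, if_true]
        field_simp
        rw [one_div_pow, mul_assoc _ ((m:ℝ)^(j:ℕ)), mul_one_div_cancel (pow_ne_zero _ hm0), mul_one]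
      rw [Finset.sum_congr rfl (fun j _ => this j)]
      rw [← Finset.mul_sum, Fin.sum_univ_eq_sum_range (fun j => (1 / (m : ℝ)) ^ j)]
      have hgs := geom_sum_mul (1 / (m : ℝ)) n
      have hone : ((m : ℝ) - 1) / m = 1 - 1 / m := by field_simp
      have hkey : (1 - 1 / (m : ℝ)) * (∑ i ∈ Finset.range n, (1 / (m : ℝ)) ^ i)
          = 1 - (1 / (m : ℝ)) ^ n := by linear_combination (-1 : ℝ) * hgs
      rw [hone]
      calc (1 - 1 / (m : ℝ)) * a * (∑ i ∈ Finset.range n, (1 / (m : ℝ)) ^ i)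
          = a * ((1 - 1 / (m : ℝ)) * (∑ i ∈ Finset.range n, (1 / (m : ℝ)) ^ i)) := by ring
        _ = a * (1 - (1 / (m : ℝ)) ^ n) := by rw [hkey]
    have h0 : a ≤ ‖μ * v 0‖ := by
      rw [norm_mul]
      nlinarith [norm_nonneg (v 0)]
    linarith [hstep.trans hval.le, h0]
  have hp : (0:ℝ) < (1 / (m : ℝ)) ^ n := by positivity
  have ha0 : a = 0 := by
    have h1 : a ≤ 0 := by nlinarith [norm_nonneg (v 0)]
    exact le_antisymm h1 (norm_nonneg (v 0))
  -- then v = 0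
  apply hv0
  funext j
  have := hbound j
  rw [ha0] at this
  have hz : ‖v j‖ ≤ 0 := by
    simpa using this
  exact norm_eq_zero.mp (le_antisymm hz (norm_nonneg _))

/-- For integers `m ≥ 2`, `n ≥ 1`, with `A` the `(n+1)×(n+1)` complex matrix whose first row is
`(m-1, …, m-1, 0)` and whose row `i ≥ 1` has a single `1` in column `i-1`, and `W = (1/m)·A`,
the spectral radius of `W` is strictly less than `1`. -/
theorem stmt_13 (m n : ℕ) (hm : 2 ≤ m) (hn : 1 ≤ n)
    (A W : Matrix (Fin (n + 1)) (Fin (n + 1)) ℂ)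
    (hA : ∀ i j : Fin (n + 1), A i j =
      if (i : ℕ) = 0 then (if (j : ℕ) < n then (m : ℂ) - 1 else 0)
      else (if (j : ℕ) + 1 = (i : ℕ) then 1 else 0))
    (hW : W = (1 / (m : ℂ)) • A) :
    spectralRadius ℂ W < 1 := by
  subst hW
  have key : ∀ μ ∈ spectrum ℂ ((1 / (m : ℂ)) • A), (‖μ‖₊ : ENNReal) < 1 := by
    intro μ hμ
    have := aux_eig_bound m n hm hn A hA μ hμ
    exact_mod_cast this
  have hfin : (spectrum ℂ ((1 / (m : ℂ)) • A)).Finite := Matrix.finite_spectrum _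
  rcases (spectrum ℂ ((1 / (m : ℂ)) • A)).eq_empty_or_nonempty with h | h
  · rw [spectralRadius, h]
    simp
  · rw [spectralRadius]
    obtain ⟨x, hx⟩ := h
    rw [hfin.ciSup_lt_iff ⟨x, hx, by simp⟩]
    exact key
end
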